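/- arXiv:2508.05942 — 8 statements merged into one kernel-verified Lean document; each statement's English description precedes it below -/
import Mathlib

section
/- For any integer b ≥ 2, there exist infinitely many positive integers t such that the b-Cullen number t·b^t + 1 is a b-Sierpiński number. -/
/-- An integer `m` is composite if `m > 1` and `m` is not prime. -/
def IsComposite (m : ℤ) : Prop := 1 < m ∧ ¬ Prime m

/-- `k` is a `b`-Sierpiński number: a positive integer with `gcd (k+1) (b-1) = 1`
such that `k * b ^ n + 1` is composite for all positive integers `n`. -/
def IsBSierpinski (b k : ℤ) : Prop :=
  0 < k ∧ Int.gcd (k + 1) (b - 1) = 1 ∧ ∀ n : ℕ, 0 < n → IsComposite (k * b ^ n + 1)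

/-- `k` is a `b`-Riesel number: a positive integer with `gcd (k-1) (b-1) = 1`
such that `k * b ^ n - 1` is composite for all positive integers `n`. -/
def IsBRiesel (b k : ℤ) : Prop :=
  0 < k ∧ Int.gcd (k - 1) (b - 1) = 1 ∧ ∀ n : ℕ, 0 < n → IsComposite (k * b ^ n - 1)

/-- `k` is a `b`-Brier number: both `b`-Sierpiński and `b`-Riesel. -/
def IsBBrier (b k : ℤ) : Prop := IsBSierpinski b k ∧ IsBRiesel b k

namespace CullenSierpinskiAux


lemma isComposite_of_dvd {m d : ℤ} (h1 : 1 < d) (hdvd : d ∣ m) (hlt : d < m) :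
    IsComposite m := by
  refine ⟨h1.trans hlt, fun hp => ?_⟩
  rw [Int.prime_iff_natAbs_prime] at hp
  have h2 : d.natAbs ∣ m.natAbs := Int.natAbs_dvd_natAbs.mpr hdvd
  rcases (Nat.Prime.eq_one_or_self_of_dvd hp _ h2) with h | h
  · omega
  · have : d.natAbs = d := Int.natAbs_of_nonneg (by omega)
    have : m.natAbs = m := Int.natAbs_of_nonneg (by omega)
    omega

lemma gcd_eq_one_of_dvd_sub_one {a m : ℤ} (h : m ∣ a - 1) : Int.gcd a m = 1 := by
  rw [← Int.isCoprime_iff_gcd_eq_one]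
  obtain ⟨z, hz⟩ := h
  exact ⟨1, -z, by linarith⟩

lemma isCoprime_listprod {a : ℤ} {l : List ℤ} (h : ∀ z ∈ l, IsCoprime a z) :
    IsCoprime a l.prod := by
  induction l with
  | nil => simpa using isCoprime_one_right
  | cons hd tl ih =>
    rw [List.prod_cons]
    exact IsCoprime.mul_right (h hd (by simp)) (ih fun z hz => h z (by simp [hz]))

lemma crt_fin : ∀ {k : ℕ} (m r : Fin k → ℤ),
    (∀ i j, i ≠ j → IsCoprime (m i) (m j)) → ∃ x : ℤ, ∀ i, m i ∣ x - r i := by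
  intro k
  induction k with
  | zero => exact fun m r _ => ⟨0, fun i => i.elim0⟩
  | succ k ih =>
    intro m r h
    obtain ⟨x₀, hx₀⟩ := ih (fun i => m i.succ) (fun i => r i.succ)
      (fun i j hij => h i.succ j.succ (by simpa using hij))
    set Q : ℤ := (List.ofFn fun i : Fin k => m i.succ).prod with hQ
    have hcop : IsCoprime (m 0) Q := by
      apply isCoprime_listprod
      intro z hz
      rw [List.mem_ofFn] at hz
      obtain ⟨i, rfl⟩ := hz
      exact h 0 i.succ (by simp [Fin.ext_iff])
    obtain ⟨u, v, huv⟩ := hcop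
    refine ⟨x₀ * (u * m 0) + r 0 * (v * Q), fun i => ?_⟩
    refine Fin.cases ?_ ?_ i
    · refine ⟨u * (x₀ - r 0), ?_⟩
      linear_combination (r 0) * huv
    · intro j
      have h1 : m j.succ ∣ x₀ - r j.succ := hx₀ j
      have h2 : m j.succ ∣ Q := by
        apply List.dvd_prod
        rw [List.mem_ofFn]
        exact ⟨j, rfl⟩
      obtain ⟨w, hw⟩ := h1
      obtain ⟨z, hz⟩ := h2
      refine ⟨(r 0 - x₀) * v * z + w, ?_⟩
      linear_combination x₀ * huv + hw + ((r 0 - x₀) * v) * hz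


lemma sierpinski_main (b : ℤ) (hb : 2 ≤ b) (N : ℕ) (hN : 0 < N)
    (L : List (ℕ × ℕ × ℤ))
    (hL : ∀ p ∈ L, 0 < p.1 ∧ p.1 ∣ N ∧ p.2.1 < p.1 ∧ 1 < p.2.2 ∧ p.2.2 ∣ b ^ p.1 - 1)
    (hcov : ∀ n : ℕ, ∃ p ∈ L, n % p.1 = p.2.1)
    (x : ℤ) (hx1 : ((b - 1) * N : ℤ) ∣ (x + 1))
    (hx2 : ∀ p ∈ L, p.2.2 ∣ (x + b * (b ^ (p.1 - p.2.1) + 1))) :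
    {t : ℕ | 0 < t ∧ IsBSierpinski b ((t : ℤ) * b ^ t + 1)}.Infinite := by
  classical
  set D : ℤ := (L.map (fun p => p.2.2)).prod with hD
  have hDpos : 0 < D := by
    apply List.prod_pos
    intro a ha
    rw [List.mem_map] at ha
    obtain ⟨p, hp, rfl⟩ := ha
    exact lt_trans one_pos (hL p hp).2.2.2.1
  set P : ℤ := (b - 1) * N * D with hP
  have hPpos : 0 < P := by
    apply mul_pos (mul_pos (by omega) (by exact_mod_cast hN)) hDpos
  have hNpos : (0:ℤ) < N := by exact_mod_cast hN
  have hNP : (N : ℤ) ≤ P := by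
    have h1 : (N:ℤ) ≤ (b-1) * N := by nlinarith
    have h2 : (b-1) * (N:ℤ) ≤ (b-1) * N * D := by nlinarith
    linarith
  -- the injection
  have hkey : ∀ j : ℕ, ∃ t : ℕ, (t : ℤ) = x % P + (1 + j) * P := by
    intro j
    have h1 : 0 ≤ x % P := Int.emod_nonneg x hPpos.ne'
    have h2 : (0:ℤ) ≤ x % P + (1 + j) * P := by positivity
    exact ⟨(x % P + (1 + j) * P).toNat, Int.toNat_of_nonneg h2⟩
  choose f hf using hkey
  have hfP : ∀ j, P ∣ (f j : ℤ) - x := by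
    intro j
    rw [hf j]
    have hxe : x % P - x = -(P * (x / P)) := by
      have := Int.mul_ediv_add_emod x P
      linarith
    refine ⟨-(x / P) + (1 + j), ?_⟩
    linear_combination hxe
  have hfge : ∀ j, P ≤ (f j : ℤ) := by
    intro j
    rw [hf j]
    have h1 : 0 ≤ x % P := Int.emod_nonneg x hPpos.ne'
    have h2 : 0 ≤ (j:ℤ) * P := by positivity
    linarith
  apply Set.infinite_of_injective_forall_mem (f := f)
  · -- injective
    intro a c hac
    have : ((f a : ℕ) : ℤ) = ((f c : ℕ) : ℤ) := by rw [hac]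
    rw [hf a, hf c] at this
    have : (a : ℤ) = c := by
      have h3 : ((1:ℤ) + a) * P = (1 + c) * P := by linarith
      have := mul_right_cancel₀ hPpos.ne' h3
      linarith
    exact_mod_cast this
  · -- membership
    intro j
    set t := f j with htdef
    have htN : (N : ℤ) ≤ t := le_trans hNP (hfge j)
    have htNn : N ≤ t := by exact_mod_cast htN
    have htpos : 0 < t := lt_of_lt_of_le hN htNn
    have htx : P ∣ (t : ℤ) - x := hfP j
    set k : ℤ := (t : ℤ) * b ^ t + 1 with hk
    have hbt : (0:ℤ) < b ^ t := by positivity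
    have hkpos : 0 < k := by
      have : (1:ℤ) ≤ t := by exact_mod_cast htpos
      nlinarith
    have htm1 : ((b - 1) * N : ℤ) ∣ (t : ℤ) + 1 := by
      have hd1 : ((b - 1) * N : ℤ) ∣ P := ⟨D, rfl⟩
      have h2 : ((t:ℤ)) + 1 = ((t:ℤ) - x) + (x + 1) := by ring
      rw [h2]
      exact dvd_add (hd1.trans htx) hx1
    refine ⟨htpos, hkpos, ?_, ?_⟩
    · -- gcd condition
      apply gcd_eq_one_of_dvd_sub_one
      have hb1t : (b - 1 : ℤ) ∣ (t : ℤ) + 1 := (dvd_mul_right _ _).trans htm1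
      have hg : (b - 1 : ℤ) ∣ (b:ℤ) ^ t - 1 := by
        simpa using sub_dvd_pow_sub_pow (b:ℤ) 1 t
      have hke : k + 1 - 1 = (t:ℤ) * ((b:ℤ) ^ t - 1) + ((t:ℤ) + 1) := by rw [hk]; ring
      rw [hke]
      exact dvd_add (Dvd.dvd.mul_left hg _) hb1t
    · -- compositeness
      intro n hn
      obtain ⟨p, hpL, hmod⟩ := hcov n
      obtain ⟨he0, heN, hce, hd1, hdd⟩ := hL p hpL
      set e := p.1
      set c := p.2.1
      set d := p.2.2
      -- t + 1 divisible by e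
      have het : (e : ℤ) ∣ (t : ℤ) + 1 := by
        refine dvd_trans ?_ htm1
        exact dvd_mul_of_dvd_right (Int.natCast_dvd_natCast.mpr heN) _
      have hetn : e ∣ t + 1 := by exact_mod_cast het
      obtain ⟨W, hW⟩ := hetn
      have hWne : W ≠ 0 := by rintro rfl; simp at hW
      obtain ⟨W', rfl⟩ : ∃ W', W = W' + 1 := ⟨W - 1, by omega⟩
      have hW' : t + 1 = e * W' + e := by rw [hW, Nat.mul_succ]
      have hts : t = e * W' + (e - 1) := by
        generalize e * W' = y at hW' ⊢; omega
      have hnv : n = e * (n / e) + c := by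
        conv_lhs => rw [← Nat.div_add_mod n e]
        rw [hmod]
      set v := n / e
      set s := e - 1 with hsdef
      set u := e - c with hudef
      have huc : u + c = s + 1 := by omega
      have hdt : d ∣ (t : ℤ) + b * (b ^ u + 1) := by
        have h1 : d ∣ P := by
          have : d ∣ D := List.dvd_prod (by rw [List.mem_map]; exact ⟨p, hpL, rfl⟩)
          exact Dvd.dvd.mul_left this _
        have h2 : (t:ℤ) + b * (b ^ u + 1) = ((t:ℤ) - x) + (x + b * (b ^ (p.1 - p.2.1) + 1)) := by
          rw [hudef]; ring
        rw [h2]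
        exact dvd_add (h1.trans htx) (hx2 p hpL)
      -- modular computation
      have hbe : (b : ℤ) ^ e ≡ 1 [ZMOD d] := (Int.modEq_iff_dvd.mpr (by simpa using hdd)).symm
      have hmt : (t : ℤ) ≡ -(b * (b ^ u + 1)) [ZMOD d] := by
        refine (Int.modEq_iff_dvd.mpr ?_).symm
        rw [sub_neg_eq_add]
        exact hdt
      have hbt' : (b : ℤ) ^ t = ((b : ℤ) ^ e) ^ W' * b ^ s := by
        rw [← pow_mul, ← pow_add, ← hts]
      have hbn' : (b : ℤ) ^ n = ((b : ℤ) ^ e) ^ v * b ^ c := by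
        rw [← pow_mul, ← pow_add, ← hnv]
      have hcomp : k * b ^ n + 1 ≡ ((-(b * (b ^ u + 1))) * (1 ^ W' * b ^ s) + 1) * (1 ^ v * b ^ c) + 1 [ZMOD d] := by
        rw [hk, hbt', hbn']
        exact (((hmt.mul ((hbe.pow _).mul Int.ModEq.rfl)).add Int.ModEq.rfl).mul
          ((hbe.pow _).mul Int.ModEq.rfl)).add Int.ModEq.rfl
      have hE : ((-(b * (b ^ u + 1))) * ((1:ℤ) ^ W' * b ^ s) + 1) * (1 ^ v * b ^ c) + 1
          = -(b ^ (s+1) * b ^ (u + c)) - b ^ (s+1) * b ^ c + b ^ c + 1 := by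
        ring
      have hE2 : (-(b ^ (s+1) * b ^ (u + c)) - b ^ (s+1) * b ^ c + b ^ c + 1 : ℤ)
          ≡ -((1:ℤ) * 1) - 1 * b ^ c + b ^ c + 1 [ZMOD d] := by
        have h1 : (b:ℤ) ^ (s+1) ≡ 1 [ZMOD d] := by
          have : s + 1 = e := by omega
          rw [this]; exact hbe
        have h2 : (b:ℤ) ^ (u+c) ≡ 1 [ZMOD d] := by
          rw [huc, show s + 1 = e by omega]; exact hbe
        exact (((h1.mul h2).neg.sub (h1.mul Int.ModEq.rfl)).add Int.ModEq.rfl).add Int.ModEq.rfl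
      have hdvd : d ∣ k * b ^ n + 1 := by
        have := (hcomp.trans (hE ▸ hE2))
        have h0 : k * b ^ n + 1 ≡ 0 [ZMOD d] := by
          convert this using 2
          ring
        exact (Int.modEq_zero_iff_dvd).mp h0
      -- size
      have h2e : (2:ℤ) ≤ b ^ e := by
        calc (2:ℤ) = 2 ^ 1 := by norm_num
        _ ≤ 2 ^ e := pow_le_pow_right₀ (by norm_num) (by omega)
        _ ≤ b ^ e := pow_le_pow_left₀ (by norm_num) hb e
      have hde : d ≤ b ^ e - 1 := Int.le_of_dvd (by linarith) hdd
      have heN' : e ≤ N := Nat.le_of_dvd hN heN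
      have hpow : (b:ℤ) ^ e ≤ b ^ t :=
        pow_le_pow_right₀ (by omega) (by omega)
      have ht1 : (1:ℤ) ≤ t := by exact_mod_cast htpos
      have hklt : (b:ℤ) ^ t < k := by
        have h1 : (1:ℤ) * b ^ t ≤ (t:ℤ) * b ^ t := mul_le_mul_of_nonneg_right ht1 hbt.le
        rw [hk]; linarith
      have hbnpos : (0:ℤ) < b ^ n := by positivity
      have hbn1 : (1:ℤ) ≤ b ^ n := by
        have := Int.add_one_le_iff.mpr hbnpos
        simpa using this
      have hkbn : k ≤ k * b ^ n := le_mul_of_one_le_right hkpos.le hbn1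
      have hlt : d < k * b ^ n + 1 := by linarith
      exact isComposite_of_dvd hd1 hdvd hlt


def Good (b : ℤ) (e : ℕ) (d : ℤ) : Prop :=
  1 < d ∧ d ∣ b ^ e - 1 ∧
    ∀ q : ℕ, q.Prime → (q : ℤ) ∣ d → orderOf ((b : ℤ) : ZMod q) = e ∧ q ≠ 2 ∧ q ≠ 3

lemma clean {m : ℤ} (h7 : 7 ≤ m) (h4 : ¬ (4:ℤ) ∣ m) (h9 : ¬ (9:ℤ) ∣ m) :
    (m / (Int.gcd m 6 : ℤ)) ∣ m ∧ 1 < m / (Int.gcd m 6 : ℤ) ∧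
    ∀ q : ℕ, q.Prime → (q:ℤ) ∣ m / (Int.gcd m 6 : ℤ) → q ≠ 2 ∧ q ≠ 3 := by
  have hgpos : 0 < Int.gcd m 6 := Int.gcd_pos_iff.mpr (Or.inr (by norm_num))
  set g : ℤ := (Int.gcd m 6 : ℤ) with hgdef
  have hgposz : (0:ℤ) < g := by rw [hgdef]; exact_mod_cast hgpos
  have hgm : g ∣ m := Int.gcd_dvd_left m 6
  have hg6 : g ∣ 6 := Int.gcd_dvd_right m 6
  have hg6' : g ≤ 6 := Int.le_of_dvd (by norm_num) hg6
  set d : ℤ := m / g with hddef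
  have hdg : d * g = m := Int.ediv_mul_cancel hgm
  have hdm : d ∣ m := ⟨g, hdg.symm⟩
  have hdpos : 0 < d := by nlinarith
  have hd1 : 1 < d := by nlinarith
  refine ⟨hdm, hd1, fun q hq hqd => ⟨?_, ?_⟩⟩
  · rintro rfl
    push_cast at hqd
    by_cases h2g : (2:ℤ) ∣ g
    · apply h4
      have := mul_dvd_mul hqd h2g
      rw [hdg] at this
      norm_num at this
      exact this
    · have h2m : (2:ℤ) ∣ m := hqd.trans hdm
      exact h2g (by rw [hgdef]; exact Int.dvd_coe_gcd h2m (by norm_num))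
  · rintro rfl
    push_cast at hqd
    by_cases h3g : (3:ℤ) ∣ g
    · apply h9
      have := mul_dvd_mul hqd h3g
      rw [hdg] at this
      norm_num at this
      exact this
    · have h3m : (3:ℤ) ∣ m := hqd.trans hdm
      exact h3g (by rw [hgdef]; exact Int.dvd_coe_gcd h3m (by norm_num))
def P3 (b : ℤ) : ℤ := b ^ 2 + b + 1

def d3 (b : ℤ) : ℤ := P3 b / (Int.gcd (P3 b) 6 : ℤ)

lemma good3 {b : ℤ} (hb : 3 ≤ b) : Good b 3 (d3 b) := by
  have h7 : 7 ≤ P3 b := by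
    simp only [P3]; nlinarith [hb, sq_nonneg (b - 3)]
  have hm4 : ¬ (4:ℤ) ∣ P3 b := by
    intro hdvd
    have h := (ZMod.intCast_zmod_eq_zero_iff_dvd (P3 b) 4).mpr hdvd
    simp only [P3] at h
    push_cast at h
    exact (by decide : ∀ z : ZMod 4, z ^ 2 + z + 1 ≠ 0) _ h
  have hm9 : ¬ (9:ℤ) ∣ P3 b := by
    intro hdvd
    have h := (ZMod.intCast_zmod_eq_zero_iff_dvd (P3 b) 9).mpr hdvd
    simp only [P3] at h
    push_cast at h
    exact (by decide : ∀ z : ZMod 9, z ^ 2 + z + 1 ≠ 0) _ h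
  obtain ⟨hdP, hd1, hq23⟩ := clean h7 hm4 hm9
  have hPdvd : P3 b ∣ b ^ 3 - 1 := ⟨b - 1, by simp only [P3]; ring⟩
  refine ⟨hd1, dvd_trans hdP hPdvd, fun q hq hqd => ?_⟩
  obtain ⟨hq2, hq3⟩ := hq23 q hq hqd
  have hqP : (q:ℤ) ∣ P3 b := hqd.trans hdP
  have hbe : ((b : ℤ) : ZMod q) ^ 3 = 1 := by
    have h := (ZMod.intCast_zmod_eq_zero_iff_dvd _ q).mpr (hqP.trans hPdvd)
    push_cast at h
    exact sub_eq_zero.mp (by linear_combination h)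
  have hord : orderOf ((b : ℤ) : ZMod q) ∣ 3 := orderOf_dvd_of_pow_eq_one hbe
  have hn1 : ¬ orderOf ((b : ℤ) : ZMod q) ∣ 1 := by
    intro hdv
    have h1 : ((b : ℤ) : ZMod q) ^ 1 = 1 := orderOf_dvd_iff_pow_eq_one.mp hdv
    have h2 : (q:ℤ) ∣ b ^ 1 - 1 := by
      rw [← ZMod.intCast_zmod_eq_zero_iff_dvd]
      push_cast
      rw [h1]; ring
    have h3 : (q:ℤ) ∣ 3 := by
      have hcert : (1) * P3 b + (-2 - b) * (b ^ 1 - 1) = 3 := by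
        simp only [P3]; ring
      exact hcert ▸ dvd_add (Dvd.dvd.mul_left hqP _) (Dvd.dvd.mul_left h2 _)
    have h4 : q ∣ 3 := by exact_mod_cast h3
    exact hq3 ((Nat.prime_dvd_prime_iff_eq hq (by norm_num)).mp h4)
  have hole : orderOf ((b : ℤ) : ZMod q) ≤ 3 := Nat.le_of_dvd (by norm_num) hord
  have key : ∀ r : Fin 4, (r.1 ∣ 3 → ¬ r.1 ∣ 1 → r.1 = 3) := by decide
  exact ⟨key ⟨orderOf ((b : ℤ) : ZMod q), by omega⟩ hord hn1, hq2, hq3⟩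

def P4 (b : ℤ) : ℤ := b ^ 2 + 1

def d4 (b : ℤ) : ℤ := P4 b / (Int.gcd (P4 b) 6 : ℤ)

lemma good4 {b : ℤ} (hb : 3 ≤ b) : Good b 4 (d4 b) := by
  have h7 : 7 ≤ P4 b := by
    simp only [P4]; nlinarith [hb, sq_nonneg (b - 3)]
  have hm4 : ¬ (4:ℤ) ∣ P4 b := by
    intro hdvd
    have h := (ZMod.intCast_zmod_eq_zero_iff_dvd (P4 b) 4).mpr hdvd
    simp only [P4] at h
    push_cast at h
    exact (by decide : ∀ z : ZMod 4, z ^ 2 + 1 ≠ 0) _ h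
  have hm9 : ¬ (9:ℤ) ∣ P4 b := by
    intro hdvd
    have h := (ZMod.intCast_zmod_eq_zero_iff_dvd (P4 b) 9).mpr hdvd
    simp only [P4] at h
    push_cast at h
    exact (by decide : ∀ z : ZMod 9, z ^ 2 + 1 ≠ 0) _ h
  obtain ⟨hdP, hd1, hq23⟩ := clean h7 hm4 hm9
  have hPdvd : P4 b ∣ b ^ 4 - 1 := ⟨b ^ 2 - 1, by simp only [P4]; ring⟩
  refine ⟨hd1, dvd_trans hdP hPdvd, fun q hq hqd => ?_⟩
  obtain ⟨hq2, hq3⟩ := hq23 q hq hqd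
  have hqP : (q:ℤ) ∣ P4 b := hqd.trans hdP
  have hbe : ((b : ℤ) : ZMod q) ^ 4 = 1 := by
    have h := (ZMod.intCast_zmod_eq_zero_iff_dvd _ q).mpr (hqP.trans hPdvd)
    push_cast at h
    exact sub_eq_zero.mp (by linear_combination h)
  have hord : orderOf ((b : ℤ) : ZMod q) ∣ 4 := orderOf_dvd_of_pow_eq_one hbe
  have hn2 : ¬ orderOf ((b : ℤ) : ZMod q) ∣ 2 := by
    intro hdv
    have h1 : ((b : ℤ) : ZMod q) ^ 2 = 1 := orderOf_dvd_iff_pow_eq_one.mp hdv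
    have h2 : (q:ℤ) ∣ b ^ 2 - 1 := by
      rw [← ZMod.intCast_zmod_eq_zero_iff_dvd]
      push_cast
      rw [h1]; ring
    have h3 : (q:ℤ) ∣ 2 := by
      have hcert : (1) * P4 b + (-1) * (b ^ 2 - 1) = 2 := by
        simp only [P4]; ring
      exact hcert ▸ dvd_add (Dvd.dvd.mul_left hqP _) (Dvd.dvd.mul_left h2 _)
    have h4 : q ∣ 2 := by exact_mod_cast h3
    exact hq2 ((Nat.prime_dvd_prime_iff_eq hq (by norm_num)).mp h4)
  have hole : orderOf ((b : ℤ) : ZMod q) ≤ 4 := Nat.le_of_dvd (by norm_num) hord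
  have key : ∀ r : Fin 5, (r.1 ∣ 4 → ¬ r.1 ∣ 2 → r.1 = 4) := by decide
  exact ⟨key ⟨orderOf ((b : ℤ) : ZMod q), by omega⟩ hord hn2, hq2, hq3⟩

def P6 (b : ℤ) : ℤ := b ^ 2 - b + 1

def d6 (b : ℤ) : ℤ := P6 b / (Int.gcd (P6 b) 6 : ℤ)

lemma good6 {b : ℤ} (hb : 3 ≤ b) : Good b 6 (d6 b) := by
  have h7 : 7 ≤ P6 b := by
    simp only [P6]; nlinarith [hb, sq_nonneg (b - 3)]
  have hm4 : ¬ (4:ℤ) ∣ P6 b := by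
    intro hdvd
    have h := (ZMod.intCast_zmod_eq_zero_iff_dvd (P6 b) 4).mpr hdvd
    simp only [P6] at h
    push_cast at h
    exact (by decide : ∀ z : ZMod 4, z ^ 2 - z + 1 ≠ 0) _ h
  have hm9 : ¬ (9:ℤ) ∣ P6 b := by
    intro hdvd
    have h := (ZMod.intCast_zmod_eq_zero_iff_dvd (P6 b) 9).mpr hdvd
    simp only [P6] at h
    push_cast at h
    exact (by decide : ∀ z : ZMod 9, z ^ 2 - z + 1 ≠ 0) _ h
  obtain ⟨hdP, hd1, hq23⟩ := clean h7 hm4 hm9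
  have hPdvd : P6 b ∣ b ^ 6 - 1 := ⟨b ^ 4 + b ^ 3 - b - 1, by simp only [P6]; ring⟩
  refine ⟨hd1, dvd_trans hdP hPdvd, fun q hq hqd => ?_⟩
  obtain ⟨hq2, hq3⟩ := hq23 q hq hqd
  have hqP : (q:ℤ) ∣ P6 b := hqd.trans hdP
  have hbe : ((b : ℤ) : ZMod q) ^ 6 = 1 := by
    have h := (ZMod.intCast_zmod_eq_zero_iff_dvd _ q).mpr (hqP.trans hPdvd)
    push_cast at h
    exact sub_eq_zero.mp (by linear_combination h)
  have hord : orderOf ((b : ℤ) : ZMod q) ∣ 6 := orderOf_dvd_of_pow_eq_one hbe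
  have hn2 : ¬ orderOf ((b : ℤ) : ZMod q) ∣ 2 := by
    intro hdv
    have h1 : ((b : ℤ) : ZMod q) ^ 2 = 1 := orderOf_dvd_iff_pow_eq_one.mp hdv
    have h2 : (q:ℤ) ∣ b ^ 2 - 1 := by
      rw [← ZMod.intCast_zmod_eq_zero_iff_dvd]
      push_cast
      rw [h1]; ring
    have h3 : (q:ℤ) ∣ 3 := by
      have hcert : (2 + b) * P6 b + (-1 - b) * (b ^ 2 - 1) = 3 := by
        simp only [P6]; ring
      exact hcert ▸ dvd_add (Dvd.dvd.mul_left hqP _) (Dvd.dvd.mul_left h2 _)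
    have h4 : q ∣ 3 := by exact_mod_cast h3
    exact hq3 ((Nat.prime_dvd_prime_iff_eq hq (by norm_num)).mp h4)
  have hn3 : ¬ orderOf ((b : ℤ) : ZMod q) ∣ 3 := by
    intro hdv
    have h1 : ((b : ℤ) : ZMod q) ^ 3 = 1 := orderOf_dvd_iff_pow_eq_one.mp hdv
    have h2 : (q:ℤ) ∣ b ^ 3 - 1 := by
      rw [← ZMod.intCast_zmod_eq_zero_iff_dvd]
      push_cast
      rw [h1]; ring
    have h3 : (q:ℤ) ∣ 2 := by
      have hcert : (1 + b) * P6 b + (-1) * (b ^ 3 - 1) = 2 := by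
        simp only [P6]; ring
      exact hcert ▸ dvd_add (Dvd.dvd.mul_left hqP _) (Dvd.dvd.mul_left h2 _)
    have h4 : q ∣ 2 := by exact_mod_cast h3
    exact hq2 ((Nat.prime_dvd_prime_iff_eq hq (by norm_num)).mp h4)
  have hole : orderOf ((b : ℤ) : ZMod q) ≤ 6 := Nat.le_of_dvd (by norm_num) hord
  have key : ∀ r : Fin 7, (r.1 ∣ 6 → ¬ r.1 ∣ 2 → ¬ r.1 ∣ 3 → r.1 = 6) := by decide
  exact ⟨key ⟨orderOf ((b : ℤ) : ZMod q), by omega⟩ hord hn2 hn3, hq2, hq3⟩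

def P8 (b : ℤ) : ℤ := b ^ 4 + 1

def d8 (b : ℤ) : ℤ := P8 b / (Int.gcd (P8 b) 6 : ℤ)

lemma good8 {b : ℤ} (hb : 3 ≤ b) : Good b 8 (d8 b) := by
  have h7 : 7 ≤ P8 b := by
    have hy : (3:ℤ) ≤ b ^ 2 := le_trans hb (le_self_pow₀ (by linarith) (by norm_num))
    have hsq : (b ^ 2) ^ 2 = b ^ 4 := by ring
    simp only [P8]; nlinarith [hy, hsq]
  have hm4 : ¬ (4:ℤ) ∣ P8 b := by
    intro hdvd
    have h := (ZMod.intCast_zmod_eq_zero_iff_dvd (P8 b) 4).mpr hdvd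
    simp only [P8] at h
    push_cast at h
    exact (by decide : ∀ z : ZMod 4, z ^ 4 + 1 ≠ 0) _ h
  have hm9 : ¬ (9:ℤ) ∣ P8 b := by
    intro hdvd
    have h := (ZMod.intCast_zmod_eq_zero_iff_dvd (P8 b) 9).mpr hdvd
    simp only [P8] at h
    push_cast at h
    exact (by decide : ∀ z : ZMod 9, z ^ 4 + 1 ≠ 0) _ h
  obtain ⟨hdP, hd1, hq23⟩ := clean h7 hm4 hm9
  have hPdvd : P8 b ∣ b ^ 8 - 1 := ⟨b ^ 4 - 1, by simp only [P8]; ring⟩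
  refine ⟨hd1, dvd_trans hdP hPdvd, fun q hq hqd => ?_⟩
  obtain ⟨hq2, hq3⟩ := hq23 q hq hqd
  have hqP : (q:ℤ) ∣ P8 b := hqd.trans hdP
  have hbe : ((b : ℤ) : ZMod q) ^ 8 = 1 := by
    have h := (ZMod.intCast_zmod_eq_zero_iff_dvd _ q).mpr (hqP.trans hPdvd)
    push_cast at h
    exact sub_eq_zero.mp (by linear_combination h)
  have hord : orderOf ((b : ℤ) : ZMod q) ∣ 8 := orderOf_dvd_of_pow_eq_one hbe
  have hn4 : ¬ orderOf ((b : ℤ) : ZMod q) ∣ 4 := by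
    intro hdv
    have h1 : ((b : ℤ) : ZMod q) ^ 4 = 1 := orderOf_dvd_iff_pow_eq_one.mp hdv
    have h2 : (q:ℤ) ∣ b ^ 4 - 1 := by
      rw [← ZMod.intCast_zmod_eq_zero_iff_dvd]
      push_cast
      rw [h1]; ring
    have h3 : (q:ℤ) ∣ 2 := by
      have hcert : (1) * P8 b + (-1) * (b ^ 4 - 1) = 2 := by
        simp only [P8]; ring
      exact hcert ▸ dvd_add (Dvd.dvd.mul_left hqP _) (Dvd.dvd.mul_left h2 _)
    have h4 : q ∣ 2 := by exact_mod_cast h3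
    exact hq2 ((Nat.prime_dvd_prime_iff_eq hq (by norm_num)).mp h4)
  have hole : orderOf ((b : ℤ) : ZMod q) ≤ 8 := Nat.le_of_dvd (by norm_num) hord
  have key : ∀ r : Fin 9, (r.1 ∣ 8 → ¬ r.1 ∣ 4 → r.1 = 8) := by decide
  exact ⟨key ⟨orderOf ((b : ℤ) : ZMod q), by omega⟩ hord hn4, hq2, hq3⟩

def P9 (b : ℤ) : ℤ := b ^ 6 + b ^ 3 + 1

def d9 (b : ℤ) : ℤ := P9 b / (Int.gcd (P9 b) 6 : ℤ)

lemma good9 {b : ℤ} (hb : 3 ≤ b) : Good b 9 (d9 b) := by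
  have h7 : 7 ≤ P9 b := by
    have hy : (3:ℤ) ≤ b ^ 3 := le_trans hb (le_self_pow₀ (by linarith) (by norm_num))
    have hsq : (b ^ 3) ^ 2 = b ^ 6 := by ring
    simp only [P9]; nlinarith [hy, hsq]
  have hm4 : ¬ (4:ℤ) ∣ P9 b := by
    intro hdvd
    have h := (ZMod.intCast_zmod_eq_zero_iff_dvd (P9 b) 4).mpr hdvd
    simp only [P9] at h
    push_cast at h
    exact (by decide : ∀ z : ZMod 4, z ^ 6 + z ^ 3 + 1 ≠ 0) _ h
  have hm9 : ¬ (9:ℤ) ∣ P9 b := by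
    intro hdvd
    have h := (ZMod.intCast_zmod_eq_zero_iff_dvd (P9 b) 9).mpr hdvd
    simp only [P9] at h
    push_cast at h
    exact (by decide : ∀ z : ZMod 9, z ^ 6 + z ^ 3 + 1 ≠ 0) _ h
  obtain ⟨hdP, hd1, hq23⟩ := clean h7 hm4 hm9
  have hPdvd : P9 b ∣ b ^ 9 - 1 := ⟨b ^ 3 - 1, by simp only [P9]; ring⟩
  refine ⟨hd1, dvd_trans hdP hPdvd, fun q hq hqd => ?_⟩
  obtain ⟨hq2, hq3⟩ := hq23 q hq hqd
  have hqP : (q:ℤ) ∣ P9 b := hqd.trans hdP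
  have hbe : ((b : ℤ) : ZMod q) ^ 9 = 1 := by
    have h := (ZMod.intCast_zmod_eq_zero_iff_dvd _ q).mpr (hqP.trans hPdvd)
    push_cast at h
    exact sub_eq_zero.mp (by linear_combination h)
  have hord : orderOf ((b : ℤ) : ZMod q) ∣ 9 := orderOf_dvd_of_pow_eq_one hbe
  have hn3 : ¬ orderOf ((b : ℤ) : ZMod q) ∣ 3 := by
    intro hdv
    have h1 : ((b : ℤ) : ZMod q) ^ 3 = 1 := orderOf_dvd_iff_pow_eq_one.mp hdv
    have h2 : (q:ℤ) ∣ b ^ 3 - 1 := by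
      rw [← ZMod.intCast_zmod_eq_zero_iff_dvd]
      push_cast
      rw [h1]; ring
    have h3 : (q:ℤ) ∣ 3 := by
      have hcert : (1) * P9 b + (-2 - b ^ 3) * (b ^ 3 - 1) = 3 := by
        simp only [P9]; ring
      exact hcert ▸ dvd_add (Dvd.dvd.mul_left hqP _) (Dvd.dvd.mul_left h2 _)
    have h4 : q ∣ 3 := by exact_mod_cast h3
    exact hq3 ((Nat.prime_dvd_prime_iff_eq hq (by norm_num)).mp h4)
  have hole : orderOf ((b : ℤ) : ZMod q) ≤ 9 := Nat.le_of_dvd (by norm_num) hord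
  have key : ∀ r : Fin 10, (r.1 ∣ 9 → ¬ r.1 ∣ 3 → r.1 = 9) := by decide
  exact ⟨key ⟨orderOf ((b : ℤ) : ZMod q), by omega⟩ hord hn3, hq2, hq3⟩

def P12 (b : ℤ) : ℤ := b ^ 4 - b ^ 2 + 1

def d12 (b : ℤ) : ℤ := P12 b / (Int.gcd (P12 b) 6 : ℤ)

lemma good12 {b : ℤ} (hb : 3 ≤ b) : Good b 12 (d12 b) := by
  have h7 : 7 ≤ P12 b := by
    have hy : (3:ℤ) ≤ b ^ 2 := le_trans hb (le_self_pow₀ (by linarith) (by norm_num))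
    have hsq : (b ^ 2) ^ 2 = b ^ 4 := by ring
    simp only [P12]; nlinarith [hy, hsq]
  have hm4 : ¬ (4:ℤ) ∣ P12 b := by
    intro hdvd
    have h := (ZMod.intCast_zmod_eq_zero_iff_dvd (P12 b) 4).mpr hdvd
    simp only [P12] at h
    push_cast at h
    exact (by decide : ∀ z : ZMod 4, z ^ 4 - z ^ 2 + 1 ≠ 0) _ h
  have hm9 : ¬ (9:ℤ) ∣ P12 b := by
    intro hdvd
    have h := (ZMod.intCast_zmod_eq_zero_iff_dvd (P12 b) 9).mpr hdvd
    simp only [P12] at h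
    push_cast at h
    exact (by decide : ∀ z : ZMod 9, z ^ 4 - z ^ 2 + 1 ≠ 0) _ h
  obtain ⟨hdP, hd1, hq23⟩ := clean h7 hm4 hm9
  have hPdvd : P12 b ∣ b ^ 12 - 1 := ⟨b ^ 8 + b ^ 6 - b ^ 2 - 1, by simp only [P12]; ring⟩
  refine ⟨hd1, dvd_trans hdP hPdvd, fun q hq hqd => ?_⟩
  obtain ⟨hq2, hq3⟩ := hq23 q hq hqd
  have hqP : (q:ℤ) ∣ P12 b := hqd.trans hdP
  have hbe : ((b : ℤ) : ZMod q) ^ 12 = 1 := by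
    have h := (ZMod.intCast_zmod_eq_zero_iff_dvd _ q).mpr (hqP.trans hPdvd)
    push_cast at h
    exact sub_eq_zero.mp (by linear_combination h)
  have hord : orderOf ((b : ℤ) : ZMod q) ∣ 12 := orderOf_dvd_of_pow_eq_one hbe
  have hn4 : ¬ orderOf ((b : ℤ) : ZMod q) ∣ 4 := by
    intro hdv
    have h1 : ((b : ℤ) : ZMod q) ^ 4 = 1 := orderOf_dvd_iff_pow_eq_one.mp hdv
    have h2 : (q:ℤ) ∣ b ^ 4 - 1 := by
      rw [← ZMod.intCast_zmod_eq_zero_iff_dvd]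
      push_cast
      rw [h1]; ring
    have h3 : (q:ℤ) ∣ 3 := by
      have hcert : (2 + b ^ 2) * P12 b + (-1 - b ^ 2) * (b ^ 4 - 1) = 3 := by
        simp only [P12]; ring
      exact hcert ▸ dvd_add (Dvd.dvd.mul_left hqP _) (Dvd.dvd.mul_left h2 _)
    have h4 : q ∣ 3 := by exact_mod_cast h3
    exact hq3 ((Nat.prime_dvd_prime_iff_eq hq (by norm_num)).mp h4)
  have hn6 : ¬ orderOf ((b : ℤ) : ZMod q) ∣ 6 := by
    intro hdv
    have h1 : ((b : ℤ) : ZMod q) ^ 6 = 1 := orderOf_dvd_iff_pow_eq_one.mp hdv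
    have h2 : (q:ℤ) ∣ b ^ 6 - 1 := by
      rw [← ZMod.intCast_zmod_eq_zero_iff_dvd]
      push_cast
      rw [h1]; ring
    have h3 : (q:ℤ) ∣ 2 := by
      have hcert : (1 + b ^ 2) * P12 b + (-1) * (b ^ 6 - 1) = 2 := by
        simp only [P12]; ring
      exact hcert ▸ dvd_add (Dvd.dvd.mul_left hqP _) (Dvd.dvd.mul_left h2 _)
    have h4 : q ∣ 2 := by exact_mod_cast h3
    exact hq2 ((Nat.prime_dvd_prime_iff_eq hq (by norm_num)).mp h4)
  have hole : orderOf ((b : ℤ) : ZMod q) ≤ 12 := Nat.le_of_dvd (by norm_num) hord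
  have key : ∀ r : Fin 13, (r.1 ∣ 12 → ¬ r.1 ∣ 4 → ¬ r.1 ∣ 6 → r.1 = 12) := by decide
  exact ⟨key ⟨orderOf ((b : ℤ) : ZMod q), by omega⟩ hord hn4 hn6, hq2, hq3⟩

def P16 (b : ℤ) : ℤ := b ^ 8 + 1

def d16 (b : ℤ) : ℤ := P16 b / (Int.gcd (P16 b) 6 : ℤ)

lemma good16 {b : ℤ} (hb : 3 ≤ b) : Good b 16 (d16 b) := by
  have h7 : 7 ≤ P16 b := by
    have hy : (3:ℤ) ≤ b ^ 4 := le_trans hb (le_self_pow₀ (by linarith) (by norm_num))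
    have hsq : (b ^ 4) ^ 2 = b ^ 8 := by ring
    simp only [P16]; nlinarith [hy, hsq]
  have hm4 : ¬ (4:ℤ) ∣ P16 b := by
    intro hdvd
    have h := (ZMod.intCast_zmod_eq_zero_iff_dvd (P16 b) 4).mpr hdvd
    simp only [P16] at h
    push_cast at h
    exact (by decide : ∀ z : ZMod 4, z ^ 8 + 1 ≠ 0) _ h
  have hm9 : ¬ (9:ℤ) ∣ P16 b := by
    intro hdvd
    have h := (ZMod.intCast_zmod_eq_zero_iff_dvd (P16 b) 9).mpr hdvd
    simp only [P16] at h
    push_cast at h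
    exact (by decide : ∀ z : ZMod 9, z ^ 8 + 1 ≠ 0) _ h
  obtain ⟨hdP, hd1, hq23⟩ := clean h7 hm4 hm9
  have hPdvd : P16 b ∣ b ^ 16 - 1 := ⟨b ^ 8 - 1, by simp only [P16]; ring⟩
  refine ⟨hd1, dvd_trans hdP hPdvd, fun q hq hqd => ?_⟩
  obtain ⟨hq2, hq3⟩ := hq23 q hq hqd
  have hqP : (q:ℤ) ∣ P16 b := hqd.trans hdP
  have hbe : ((b : ℤ) : ZMod q) ^ 16 = 1 := by
    have h := (ZMod.intCast_zmod_eq_zero_iff_dvd _ q).mpr (hqP.trans hPdvd)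
    push_cast at h
    exact sub_eq_zero.mp (by linear_combination h)
  have hord : orderOf ((b : ℤ) : ZMod q) ∣ 16 := orderOf_dvd_of_pow_eq_one hbe
  have hn8 : ¬ orderOf ((b : ℤ) : ZMod q) ∣ 8 := by
    intro hdv
    have h1 : ((b : ℤ) : ZMod q) ^ 8 = 1 := orderOf_dvd_iff_pow_eq_one.mp hdv
    have h2 : (q:ℤ) ∣ b ^ 8 - 1 := by
      rw [← ZMod.intCast_zmod_eq_zero_iff_dvd]
      push_cast
      rw [h1]; ring
    have h3 : (q:ℤ) ∣ 2 := by
      have hcert : (1) * P16 b + (-1) * (b ^ 8 - 1) = 2 := by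
        simp only [P16]; ring
      exact hcert ▸ dvd_add (Dvd.dvd.mul_left hqP _) (Dvd.dvd.mul_left h2 _)
    have h4 : q ∣ 2 := by exact_mod_cast h3
    exact hq2 ((Nat.prime_dvd_prime_iff_eq hq (by norm_num)).mp h4)
  have hole : orderOf ((b : ℤ) : ZMod q) ≤ 16 := Nat.le_of_dvd (by norm_num) hord
  have key : ∀ r : Fin 17, (r.1 ∣ 16 → ¬ r.1 ∣ 8 → r.1 = 16) := by decide
  exact ⟨key ⟨orderOf ((b : ℤ) : ZMod q), by omega⟩ hord hn8, hq2, hq3⟩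

def P18 (b : ℤ) : ℤ := b ^ 6 - b ^ 3 + 1

def d18 (b : ℤ) : ℤ := P18 b / (Int.gcd (P18 b) 6 : ℤ)

lemma good18 {b : ℤ} (hb : 3 ≤ b) : Good b 18 (d18 b) := by
  have h7 : 7 ≤ P18 b := by
    have hy : (3:ℤ) ≤ b ^ 3 := le_trans hb (le_self_pow₀ (by linarith) (by norm_num))
    have hsq : (b ^ 3) ^ 2 = b ^ 6 := by ring
    simp only [P18]; nlinarith [hy, hsq]
  have hm4 : ¬ (4:ℤ) ∣ P18 b := by
    intro hdvd
    have h := (ZMod.intCast_zmod_eq_zero_iff_dvd (P18 b) 4).mpr hdvd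
    simp only [P18] at h
    push_cast at h
    exact (by decide : ∀ z : ZMod 4, z ^ 6 - z ^ 3 + 1 ≠ 0) _ h
  have hm9 : ¬ (9:ℤ) ∣ P18 b := by
    intro hdvd
    have h := (ZMod.intCast_zmod_eq_zero_iff_dvd (P18 b) 9).mpr hdvd
    simp only [P18] at h
    push_cast at h
    exact (by decide : ∀ z : ZMod 9, z ^ 6 - z ^ 3 + 1 ≠ 0) _ h
  obtain ⟨hdP, hd1, hq23⟩ := clean h7 hm4 hm9
  have hPdvd : P18 b ∣ b ^ 18 - 1 := ⟨b ^ 12 + b ^ 9 - b ^ 3 - 1, by simp only [P18]; ring⟩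
  refine ⟨hd1, dvd_trans hdP hPdvd, fun q hq hqd => ?_⟩
  obtain ⟨hq2, hq3⟩ := hq23 q hq hqd
  have hqP : (q:ℤ) ∣ P18 b := hqd.trans hdP
  have hbe : ((b : ℤ) : ZMod q) ^ 18 = 1 := by
    have h := (ZMod.intCast_zmod_eq_zero_iff_dvd _ q).mpr (hqP.trans hPdvd)
    push_cast at h
    exact sub_eq_zero.mp (by linear_combination h)
  have hord : orderOf ((b : ℤ) : ZMod q) ∣ 18 := orderOf_dvd_of_pow_eq_one hbe
  have hn6 : ¬ orderOf ((b : ℤ) : ZMod q) ∣ 6 := by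
    intro hdv
    have h1 : ((b : ℤ) : ZMod q) ^ 6 = 1 := orderOf_dvd_iff_pow_eq_one.mp hdv
    have h2 : (q:ℤ) ∣ b ^ 6 - 1 := by
      rw [← ZMod.intCast_zmod_eq_zero_iff_dvd]
      push_cast
      rw [h1]; ring
    have h3 : (q:ℤ) ∣ 3 := by
      have hcert : (2 + b ^ 3) * P18 b + (-1 - b ^ 3) * (b ^ 6 - 1) = 3 := by
        simp only [P18]; ring
      exact hcert ▸ dvd_add (Dvd.dvd.mul_left hqP _) (Dvd.dvd.mul_left h2 _)
    have h4 : q ∣ 3 := by exact_mod_cast h3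
    exact hq3 ((Nat.prime_dvd_prime_iff_eq hq (by norm_num)).mp h4)
  have hn9 : ¬ orderOf ((b : ℤ) : ZMod q) ∣ 9 := by
    intro hdv
    have h1 : ((b : ℤ) : ZMod q) ^ 9 = 1 := orderOf_dvd_iff_pow_eq_one.mp hdv
    have h2 : (q:ℤ) ∣ b ^ 9 - 1 := by
      rw [← ZMod.intCast_zmod_eq_zero_iff_dvd]
      push_cast
      rw [h1]; ring
    have h3 : (q:ℤ) ∣ 2 := by
      have hcert : (1 + b ^ 3) * P18 b + (-1) * (b ^ 9 - 1) = 2 := by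
        simp only [P18]; ring
      exact hcert ▸ dvd_add (Dvd.dvd.mul_left hqP _) (Dvd.dvd.mul_left h2 _)
    have h4 : q ∣ 2 := by exact_mod_cast h3
    exact hq2 ((Nat.prime_dvd_prime_iff_eq hq (by norm_num)).mp h4)
  have hole : orderOf ((b : ℤ) : ZMod q) ≤ 18 := Nat.le_of_dvd (by norm_num) hord
  have key : ∀ r : Fin 19, (r.1 ∣ 18 → ¬ r.1 ∣ 6 → ¬ r.1 ∣ 9 → r.1 = 18) := by decide
  exact ⟨key ⟨orderOf ((b : ℤ) : ZMod q), by omega⟩ hord hn6 hn9, hq2, hq3⟩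

def P24 (b : ℤ) : ℤ := b ^ 8 - b ^ 4 + 1

def d24 (b : ℤ) : ℤ := P24 b / (Int.gcd (P24 b) 6 : ℤ)

lemma good24 {b : ℤ} (hb : 3 ≤ b) : Good b 24 (d24 b) := by
  have h7 : 7 ≤ P24 b := by
    have hy : (3:ℤ) ≤ b ^ 4 := le_trans hb (le_self_pow₀ (by linarith) (by norm_num))
    have hsq : (b ^ 4) ^ 2 = b ^ 8 := by ring
    simp only [P24]; nlinarith [hy, hsq]
  have hm4 : ¬ (4:ℤ) ∣ P24 b := by
    intro hdvd
    have h := (ZMod.intCast_zmod_eq_zero_iff_dvd (P24 b) 4).mpr hdvd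
    simp only [P24] at h
    push_cast at h
    exact (by decide : ∀ z : ZMod 4, z ^ 8 - z ^ 4 + 1 ≠ 0) _ h
  have hm9 : ¬ (9:ℤ) ∣ P24 b := by
    intro hdvd
    have h := (ZMod.intCast_zmod_eq_zero_iff_dvd (P24 b) 9).mpr hdvd
    simp only [P24] at h
    push_cast at h
    exact (by decide : ∀ z : ZMod 9, z ^ 8 - z ^ 4 + 1 ≠ 0) _ h
  obtain ⟨hdP, hd1, hq23⟩ := clean h7 hm4 hm9
  have hPdvd : P24 b ∣ b ^ 24 - 1 := ⟨b ^ 16 + b ^ 12 - b ^ 4 - 1, by simp only [P24]; ring⟩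
  refine ⟨hd1, dvd_trans hdP hPdvd, fun q hq hqd => ?_⟩
  obtain ⟨hq2, hq3⟩ := hq23 q hq hqd
  have hqP : (q:ℤ) ∣ P24 b := hqd.trans hdP
  have hbe : ((b : ℤ) : ZMod q) ^ 24 = 1 := by
    have h := (ZMod.intCast_zmod_eq_zero_iff_dvd _ q).mpr (hqP.trans hPdvd)
    push_cast at h
    exact sub_eq_zero.mp (by linear_combination h)
  have hord : orderOf ((b : ℤ) : ZMod q) ∣ 24 := orderOf_dvd_of_pow_eq_one hbe
  have hn8 : ¬ orderOf ((b : ℤ) : ZMod q) ∣ 8 := by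
    intro hdv
    have h1 : ((b : ℤ) : ZMod q) ^ 8 = 1 := orderOf_dvd_iff_pow_eq_one.mp hdv
    have h2 : (q:ℤ) ∣ b ^ 8 - 1 := by
      rw [← ZMod.intCast_zmod_eq_zero_iff_dvd]
      push_cast
      rw [h1]; ring
    have h3 : (q:ℤ) ∣ 3 := by
      have hcert : (2 + b ^ 4) * P24 b + (-1 - b ^ 4) * (b ^ 8 - 1) = 3 := by
        simp only [P24]; ring
      exact hcert ▸ dvd_add (Dvd.dvd.mul_left hqP _) (Dvd.dvd.mul_left h2 _)
    have h4 : q ∣ 3 := by exact_mod_cast h3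
    exact hq3 ((Nat.prime_dvd_prime_iff_eq hq (by norm_num)).mp h4)
  have hn12 : ¬ orderOf ((b : ℤ) : ZMod q) ∣ 12 := by
    intro hdv
    have h1 : ((b : ℤ) : ZMod q) ^ 12 = 1 := orderOf_dvd_iff_pow_eq_one.mp hdv
    have h2 : (q:ℤ) ∣ b ^ 12 - 1 := by
      rw [← ZMod.intCast_zmod_eq_zero_iff_dvd]
      push_cast
      rw [h1]; ring
    have h3 : (q:ℤ) ∣ 2 := by
      have hcert : (1 + b ^ 4) * P24 b + (-1) * (b ^ 12 - 1) = 2 := by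
        simp only [P24]; ring
      exact hcert ▸ dvd_add (Dvd.dvd.mul_left hqP _) (Dvd.dvd.mul_left h2 _)
    have h4 : q ∣ 2 := by exact_mod_cast h3
    exact hq2 ((Nat.prime_dvd_prime_iff_eq hq (by norm_num)).mp h4)
  have hole : orderOf ((b : ℤ) : ZMod q) ≤ 24 := Nat.le_of_dvd (by norm_num) hord
  have key : ∀ r : Fin 25, (r.1 ∣ 24 → ¬ r.1 ∣ 8 → ¬ r.1 ∣ 12 → r.1 = 24) := by decide
  exact ⟨key ⟨orderOf ((b : ℤ) : ZMod q), by omega⟩ hord hn8 hn12, hq2, hq3⟩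

def P36 (b : ℤ) : ℤ := b ^ 12 - b ^ 6 + 1

def d36 (b : ℤ) : ℤ := P36 b / (Int.gcd (P36 b) 6 : ℤ)

lemma good36 {b : ℤ} (hb : 3 ≤ b) : Good b 36 (d36 b) := by
  have h7 : 7 ≤ P36 b := by
    have hy : (3:ℤ) ≤ b ^ 6 := le_trans hb (le_self_pow₀ (by linarith) (by norm_num))
    have hsq : (b ^ 6) ^ 2 = b ^ 12 := by ring
    simp only [P36]; nlinarith [hy, hsq]
  have hm4 : ¬ (4:ℤ) ∣ P36 b := by
    intro hdvd
    have h := (ZMod.intCast_zmod_eq_zero_iff_dvd (P36 b) 4).mpr hdvd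
    simp only [P36] at h
    push_cast at h
    exact (by decide : ∀ z : ZMod 4, z ^ 12 - z ^ 6 + 1 ≠ 0) _ h
  have hm9 : ¬ (9:ℤ) ∣ P36 b := by
    intro hdvd
    have h := (ZMod.intCast_zmod_eq_zero_iff_dvd (P36 b) 9).mpr hdvd
    simp only [P36] at h
    push_cast at h
    exact (by decide : ∀ z : ZMod 9, z ^ 12 - z ^ 6 + 1 ≠ 0) _ h
  obtain ⟨hdP, hd1, hq23⟩ := clean h7 hm4 hm9
  have hPdvd : P36 b ∣ b ^ 36 - 1 := ⟨b ^ 24 + b ^ 18 - b ^ 6 - 1, by simp only [P36]; ring⟩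
  refine ⟨hd1, dvd_trans hdP hPdvd, fun q hq hqd => ?_⟩
  obtain ⟨hq2, hq3⟩ := hq23 q hq hqd
  have hqP : (q:ℤ) ∣ P36 b := hqd.trans hdP
  have hbe : ((b : ℤ) : ZMod q) ^ 36 = 1 := by
    have h := (ZMod.intCast_zmod_eq_zero_iff_dvd _ q).mpr (hqP.trans hPdvd)
    push_cast at h
    exact sub_eq_zero.mp (by linear_combination h)
  have hord : orderOf ((b : ℤ) : ZMod q) ∣ 36 := orderOf_dvd_of_pow_eq_one hbe
  have hn12 : ¬ orderOf ((b : ℤ) : ZMod q) ∣ 12 := by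
    intro hdv
    have h1 : ((b : ℤ) : ZMod q) ^ 12 = 1 := orderOf_dvd_iff_pow_eq_one.mp hdv
    have h2 : (q:ℤ) ∣ b ^ 12 - 1 := by
      rw [← ZMod.intCast_zmod_eq_zero_iff_dvd]
      push_cast
      rw [h1]; ring
    have h3 : (q:ℤ) ∣ 3 := by
      have hcert : (2 + b ^ 6) * P36 b + (-1 - b ^ 6) * (b ^ 12 - 1) = 3 := by
        simp only [P36]; ring
      exact hcert ▸ dvd_add (Dvd.dvd.mul_left hqP _) (Dvd.dvd.mul_left h2 _)
    have h4 : q ∣ 3 := by exact_mod_cast h3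
    exact hq3 ((Nat.prime_dvd_prime_iff_eq hq (by norm_num)).mp h4)
  have hn18 : ¬ orderOf ((b : ℤ) : ZMod q) ∣ 18 := by
    intro hdv
    have h1 : ((b : ℤ) : ZMod q) ^ 18 = 1 := orderOf_dvd_iff_pow_eq_one.mp hdv
    have h2 : (q:ℤ) ∣ b ^ 18 - 1 := by
      rw [← ZMod.intCast_zmod_eq_zero_iff_dvd]
      push_cast
      rw [h1]; ring
    have h3 : (q:ℤ) ∣ 2 := by
      have hcert : (1 + b ^ 6) * P36 b + (-1) * (b ^ 18 - 1) = 2 := by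
        simp only [P36]; ring
      exact hcert ▸ dvd_add (Dvd.dvd.mul_left hqP _) (Dvd.dvd.mul_left h2 _)
    have h4 : q ∣ 2 := by exact_mod_cast h3
    exact hq2 ((Nat.prime_dvd_prime_iff_eq hq (by norm_num)).mp h4)
  have hole : orderOf ((b : ℤ) : ZMod q) ≤ 36 := Nat.le_of_dvd (by norm_num) hord
  have key : ∀ r : Fin 37, (r.1 ∣ 36 → ¬ r.1 ∣ 12 → ¬ r.1 ∣ 18 → r.1 = 36) := by decide
  exact ⟨key ⟨orderOf ((b : ℤ) : ZMod q), by omega⟩ hord hn12 hn18, hq2, hq3⟩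

def P48 (b : ℤ) : ℤ := b ^ 16 - b ^ 8 + 1

def d48 (b : ℤ) : ℤ := P48 b / (Int.gcd (P48 b) 6 : ℤ)

lemma good48 {b : ℤ} (hb : 3 ≤ b) : Good b 48 (d48 b) := by
  have h7 : 7 ≤ P48 b := by
    have hy : (3:ℤ) ≤ b ^ 8 := le_trans hb (le_self_pow₀ (by linarith) (by norm_num))
    have hsq : (b ^ 8) ^ 2 = b ^ 16 := by ring
    simp only [P48]; nlinarith [hy, hsq]
  have hm4 : ¬ (4:ℤ) ∣ P48 b := by
    intro hdvd
    have h := (ZMod.intCast_zmod_eq_zero_iff_dvd (P48 b) 4).mpr hdvd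
    simp only [P48] at h
    push_cast at h
    exact (by decide : ∀ z : ZMod 4, z ^ 16 - z ^ 8 + 1 ≠ 0) _ h
  have hm9 : ¬ (9:ℤ) ∣ P48 b := by
    intro hdvd
    have h := (ZMod.intCast_zmod_eq_zero_iff_dvd (P48 b) 9).mpr hdvd
    simp only [P48] at h
    push_cast at h
    exact (by decide : ∀ z : ZMod 9, z ^ 16 - z ^ 8 + 1 ≠ 0) _ h
  obtain ⟨hdP, hd1, hq23⟩ := clean h7 hm4 hm9
  have hPdvd : P48 b ∣ b ^ 48 - 1 := ⟨b ^ 32 + b ^ 24 - b ^ 8 - 1, by simp only [P48]; ring⟩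
  refine ⟨hd1, dvd_trans hdP hPdvd, fun q hq hqd => ?_⟩
  obtain ⟨hq2, hq3⟩ := hq23 q hq hqd
  have hqP : (q:ℤ) ∣ P48 b := hqd.trans hdP
  have hbe : ((b : ℤ) : ZMod q) ^ 48 = 1 := by
    have h := (ZMod.intCast_zmod_eq_zero_iff_dvd _ q).mpr (hqP.trans hPdvd)
    push_cast at h
    exact sub_eq_zero.mp (by linear_combination h)
  have hord : orderOf ((b : ℤ) : ZMod q) ∣ 48 := orderOf_dvd_of_pow_eq_one hbe
  have hn16 : ¬ orderOf ((b : ℤ) : ZMod q) ∣ 16 := by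
    intro hdv
    have h1 : ((b : ℤ) : ZMod q) ^ 16 = 1 := orderOf_dvd_iff_pow_eq_one.mp hdv
    have h2 : (q:ℤ) ∣ b ^ 16 - 1 := by
      rw [← ZMod.intCast_zmod_eq_zero_iff_dvd]
      push_cast
      rw [h1]; ring
    have h3 : (q:ℤ) ∣ 3 := by
      have hcert : (2 + b ^ 8) * P48 b + (-1 - b ^ 8) * (b ^ 16 - 1) = 3 := by
        simp only [P48]; ring
      exact hcert ▸ dvd_add (Dvd.dvd.mul_left hqP _) (Dvd.dvd.mul_left h2 _)
    have h4 : q ∣ 3 := by exact_mod_cast h3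
    exact hq3 ((Nat.prime_dvd_prime_iff_eq hq (by norm_num)).mp h4)
  have hn24 : ¬ orderOf ((b : ℤ) : ZMod q) ∣ 24 := by
    intro hdv
    have h1 : ((b : ℤ) : ZMod q) ^ 24 = 1 := orderOf_dvd_iff_pow_eq_one.mp hdv
    have h2 : (q:ℤ) ∣ b ^ 24 - 1 := by
      rw [← ZMod.intCast_zmod_eq_zero_iff_dvd]
      push_cast
      rw [h1]; ring
    have h3 : (q:ℤ) ∣ 2 := by
      have hcert : (1 + b ^ 8) * P48 b + (-1) * (b ^ 24 - 1) = 2 := by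
        simp only [P48]; ring
      exact hcert ▸ dvd_add (Dvd.dvd.mul_left hqP _) (Dvd.dvd.mul_left h2 _)
    have h4 : q ∣ 2 := by exact_mod_cast h3
    exact hq2 ((Nat.prime_dvd_prime_iff_eq hq (by norm_num)).mp h4)
  have hole : orderOf ((b : ℤ) : ZMod q) ≤ 48 := Nat.le_of_dvd (by norm_num) hord
  have key : ∀ r : Fin 49, (r.1 ∣ 48 → ¬ r.1 ∣ 16 → ¬ r.1 ∣ 24 → r.1 = 48) := by decide
  exact ⟨key ⟨orderOf ((b : ℤ) : ZMod q), by omega⟩ hord hn16 hn24, hq2, hq3⟩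


def ES : Fin 11 → ℕ := ![3, 4, 6, 8, 9, 12, 16, 18, 24, 36, 48]
def CS : Fin 11 → ℕ := ![0, 1, 2, 7, 4, 10, 11, 16, 19, 28, 35]
def DS (b : ℤ) : Fin 11 → ℤ :=
  ![d3 b, d4 b, d6 b, d8 b, d9 b, d12 b, d16 b, d18 b, d24 b, d36 b, d48 b]

lemma goodAll {b : ℤ} (hb : 3 ≤ b) : ∀ i : Fin 11, Good b (ES i) (DS b i) := by
  intro i
  fin_cases i
  · exact good3 hb
  · exact good4 hb
  · exact good6 hb
  · exact good8 hb
  · exact good9 hb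
  · exact good12 hb
  · exact good16 hb
  · exact good18 hb
  · exact good24 hb
  · exact good36 hb
  · exact good48 hb

lemma covAll (n : ℕ) : ∃ i : Fin 11, n % ES i = CS i := by
  have h144 : ∀ r : Fin 144, r.1 % 3 = 0 ∨ r.1 % 4 = 1 ∨ r.1 % 6 = 2 ∨ r.1 % 8 = 7 ∨
      r.1 % 9 = 4 ∨ r.1 % 12 = 10 ∨ r.1 % 16 = 11 ∨ r.1 % 18 = 16 ∨ r.1 % 24 = 19 ∨
      r.1 % 36 = 28 ∨ r.1 % 48 = 35 := by decide
  have hr := h144 ⟨n % 144, Nat.mod_lt _ (by norm_num)⟩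
  simp only at hr
  have hmm : ∀ e : ℕ, e ∣ 144 → n % 144 % e = n % e := fun e he => Nat.mod_mod_of_dvd n he
  rcases hr with h|h|h|h|h|h|h|h|h|h|h
  · exact ⟨0, by rw [show ES 0 = 3 from rfl, show CS 0 = 0 from rfl, ← hmm 3 (by norm_num)]; exact h⟩
  · exact ⟨1, by rw [show ES 1 = 4 from rfl, show CS 1 = 1 from rfl, ← hmm 4 (by norm_num)]; exact h⟩
  · exact ⟨2, by rw [show ES 2 = 6 from rfl, show CS 2 = 2 from rfl, ← hmm 6 (by norm_num)]; exact h⟩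
  · exact ⟨3, by rw [show ES 3 = 8 from rfl, show CS 3 = 7 from rfl, ← hmm 8 (by norm_num)]; exact h⟩
  · exact ⟨4, by rw [show ES 4 = 9 from rfl, show CS 4 = 4 from rfl, ← hmm 9 (by norm_num)]; exact h⟩
  · exact ⟨5, by rw [show ES 5 = 12 from rfl, show CS 5 = 10 from rfl, ← hmm 12 (by norm_num)]; exact h⟩
  · exact ⟨6, by rw [show ES 6 = 16 from rfl, show CS 6 = 11 from rfl, ← hmm 16 (by norm_num)]; exact h⟩
  · exact ⟨7, by rw [show ES 7 = 18 from rfl, show CS 7 = 16 from rfl, ← hmm 18 (by norm_num)]; exact h⟩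
  · exact ⟨8, by rw [show ES 8 = 24 from rfl, show CS 8 = 19 from rfl, ← hmm 24 (by norm_num)]; exact h⟩
  · exact ⟨9, by rw [show ES 9 = 36 from rfl, show CS 9 = 28 from rfl, ← hmm 36 (by norm_num)]; exact h⟩
  · exact ⟨10, by rw [show ES 10 = 48 from rfl, show CS 10 = 35 from rfl, ← hmm 48 (by norm_num)]; exact h⟩

lemma isCoprime_of_forall_prime {a d : ℤ} (hd : d ≠ 0)
    (h : ∀ q : ℕ, q.Prime → (q:ℤ) ∣ d → ¬ (q:ℤ) ∣ a) : IsCoprime a d := by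
  rw [Int.isCoprime_iff_gcd_eq_one]
  by_contra hg
  have hg0 : Int.gcd a d ≠ 0 := by
    intro h0
    rw [Int.gcd_eq_zero_iff] at h0
    exact hd h0.2
  have hq : (Int.gcd a d).minFac.Prime := Nat.minFac_prime hg
  have hqg : ((Int.gcd a d).minFac : ℤ) ∣ (Int.gcd a d : ℤ) :=
    Int.natCast_dvd_natCast.mpr (Nat.minFac_dvd _)
  exact h _ hq (hqg.trans (Int.gcd_dvd_right a d)) (hqg.trans (Int.gcd_dvd_left a d))

lemma zmod_one_of_dvd_sub_one {q : ℕ} {b : ℤ} (h : (q:ℤ) ∣ b - 1) : ((b : ℤ) : ZMod q) = 1 := by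
  have h2 := (ZMod.intCast_zmod_eq_zero_iff_dvd (b - 1) q).mpr h
  push_cast at h2
  exact sub_eq_zero.mp (by linear_combination h2)

lemma prime_dvd_144 {q : ℕ} (hq : q.Prime) (h : (q:ℤ) ∣ 144) : q = 2 ∨ q = 3 := by
  have h2 : q ∣ 144 := by exact_mod_cast h
  have h3 : q ∣ 2 ^ 4 * 3 ^ 2 := by norm_num at h2 ⊢; exact h2
  rcases (Nat.Prime.dvd_mul hq).mp h3 with h4 | h4
  · exact Or.inl ((Nat.prime_dvd_prime_iff_eq hq (by norm_num)).mp (hq.dvd_of_dvd_pow h4))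
  · exact Or.inr ((Nat.prime_dvd_prime_iff_eq hq (by norm_num)).mp (hq.dvd_of_dvd_pow h4))

lemma inst1 (b : ℤ) (hb : 3 ≤ b) :
    {t : ℕ | 0 < t ∧ IsBSierpinski b ((t : ℤ) * b ^ t + 1)}.Infinite := by
  have hgood := goodAll hb
  -- CRT
  set M : Fin 12 → ℤ := Fin.cons ((b - 1) * 144) (fun i => DS b i) with hM
  set R : Fin 12 → ℤ := Fin.cons (-1) (fun i => -(b * (b ^ (ES i - CS i) + 1))) with hR
  have hDne : ∀ i : Fin 11, DS b i ≠ 0 := fun i => by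
    have := (hgood i).1; intro h0; rw [h0] at this; norm_num at this
  have hcopbase : ∀ i : Fin 11, IsCoprime ((b - 1) * 144 : ℤ) (DS b i) := by
    intro i
    apply isCoprime_of_forall_prime (hDne i)
    intro q hq hqd hqa
    obtain ⟨hord, hq2, hq3⟩ := (hgood i).2.2 q hq hqd
    have hqz : Prime (q : ℤ) := Nat.prime_iff_prime_int.mp hq
    rcases hqz.dvd_mul.mp hqa with hcase | hcase
    · have h1 : ((b : ℤ) : ZMod q) = 1 := zmod_one_of_dvd_sub_one hcase
      rw [h1, orderOf_one] at hord
      have h3 := (by decide : ∀ i : Fin 11, 3 ≤ ES i) i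
      omega
    · rcases prime_dvd_144 hq hcase with rfl | rfl
      · exact hq2 rfl
      · exact hq3 rfl
  have hcoppair : ∀ i j : Fin 11, i ≠ j → IsCoprime (DS b i) (DS b j) := by
    intro i j hij
    apply isCoprime_of_forall_prime (hDne j)
    intro q hq hqd hqa
    have h1 := ((hgood j).2.2 q hq hqd).1
    have h2 := ((hgood i).2.2 q hq hqa).1
    have hne : ES i ≠ ES j := (by decide : ∀ i j : Fin 11, i ≠ j → ES i ≠ ES j) i j hij
    omega
  have hpair : ∀ i j : Fin 12, i ≠ j → IsCoprime (M i) (M j) := by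
    intro i j hij
    rcases Fin.eq_zero_or_eq_succ i with rfl | ⟨i', rfl⟩ <;>
      rcases Fin.eq_zero_or_eq_succ j with rfl | ⟨j', rfl⟩
    · exact absurd rfl hij
    · simpa only [hM, Fin.cons_zero, Fin.cons_succ] using hcopbase j'
    · simpa only [hM, Fin.cons_zero, Fin.cons_succ] using (hcopbase i').symm
    · have hij' : i' ≠ j' := by
        intro h; exact hij (by rw [h])
      simpa only [hM, Fin.cons_succ] using hcoppair i' j' hij'
  obtain ⟨x, hx⟩ := crt_fin M R hpair
  apply sierpinski_main b (by omega) 144 (by norm_num)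
      (List.ofFn (fun i : Fin 11 => (ES i, CS i, DS b i)))
  · intro p hp
    rw [List.mem_ofFn] at hp
    obtain ⟨i, rfl⟩ := hp
    exact ⟨(by decide : ∀ i : Fin 11, 0 < ES i) i,
      (by decide : ∀ i : Fin 11, ES i ∣ 144) i,
      (by decide : ∀ i : Fin 11, CS i < ES i) i,
      (hgood i).1, (hgood i).2.1⟩
  · intro n
    obtain ⟨i, hi⟩ := covAll n
    exact ⟨(ES i, CS i, DS b i), List.mem_ofFn.mpr ⟨i, rfl⟩, hi⟩
  · have h0 := hx 0
    simp only [hM, hR, Fin.cons_zero] at h0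
    have h1 : x - (-1) = x + 1 := by ring
    rw [h1] at h0
    exact_mod_cast h0
  · intro p hp
    rw [List.mem_ofFn] at hp
    obtain ⟨i, rfl⟩ := hp
    have hi := hx i.succ
    simp only [hM, hR, Fin.cons_succ] at hi
    rw [sub_neg_eq_add] at hi
    exact hi

lemma inst2 : {t : ℕ | 0 < t ∧ IsBSierpinski 2 ((t : ℤ) * 2 ^ t + 1)}.Infinite := by
  apply sierpinski_main 2 (by norm_num) 36 (by norm_num)
      [(2, 0, (3:ℤ)), (3, 1, 7), (4, 3, 5), (9, 5, 73), (12, 9, 13), (18, 17, 19), (36, 29, 37)]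
      (hx1 := ?_) (hx2 := ?_) (x := 291402899)
  · intro p hp
    fin_cases hp <;> norm_num
  · intro n
    have h36 : ∀ r : Fin 36, r.1 % 2 = 0 ∨ r.1 % 3 = 1 ∨ r.1 % 4 = 3 ∨ r.1 % 9 = 5 ∨
        r.1 % 12 = 9 ∨ r.1 % 18 = 17 ∨ r.1 % 36 = 29 := by decide
    have hr := h36 ⟨n % 36, Nat.mod_lt _ (by norm_num)⟩
    simp only at hr
    have hmm : ∀ e : ℕ, e ∣ 36 → n % 36 % e = n % e := fun e he => Nat.mod_mod_of_dvd n he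
    rcases hr with h|h|h|h|h|h|h
    · exact ⟨(2, 0, 3), by simp, by rw [← hmm 2 (by norm_num)]; exact h⟩
    · exact ⟨(3, 1, 7), by simp, by rw [← hmm 3 (by norm_num)]; exact h⟩
    · exact ⟨(4, 3, 5), by simp, by rw [← hmm 4 (by norm_num)]; exact h⟩
    · exact ⟨(9, 5, 73), by simp, by rw [← hmm 9 (by norm_num)]; exact h⟩
    · exact ⟨(12, 9, 13), by simp, by rw [← hmm 12 (by norm_num)]; exact h⟩
    · exact ⟨(18, 17, 19), by simp, by rw [← hmm 18 (by norm_num)]; exact h⟩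
    · exact ⟨(36, 29, 37), by simp, by rw [← hmm 36 (by norm_num)]; exact h⟩
  · norm_num
  · intro p hp
    fin_cases hp <;> norm_num


end CullenSierpinskiAux

theorem infinitely_many_cullen_b_sierpinski (b : ℤ) (hb : 2 ≤ b) :
    {t : ℕ | 0 < t ∧ IsBSierpinski b ((t : ℤ) * b ^ t + 1)}.Infinite := by
  by_cases hb2 : b = 2
  · subst hb2
    exact CullenSierpinskiAux.inst2
  · exact CullenSierpinskiAux.inst1 b (by omega)
end

section
/- For any integer b ≥ 2, there exist infinitely many positive integers t such that the b-Woodall number t·b^t − 1 is a b-Sierpiński number. -/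
namespace WoodallSierp

/-- If `E ∣ B^d - 1` then `B^d ≡ 1 [MOD E]`. -/
lemma pow_modEq_one {B E d : ℕ} (hB : 1 ≤ B) (hE : E ∣ B ^ d - 1) :
    B ^ d ≡ 1 [MOD E] :=
  ((Nat.modEq_iff_dvd' (Nat.one_le_pow _ _ hB)).2 hE).symm

/-- Powers of `B` only depend on the exponent modulo `d`, modulo any divisor of `B^d - 1`. -/
lemma pow_modEq_of_modEq {B E d : ℕ} (hB : 1 ≤ B) (hE : E ∣ B ^ d - 1) :
    ∀ {a c : ℕ}, a ≡ c [MOD d] → B ^ a ≡ B ^ c [MOD E] := by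
  have key : ∀ a c : ℕ, a ≤ c → a ≡ c [MOD d] → B ^ a ≡ B ^ c [MOD E] := by
    intro a c hle h
    obtain ⟨k, hk⟩ := (Nat.modEq_iff_dvd' hle).1 h
    have hc : c = a + d * k := by omega
    subst hc
    have h1 : (B ^ d) ^ k ≡ 1 ^ k [MOD E] := (pow_modEq_one hB hE).pow k
    calc B ^ a = B ^ a * 1 ^ k := by ring
    _ ≡ B ^ a * (B ^ d) ^ k [MOD E] := (h1.symm).mul_left _
    _ = B ^ (a + d * k) := by rw [pow_add, pow_mul]
  intro a c h
  rcases le_total a c with hle | hle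
  · exact key a c hle h
  · exact (key c a hle h.symm).symm

lemma coprime_of_dvd_pow_sub_one {B E d : ℕ} (hB : 1 ≤ B) (hd : 0 < d)
    (hE : E ∣ B ^ d - 1) : Nat.Coprime B E := by
  have h2 : Nat.gcd B E ∣ B ^ d := (Nat.gcd_dvd_left _ _).trans (dvd_pow_self B hd.ne')
  have h3 : Nat.gcd B E ∣ B ^ d - 1 := (Nat.gcd_dvd_right _ _).trans hE
  have h4 : Nat.gcd B E ∣ B ^ d - (B ^ d - 1) := Nat.dvd_sub h2 h3
  have h5 : B ^ d - (B ^ d - 1) = 1 := by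
    have := Nat.one_le_pow d B hB
    omega
  rw [h5] at h4
  exact Nat.dvd_one.1 h4

/-- Key order lemma: a common modulus of `B^a - 1` and `B^c - 1` divides `B^gcd(a,c) - 1`. -/
lemma dvd_pow_gcd_sub_one {B E a c : ℕ} (hB : 2 ≤ B) (ha : 0 < a)
    (h1 : E ∣ B ^ a - 1) (h2 : E ∣ B ^ c - 1) : E ∣ B ^ Nat.gcd a c - 1 := by
  have hcop : Nat.Coprime B E := coprime_of_dvd_pow_sub_one (by omega) ha h1
  set u : (ZMod E)ˣ := ZMod.unitOfCoprime B hcop with hu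
  have hcast : ((u : (ZMod E)ˣ) : ZMod E) = (B : ZMod E) := ZMod.coe_unitOfCoprime B hcop
  have key : ∀ e : ℕ, E ∣ B ^ e - 1 → u ^ e = 1 := by
    intro e he
    have h1' : B ^ e ≡ 1 [MOD E] := pow_modEq_one (by omega) he
    have h2' : ((B ^ e : ℕ) : ZMod E) = ((1 : ℕ) : ZMod E) :=
      (ZMod.natCast_eq_natCast_iff _ _ _).2 h1'
    apply Units.ext
    rw [Units.val_pow_eq_pow_val, hcast, Units.val_one]
    push_cast at h2' ⊢
    exact h2'
  have ho : orderOf u ∣ Nat.gcd a c :=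
    Nat.dvd_gcd (orderOf_dvd_of_pow_eq_one (key a h1)) (orderOf_dvd_of_pow_eq_one (key c h2))
  have hg : u ^ Nat.gcd a c = 1 := orderOf_dvd_iff_pow_eq_one.1 ho
  have : ((B ^ Nat.gcd a c : ℕ) : ZMod E) = ((1 : ℕ) : ZMod E) := by
    have := congrArg (Units.val) hg
    rw [Units.val_pow_eq_pow_val, hcast, Units.val_one] at this
    push_cast
    exact this
  have := (ZMod.natCast_eq_natCast_iff _ _ _).1 this
  exact (Nat.modEq_iff_dvd' (Nat.one_le_pow _ _ (by omega))).1 this.symm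

/-- `B^g - 1 ∣ B^h - 1` when `g ∣ h`. -/
lemma pow_sub_one_dvd_pow_sub_one (B : ℕ) {g h : ℕ} (hgh : g ∣ h) :
    B ^ g - 1 ∣ B ^ h - 1 := by
  obtain ⟨m, rfl⟩ := hgh
  have := Nat.sub_dvd_pow_sub_pow (B ^ g) 1 m
  simpa [← pow_mul] using this

lemma coprime_succ_self' (n : ℕ) : Nat.Coprime (n + 1) n := by
  rw [Nat.Coprime, add_comm, Nat.gcd_add_self_left]
  exact Nat.gcd_one_left n

/-- Strip the 2- and 3-part of `Φ` (which is squarefree at 2 and 3). -/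
lemma strip6 {Φ : ℕ} (hΦ : 6 < Φ) (h4 : ¬ (4 ∣ Φ)) (h9 : ¬ (9 ∣ Φ)) :
    1 < Φ / Nat.gcd Φ 6 ∧ (Φ / Nat.gcd Φ 6) ∣ Φ ∧ Nat.Coprime (Φ / Nat.gcd Φ 6) 6 := by
  set g := Nat.gcd Φ 6 with hgdef
  have hgdvd : g ∣ Φ := Nat.gcd_dvd_left _ _
  have hg6 : g ∣ 6 := Nat.gcd_dvd_right _ _
  have hgpos : 0 < g := Nat.gcd_pos_of_pos_right _ (by norm_num)
  obtain ⟨E, hE⟩ := hgdvd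
  have hdiv : Φ / g = E := by rw [hE]; exact Nat.mul_div_cancel_left _ hgpos
  have hg6' : g ≤ 6 := Nat.le_of_dvd (by norm_num) hg6
  have hE1 : 1 < E := by
    rcases Nat.lt_or_ge 1 E with h | h
    · exact h
    · interval_cases E <;> omega
  have h2E : ¬ (2 ∣ E) := by
    intro h2E
    by_cases h2g : 2 ∣ g
    · refine h4 ?_
      rw [hE, (by norm_num : (4:ℕ) = 2*2)]
      exact mul_dvd_mul h2g h2E
    · have h2Φ : 2 ∣ Φ := hE ▸ Dvd.dvd.mul_left h2E g
      exact h2g (hgdef ▸ Nat.dvd_gcd h2Φ (by norm_num))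
  have h3E : ¬ (3 ∣ E) := by
    intro h3E
    by_cases h3g : 3 ∣ g
    · refine h9 ?_
      rw [hE, (by norm_num : (9:ℕ) = 3*3)]
      exact mul_dvd_mul h3g h3E
    · have h3Φ : 3 ∣ Φ := hE ▸ Dvd.dvd.mul_left h3E g
      exact h3g (hgdef ▸ Nat.dvd_gcd h3Φ (by norm_num))
  have hcop : Nat.Coprime E 6 := by
    have : (6 : ℕ) = 2 * 3 := by norm_num
    rw [this, Nat.coprime_mul_iff_right]
    constructor
    · exact (Nat.coprime_comm.1 ((Nat.Prime.coprime_iff_not_dvd Nat.prime_two).2 h2E))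
    · exact (Nat.coprime_comm.1 ((Nat.Prime.coprime_iff_not_dvd Nat.prime_three).2 h3E))
  rw [hdiv]
  exact ⟨hE1, ⟨g, by rw [hE]; ring⟩, hcop⟩


/-! ### Shape lemmas -/

def phiA (z : ℕ) : ℕ := z * z + z + 1
def phiB (z : ℕ) : ℕ := z * z + 1
def phiC (z : ℕ) : ℕ := z * (z - 1) + 1

private lemma mod_transfer {m : ℕ} (f : ℕ → ℕ)
    (hf : ∀ z : ℕ, f z ≡ f (z % m) [MOD m]) {z : ℕ} (h : m ∣ f z) : m ∣ f (z % m) :=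
  Nat.modEq_zero_iff_dvd.1 ((hf z).symm.trans (Nat.modEq_zero_iff_dvd.2 h))

private lemma phiA_mod (m z : ℕ) : phiA z ≡ phiA (z % m) [MOD m] := by
  have hz : z ≡ z % m [MOD m] := (Nat.mod_modEq z m).symm
  exact ((hz.mul hz).add hz).add_right 1

private lemma phiB_mod (m z : ℕ) : phiB z ≡ phiB (z % m) [MOD m] := by
  have hz : z ≡ z % m [MOD m] := (Nat.mod_modEq z m).symm
  exact (hz.mul hz).add_right 1

lemma phiA_not4 (z : ℕ) : ¬ (4 ∣ phiA z) := by
  intro h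
  have h4 := mod_transfer phiA (phiA_mod 4) h
  have hlt : z % 4 < 4 := Nat.mod_lt _ (by norm_num)
  generalize hr : z % 4 = r at h4 hlt
  interval_cases r <;> norm_num [phiA] at h4

lemma phiA_not9 (z : ℕ) : ¬ (9 ∣ phiA z) := by
  intro h
  have h9 := mod_transfer phiA (phiA_mod 9) h
  have hlt : z % 9 < 9 := Nat.mod_lt _ (by norm_num)
  generalize hr : z % 9 = r at h9 hlt
  interval_cases r <;> norm_num [phiA] at h9

lemma phiA_dvd (z : ℕ) (hz : 1 ≤ z) : phiA z ∣ z ^ 3 - 1 := by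
  obtain ⟨y, rfl⟩ : ∃ y, z = y + 1 := ⟨z - 1, by omega⟩
  refine ⟨y, Nat.sub_eq_of_eq_add ?_⟩
  unfold phiA; ring

lemma killA {z k : ℕ} (hz : 1 ≤ z) (h1 : k ∣ phiA z) (h2 : k ∣ z - 1) : k ∣ 3 := by
  obtain ⟨y, rfl⟩ : ∃ y, z = y + 1 := ⟨z - 1, by omega⟩
  simp only [Nat.add_sub_cancel] at h2
  have hmul : k ∣ y * (y + 3) := Dvd.dvd.mul_right h2 _
  have heq : phiA (y + 1) - y * (y + 3) = 3 := by
    have : phiA (y + 1) = y * (y + 3) + 3 := by unfold phiA; ring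
    omega
  exact heq ▸ Nat.dvd_sub h1 hmul

lemma phiA_gt (z : ℕ) (hz : 2 ≤ z) : 6 < phiA z := by
  have : 2 * 2 ≤ z * z := Nat.mul_le_mul hz hz
  unfold phiA; omega

lemma phiB_not4 (z : ℕ) : ¬ (4 ∣ phiB z) := by
  intro h
  have h4 := mod_transfer phiB (phiB_mod 4) h
  have hlt : z % 4 < 4 := Nat.mod_lt _ (by norm_num)
  generalize hr : z % 4 = r at h4 hlt
  interval_cases r <;> norm_num [phiB] at h4

lemma phiB_not9 (z : ℕ) : ¬ (9 ∣ phiB z) := by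
  intro h
  have h3 : (3 : ℕ) ∣ phiB z := dvd_trans (by norm_num) h
  have h3' := mod_transfer phiB (phiB_mod 3) h3
  have hlt : z % 3 < 3 := Nat.mod_lt _ (by norm_num)
  generalize hr : z % 3 = r at h3' hlt
  interval_cases r <;> norm_num [phiB] at h3'

lemma phiB_dvd (z : ℕ) (hz : 1 ≤ z) : phiB z ∣ z ^ 4 - 1 := by
  obtain ⟨y, hy⟩ : ∃ y, z * z = y + 1 := by
    have : 1 ≤ z * z := Nat.one_le_iff_ne_zero.2 (by positivity)
    exact ⟨z * z - 1, by omega⟩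
  refine ⟨y, Nat.sub_eq_of_eq_add ?_⟩
  have h4 : z ^ 4 = (z * z) * (z * z) := by ring
  rw [h4, hy]
  unfold phiB
  rw [hy]
  ring

lemma killB {z k : ℕ} (hz : 1 ≤ z) (h1 : k ∣ phiB z) (h2 : k ∣ z * z - 1) : k ∣ 2 := by
  have h1z : 1 ≤ z * z := Nat.one_le_iff_ne_zero.2 (by positivity)
  have heq : phiB z - (z * z - 1) = 2 := by unfold phiB; omega
  exact heq ▸ Nat.dvd_sub h1 h2

lemma phiB_gt (z : ℕ) (hz : 3 ≤ z) : 6 < phiB z := by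
  have : 3 * 3 ≤ z * z := Nat.mul_le_mul hz hz
  unfold phiB; omega

lemma phiC_eq (z : ℕ) (hz : 1 ≤ z) : phiC z = phiA (z - 1) := by
  obtain ⟨y, rfl⟩ : ∃ y, z = y + 1 := ⟨z - 1, by omega⟩
  show (y + 1) * ((y + 1) - 1) + 1 = phiA ((y + 1) - 1)
  rw [Nat.add_sub_cancel]
  unfold phiA; ring

lemma phiC_not4 (z : ℕ) (hz : 1 ≤ z) : ¬ (4 ∣ phiC z) := by
  rw [phiC_eq z hz]; exact phiA_not4 _

lemma phiC_not9 (z : ℕ) (hz : 1 ≤ z) : ¬ (9 ∣ phiC z) := by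
  rw [phiC_eq z hz]; exact phiA_not9 _

lemma phiC_gt (z : ℕ) (hz : 3 ≤ z) : 6 < phiC z := by
  rw [phiC_eq z (by omega)]
  exact phiA_gt _ (by omega)

/-- `phiC z ∣ z^3 + 1`. -/
lemma phiC_dvd_cube_add (z : ℕ) (hz : 1 ≤ z) : phiC z ∣ z ^ 3 + 1 := by
  obtain ⟨y, rfl⟩ : ∃ y, z = y + 1 := ⟨z - 1, by omega⟩
  refine ⟨y + 2, ?_⟩
  show (y + 1) ^ 3 + 1 = ((y + 1) * ((y + 1) - 1) + 1) * (y + 2)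
  rw [Nat.add_sub_cancel]
  ring

lemma phiC_dvd (z : ℕ) (hz : 1 ≤ z) : phiC z ∣ z ^ 6 - 1 := by
  refine (phiC_dvd_cube_add z hz).trans ?_
  obtain ⟨y, hy⟩ : ∃ y, z ^ 3 = y + 1 := ⟨z ^ 3 - 1, by have := Nat.one_le_pow 3 z hz; omega⟩
  refine ⟨y, Nat.sub_eq_of_eq_add ?_⟩
  have h6 : z ^ 6 = z ^ 3 * z ^ 3 := by ring
  rw [h6, hy]
  ring

lemma killC1 {z k : ℕ} (hz : 1 ≤ z) (h1 : k ∣ phiC z) (h2 : k ∣ z ^ 3 - 1) : k ∣ 2 := by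
  have h3 : k ∣ z ^ 3 + 1 := h1.trans (phiC_dvd_cube_add z hz)
  have heq : (z ^ 3 + 1) - (z ^ 3 - 1) = 2 := by
    have := Nat.one_le_pow 3 z hz
    omega
  exact heq ▸ Nat.dvd_sub h3 h2

lemma killC2 {z k : ℕ} (hz : 2 ≤ z) (h1 : k ∣ phiC z) (h2 : k ∣ z * z - 1) : k ∣ 3 := by
  obtain ⟨y, rfl⟩ : ∃ y, z = y + 2 := ⟨z - 2, by omega⟩
  have e1 : phiC (y + 2) = (y * y + 3 * y) + 3 := by
    show (y + 2) * ((y + 2) - 1) + 1 = _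
    have : (y + 2) - 1 = y + 1 := by omega
    rw [this]; ring
  have e2 : (y + 2) * (y + 2) - 1 = (y * y + 3 * y) + (y + 3) := by
    have : (y + 2) * (y + 2) = y * y + 4 * y + 4 := by ring
    omega
  rw [e1] at h1
  rw [e2] at h2
  have hy : k ∣ y := by
    have h3 := Nat.dvd_sub h2 h1
    have e3 : (y * y + 3 * y) + (y + 3) - ((y * y + 3 * y) + 3) = y := by omega
    rwa [e3] at h3
  have hmul : k ∣ y * (y + 3) := hy.mul_right _
  have e4 : (y * y + 3 * y) + 3 - y * (y + 3) = 3 := by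
    have : y * (y + 3) = y * y + 3 * y := by ring
    omega
  exact e4 ▸ Nat.dvd_sub h1 hmul


/-- A "good class": modulus `E` of known multiplicative structure covering `n ≡ r mod d`. -/
structure GC (B : ℕ) where
  d : ℕ
  r : ℕ
  E : ℕ
  h1 : ℕ
  h2 : ℕ
  hd : 0 < d
  hh1 : 0 < h1
  hh2 : 0 < h2
  hE : 1 < E
  cop6 : Nat.Coprime E 6
  dvdE : E ∣ B ^ d - 1
  hmax : ∀ g, g ∣ d → g ≠ d → g ∣ h1 ∨ g ∣ h2
  kill1 : ∀ k, k ∣ E → k ∣ B ^ h1 - 1 → k ∣ 6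
  kill2 : ∀ k, k ∣ E → k ∣ B ^ h2 - 1 → k ∣ 6

namespace GC

variable {B : ℕ}

lemma kill_of_six (c : GC B) {k : ℕ} (hk : k ∣ c.E) (h6 : k ∣ 6) : k = 1 := by
  have h := Nat.dvd_gcd hk h6
  rw [c.cop6] at h
  exact Nat.dvd_one.1 h

lemma order {B : ℕ} (hB : 2 ≤ B) (c : GC B) {k e : ℕ} (he : 0 < e)
    (hk : k ∣ c.E) (hke : k ∣ B ^ e - 1) : c.d ∣ e ∨ k = 1 := by
  set g := Nat.gcd c.d e with hgdef
  have hkd : k ∣ B ^ c.d - 1 := hk.trans c.dvdE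
  have hg : k ∣ B ^ g - 1 := dvd_pow_gcd_sub_one hB c.hd hkd hke
  by_cases hgd : g = c.d
  · left
    rw [← hgd]
    exact Nat.gcd_dvd_right _ _
  · right
    have h6 : k ∣ 6 := by
      rcases c.hmax g (Nat.gcd_dvd_left _ _) hgd with hh | hh
      · exact c.kill1 k hk (hg.trans (pow_sub_one_dvd_pow_sub_one B hh))
      · exact c.kill2 k hk (hg.trans (pow_sub_one_dvd_pow_sub_one B hh))
    have : k ∣ Nat.gcd c.E 6 := Nat.dvd_gcd hk h6
    rw [c.cop6] at this
    exact Nat.dvd_one.1 this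

lemma coprimeE {B : ℕ} (hB : 2 ≤ B) (c c' : GC B) (hne : c.d ≠ c'.d) :
    Nat.Coprime c.E c'.E := by
  have hk1 : Nat.gcd c.E c'.E ∣ c.E := Nat.gcd_dvd_left _ _
  have hk2 : Nat.gcd c.E c'.E ∣ c'.E := Nat.gcd_dvd_right _ _
  rcases c.order hB c'.hd hk1 (hk2.trans c'.dvdE) with h | h
  · rcases c'.order hB c.hd hk2 (hk1.trans c.dvdE) with h' | h'
    · exact absurd (Nat.dvd_antisymm h h') hne
    · exact h'
  · exact h

/-- common divisors of `E` and `B - 1` are trivial. -/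
lemma coprime_base_sub_one {B : ℕ} (c : GC B) {k : ℕ} (hk : k ∣ c.E) (hk2 : k ∣ B - 1) :
    k = 1 := by
  have : k ∣ B ^ c.h1 - 1 := hk2.trans (by
    have := Nat.sub_dvd_pow_sub_pow B 1 c.h1
    simpa using this)
  have h6 : k ∣ 6 := c.kill1 k hk this
  have : k ∣ Nat.gcd c.E 6 := Nat.dvd_gcd hk h6
  rw [c.cop6] at this
  exact Nat.dvd_one.1 this

end GC

/-- maker for A-shape classes: `d = 3m`, cyclotomic-like divisor of `B^{3m}-1`. -/
def mkA (B m r : ℕ) (hB : 3 ≤ B) (hm : 0 < m)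
    (hmax : ∀ g, g ∣ 3 * m → g ≠ 3 * m → g ∣ m) : GC B :=
  letI z := B ^ m
  letI Φ := phiA z
  have hz : 3 ≤ z := le_trans hB (Nat.le_self_pow hm.ne' B)
  have hs := strip6 (phiA_gt z (by omega)) (phiA_not4 z) (phiA_not9 z)
  { d := 3 * m
    r := r
    E := Φ / Nat.gcd Φ 6
    h1 := m
    h2 := m
    hd := by positivity
    hh1 := hm
    hh2 := hm
    hE := hs.1
    cop6 := hs.2.2
    dvdE := by
      refine hs.2.1.trans ((phiA_dvd z (by omega)).trans ?_)
      rw [← pow_mul, mul_comm]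
    hmax := fun g hg hgne => Or.inl (hmax g hg hgne)
    kill1 := fun k hk hkm => by
      have h3 : k ∣ 3 := killA (z := z) (by omega) (hk.trans hs.2.1) hkm
      exact h3.trans (by norm_num)
    kill2 := fun k hk hkm => by
      have h3 : k ∣ 3 := killA (z := z) (by omega) (hk.trans hs.2.1) hkm
      exact h3.trans (by norm_num) }

/-- maker for B-shape classes: `d = 4m`. -/
def mkB (B m r : ℕ) (hB : 3 ≤ B) (hm : 0 < m)
    (hmax : ∀ g, g ∣ 4 * m → g ≠ 4 * m → g ∣ 2 * m) : GC B :=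
  letI z := B ^ m
  letI Φ := phiB z
  have hz : 3 ≤ z := le_trans hB (Nat.le_self_pow hm.ne' B)
  have hs := strip6 (phiB_gt z hz) (phiB_not4 z) (phiB_not9 z)
  { d := 4 * m
    r := r
    E := Φ / Nat.gcd Φ 6
    h1 := 2 * m
    h2 := 2 * m
    hd := by positivity
    hh1 := by positivity
    hh2 := by positivity
    hE := hs.1
    cop6 := hs.2.2
    dvdE := by
      refine hs.2.1.trans ((phiB_dvd z (by omega)).trans ?_)
      rw [← pow_mul, mul_comm]
    hmax := fun g hg hgne => Or.inl (hmax g hg hgne)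
    kill1 := fun k hk hkm => by
      have hzz : k ∣ z * z - 1 := by
        have : B ^ (2 * m) = z * z := by rw [two_mul, pow_add]
        rwa [this] at hkm
      have h2 : k ∣ 2 := killB (z := z) (by omega) (hk.trans hs.2.1) hzz
      exact h2.trans (by norm_num)
    kill2 := fun k hk hkm => by
      have hzz : k ∣ z * z - 1 := by
        have : B ^ (2 * m) = z * z := by rw [two_mul, pow_add]
        rwa [this] at hkm
      have h2 : k ∣ 2 := killB (z := z) (by omega) (hk.trans hs.2.1) hzz
      exact h2.trans (by norm_num) }

/-- maker for C-shape classes: `d = 6m`. -/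
def mkC (B m r : ℕ) (hB : 3 ≤ B) (hm : 0 < m)
    (hmax : ∀ g, g ∣ 6 * m → g ≠ 6 * m → g ∣ 3 * m ∨ g ∣ 2 * m) : GC B :=
  letI z := B ^ m
  letI Φ := phiC z
  have hz : 3 ≤ z := le_trans hB (Nat.le_self_pow hm.ne' B)
  have hs := strip6 (phiC_gt z hz) (phiC_not4 z (by omega)) (phiC_not9 z (by omega))
  { d := 6 * m
    r := r
    E := Φ / Nat.gcd Φ 6
    h1 := 3 * m
    h2 := 2 * m
    hd := by positivity
    hh1 := by positivity
    hh2 := by positivity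
    hE := hs.1
    cop6 := hs.2.2
    dvdE := by
      refine hs.2.1.trans ((phiC_dvd z (by omega)).trans ?_)
      rw [← pow_mul, mul_comm]
    hmax := hmax
    kill1 := fun k hk hkm => by
      have hz3 : k ∣ z ^ 3 - 1 := by
        have : B ^ (3 * m) = z ^ 3 := by rw [← pow_mul, mul_comm]
        rwa [this] at hkm
      have h2 : k ∣ 2 := killC1 (z := z) (by omega) (hk.trans hs.2.1) hz3
      exact h2.trans (by norm_num)
    kill2 := fun k hk hkm => by
      have hzz : k ∣ z * z - 1 := by
        have : B ^ (2 * m) = z * z := by rw [two_mul, pow_add]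
        rwa [this] at hkm
      have h3 : k ∣ 3 := killC2 (z := z) (by omega) (hk.trans hs.2.1) hzz
      exact h3.trans (by norm_num) }

@[simp] lemma mkA_d (B m r : ℕ) (hB hm hmax) : (mkA B m r hB hm hmax).d = 3 * m := rfl
@[simp] lemma mkA_r (B m r : ℕ) (hB hm hmax) : (mkA B m r hB hm hmax).r = r := rfl
@[simp] lemma mkB_d (B m r : ℕ) (hB hm hmax) : (mkB B m r hB hm hmax).d = 4 * m := rfl
@[simp] lemma mkB_r (B m r : ℕ) (hB hm hmax) : (mkB B m r hB hm hmax).r = r := rfl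
@[simp] lemma mkC_d (B m r : ℕ) (hB hm hmax) : (mkC B m r hB hm hmax).d = 6 * m := rfl
@[simp] lemma mkC_r (B m r : ℕ) (hB hm hmax) : (mkC B m r hB hm hmax).r = r := rfl


/-- coprime to every member gives coprime to product. -/
lemma coprime_list_prod {k : ℕ} {l : List ℕ} (h : ∀ m ∈ l, Nat.Coprime k m) :
    Nat.Coprime k l.prod := by
  induction l with
  | nil => simp [Nat.coprime_one_right]
  | cons a tl ih =>
    rw [List.prod_cons]
    exact Nat.Coprime.mul_right (h a (List.mem_cons_self))
      (ih fun m hm => h m (List.mem_cons_of_mem _ hm))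

/-- simultaneous congruences for a list of pairwise coprime moduli. -/
lemma list_crt : ∀ (l : List (ℕ × ℕ)),
    List.Pairwise (fun p q => Nat.Coprime p.1 q.1) l →
    ∃ T, ∀ p ∈ l, T ≡ p.2 [MOD p.1] := by
  intro l
  induction l with
  | nil => exact fun _ => ⟨0, by simp⟩
  | cons hd tl ih =>
    intro hpw
    rw [List.pairwise_cons] at hpw
    obtain ⟨T, hT⟩ := ih hpw.2
    have hcop : Nat.Coprime hd.1 ((tl.map Prod.fst).prod) :=
      coprime_list_prod (by
        intro m hm
        rw [List.mem_map] at hm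
        obtain ⟨q, hq, rfl⟩ := hm
        exact hpw.1 q hq)
    obtain ⟨T', h1, h2⟩ := Nat.chineseRemainder hcop hd.2 T
    refine ⟨T', fun p hp => ?_⟩
    rcases List.mem_cons.1 hp with rfl | hp
    · exact h1
    · have hdvd : p.1 ∣ (tl.map Prod.fst).prod := List.dvd_prod (List.mem_map_of_mem hp)
      exact (h2.of_dvd hdvd).trans (hT p hp)

/-- Solvability of `a * c ≡ v mod E` for `c` invertible. -/
lemma exists_res {E c : ℕ} (hE : 1 < E) (hcop : Nat.Coprime c E) (v : ℕ) :
    ∃ a, a * c ≡ v [MOD E] := by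
  haveI : NeZero E := ⟨by omega⟩
  set u : (ZMod E)ˣ := ZMod.unitOfCoprime c hcop with hu
  refine ⟨((v : ZMod E) * ↑u⁻¹).val, ?_⟩
  have hcast : ((((v : ZMod E) * ↑u⁻¹).val * c : ℕ) : ZMod E) = ((v : ℕ) : ZMod E) := by
    push_cast
    rw [ZMod.natCast_val, ZMod.cast_id]
    have hcu : (c : ZMod E) = ↑u := (ZMod.coe_unitOfCoprime c hcop).symm
    rw [hcu, mul_assoc]
    have hinv : (↑u⁻¹ : ZMod E) * ↑u = 1 := by simp
    rw [hinv, mul_one]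
  exact (ZMod.natCast_eq_natCast_iff _ _ _).1 hcast


/-- Master lemma: a `t` satisfying the congruence conditions yields a
`b`-Sierpiński Woodall number. -/
lemma master (b : ℤ) (B : ℕ) (hbB : (B : ℤ) = b) (hB : 2 ≤ B) (Ψ : ℕ)
    (hΨ : 0 < Ψ) (L : List (ℕ × ℕ × ℕ))
    (hLd : ∀ x ∈ L, 0 < x.1 ∧ x.1 ∣ Ψ)
    (hLE : ∀ x ∈ L, 1 < x.2.2 ∧ x.2.2 ∣ B ^ x.1 - 1)
    (hcov : ∀ n : ℕ, 0 < n → ∃ x ∈ L, n % x.1 = x.2.1 % x.1)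
    (t : ℕ)
    (ht1 : t ≡ 1 [MOD Ψ])
    (htL : ∀ x ∈ L, t * B ^ (1 + x.2.1) + 1 ≡ B ^ x.2.1 [MOD x.2.2])
    (htco : ∀ p : ℕ, p.Prime → p ∣ t → ¬ p ∣ B - 1)
    (htbig : B ^ Ψ ≤ t) :
    0 < t ∧ IsBSierpinski b ((t : ℤ) * b ^ t - 1) := by
  subst hbB
  have hB1 : 1 ≤ B := by omega
  have ht1' : 1 ≤ t := le_trans (Nat.one_le_pow _ _ (by omega)) htbig
  have ht2 : 2 ≤ t := le_trans (by
    calc (2:ℕ) = 2 ^ 1 := by norm_num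
    _ ≤ 2 ^ Ψ := Nat.pow_le_pow_right (by norm_num) hΨ
    _ ≤ B ^ Ψ := Nat.pow_le_pow_left hB Ψ) htbig
  refine ⟨by omega, ?_, ?_, ?_⟩
  · -- positivity of k
    have h2 : (2 : ℤ) ≤ (t : ℤ) * (B : ℤ) ^ t := by
      have h1 : (1 : ℤ) ≤ (t : ℤ) := by exact_mod_cast ht1'
      have h2' : (2 : ℤ) ≤ (B : ℤ) ^ t := by
        calc (2:ℤ) = 2 ^ 1 := by norm_num
        _ ≤ 2 ^ t := by
          apply pow_le_pow_right₀ (by norm_num)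
          omega
        _ ≤ (B:ℤ) ^ t := by
          apply pow_le_pow_left₀ (by norm_num)
          exact_mod_cast hB
      nlinarith
    linarith
  · -- gcd condition
    have hkey : Nat.Coprime (t * B ^ t) (B - 1) := by
      apply Nat.Coprime.mul
      · by_contra hcon
        obtain ⟨p, hp, hpt, hpB⟩ := Nat.Prime.not_coprime_iff_dvd.1 hcon
        exact htco p hp hpt hpB
      · apply Nat.Coprime.pow_left
        have hBeq : B = (B - 1) + 1 := by omega
        rw [hBeq]
        exact coprime_succ_self' (B - 1)
    have e1 : (t : ℤ) * (B : ℤ) ^ t - 1 + 1 = ((t * B ^ t : ℕ) : ℤ) := by push_cast; ring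
    have e2 : ((B : ℤ) - 1) = (((B - 1 : ℕ)) : ℤ) := by
      have : (1:ℤ) ≤ (B:ℤ) := by exact_mod_cast hB1
      push_cast [Nat.cast_sub hB1]
      ring
    rw [e1, e2, Int.gcd_natCast_natCast]
    exact hkey
  · -- compositeness
    intro n hn
    obtain ⟨x, hxL, hxr⟩ := hcov n hn
    obtain ⟨d, r, E⟩ := x
    simp only at hxr
    obtain ⟨hd, hdΨ⟩ := hLd _ hxL
    obtain ⟨hE1, hEdvd⟩ := hLE _ hxL
    have htLx := htL _ hxL
    simp only at hd hdΨ hE1 hEdvd htLx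
    -- the congruence chain
    have ht1d : t ≡ 1 [MOD d] := ht1.of_dvd hdΨ
    have hnr : n ≡ r [MOD d] := by
      show n % d = r % d
      exact hxr
    have hexp : t + n ≡ 1 + r [MOD d] := ht1d.add hnr
    have hpow1 : B ^ (t + n) ≡ B ^ (1 + r) [MOD E] := pow_modEq_of_modEq hB1 hEdvd hexp
    have hpow2 : B ^ r ≡ B ^ n [MOD E] := pow_modEq_of_modEq hB1 hEdvd hnr.symm
    have hchain : t * B ^ (t + n) + 1 ≡ B ^ n [MOD E] :=
      (((hpow1.mul_left t).add_right 1).trans htLx).trans hpow2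
    have hle : B ^ n ≤ t * B ^ (t + n) + 1 := by
      have h1 : B ^ n ≤ B ^ (t + n) := Nat.pow_le_pow_right hB1 (by omega)
      have h2 : B ^ (t + n) ≤ t * B ^ (t + n) := Nat.le_mul_of_pos_left _ (by omega)
      omega
    have hdvdN : E ∣ t * B ^ (t + n) + 1 - B ^ n := (Nat.modEq_iff_dvd' hle).1 hchain.symm
    -- identify N
    set Nn : ℕ := t * B ^ (t + n) + 1 - B ^ n with hNn
    have hNcast : ((Nn : ℕ) : ℤ) = ((t : ℤ) * (B : ℤ) ^ t - 1) * (B : ℤ) ^ n + 1 := by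
      have : ((Nn : ℕ) : ℤ) = (t : ℤ) * (B : ℤ) ^ (t + n) + 1 - (B : ℤ) ^ n := by
        rw [hNn]
        push_cast [Nat.cast_sub hle]
        ring
      rw [this, pow_add]
      ring
    -- size facts
    have hEsmall : E < Nn := by
      have e1 : E ≤ B ^ d - 1 := Nat.le_of_dvd (by
        have : 2 ≤ B ^ d := by
          calc (2:ℕ) = 2 ^ 1 := by norm_num
          _ ≤ 2 ^ d := Nat.pow_le_pow_right (by norm_num) hd
          _ ≤ B ^ d := Nat.pow_le_pow_left hB d
        omega) hEdvd
      have e2 : B ^ d ≤ B ^ Ψ := Nat.pow_le_pow_right hB1 (Nat.le_of_dvd hΨ hdΨ)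
      have e3 : t < B ^ (t + n) := by
        calc t < 2 ^ t := Nat.lt_two_pow_self
        _ ≤ B ^ t := Nat.pow_le_pow_left hB t
        _ ≤ B ^ (t + n) := Nat.pow_le_pow_right hB1 (by omega)
      have e4 : 2 * B ^ (t + n) ≤ t * B ^ (t + n) := Nat.mul_le_mul_right _ ht2
      have e5 : B ^ n ≤ B ^ (t + n) := Nat.pow_le_pow_right hB1 (by omega)
      omega
    have hN1 : 1 < Nn := by omega
    constructor
    · -- 1 < N over ℤ
      rw [← hNcast]
      exact_mod_cast hN1
    · -- not prime
      intro hpr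
      rw [← hNcast] at hpr
      rw [Int.prime_iff_natAbs_prime] at hpr
      simp only [Int.natAbs_natCast] at hpr
      rcases hpr.eq_one_or_self_of_dvd E hdvdN with h | h
      · omega
      · omega


lemma modEq_self_progression (T M c : ℕ) : T % M + M * c ≡ T [MOD M] := by
  have h1 : T % M + M * c ≡ T % M + 0 [MOD M] := by
    refine (Nat.ModEq.refl (T % M)).add ?_
    exact Nat.modEq_zero_iff_dvd.2 ⟨c, rfl⟩
  simpa using h1.trans (Nat.mod_modEq T M)

/-- Final assembly: given one solution of the congruence system, the set of good `t`
is infinite. -/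
lemma assemble (b : ℤ) (B : ℕ) (hbB : (B : ℤ) = b) (hB : 2 ≤ B) (Ψ : ℕ)
    (hΨ : 0 < Ψ) (L : List (ℕ × ℕ × ℕ))
    (hLd : ∀ x ∈ L, 0 < x.1 ∧ x.1 ∣ Ψ)
    (hLE : ∀ x ∈ L, 1 < x.2.2 ∧ x.2.2 ∣ B ^ x.1 - 1)
    (hcov : ∀ n : ℕ, 0 < n → ∃ x ∈ L, n % x.1 = x.2.1 % x.1)
    (T M : ℕ) (hM : 0 < M)
    (hall : ∀ t : ℕ, t ≡ T [MOD M] →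
      (t ≡ 1 [MOD Ψ] ∧ (∀ x ∈ L, t * B ^ (1 + x.2.1) + 1 ≡ B ^ x.2.1 [MOD x.2.2]) ∧
        (∀ p : ℕ, p.Prime → p ∣ t → ¬ p ∣ B - 1))) :
    {t : ℕ | 0 < t ∧ IsBSierpinski b ((t : ℤ) * b ^ t - 1)}.Infinite := by
  set f : ℕ → ℕ := fun j => T % M + M * (B ^ Ψ + 1 + j) with hf
  have hinj : Function.Injective f := by
    intro a a' ha
    simp only [hf] at ha
    have := Nat.add_left_cancel ha
    have := Nat.eq_of_mul_eq_mul_left hM this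
    omega
  refine Set.infinite_of_injective_forall_mem hinj ?_
  intro j
  set t := f j with ht
  have hmod : t ≡ T [MOD M] := modEq_self_progression T M _
  have hbig : B ^ Ψ ≤ t := by
    have h1 : M * (B ^ Ψ + 1 + j) ≥ 1 * (B ^ Ψ + 1 + j) := Nat.mul_le_mul_right _ hM
    simp only [ht, hf]
    omega
  obtain ⟨h1, h2, h3⟩ := hall t hmod
  exact master b B hbB hB Ψ hΨ L hLd hLE hcov t h1 h2 h3 hbig

lemma prime_dvd_ordCompl {p q n : ℕ} (hp : p.Prime) (hq : q.Prime) (hne : p ≠ q)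
    (h : p ∣ n) : p ∣ ordCompl[q] n := by
  have hcop : Nat.Coprime p (q ^ n.factorization q) :=
    Nat.Coprime.pow_right _ ((Nat.coprime_primes hp hq).2 hne)
  refine hcop.dvd_of_dvd_mul_left ?_
  rw [Nat.ordProj_mul_ordCompl_eq_self]
  exact h


lemma case_two :
    {t : ℕ | 0 < t ∧ IsBSierpinski 2 ((t : ℤ) * 2 ^ t - 1)}.Infinite := by
  refine assemble 2 2 (by norm_num) (le_refl 2) 24 (by norm_num)
    [(2,1,3),(3,0,7),(4,2,5),(8,4,17),(12,8,13),(24,16,241)]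
    ?_ ?_ ?_ 7058401 44739240 (by norm_num) ?_
  · intro x hx; fin_cases hx <;> norm_num
  · intro x hx; fin_cases hx <;> norm_num
  · intro n hn
    have key : ∀ ρ, ρ < 24 → (ρ % 2 = 1 ∨ ρ % 3 = 0 ∨ ρ % 4 = 2 ∨ ρ % 8 = 4 ∨
        ρ % 12 = 8 ∨ ρ % 24 = 16) := by decide
    have h24 : n % 24 < 24 := Nat.mod_lt _ (by norm_num)
    rcases key (n % 24) h24 with h | h | h | h | h | h
    · refine ⟨(2,1,3), by simp, ?_⟩
      have e : n % 2 = n % 24 % 2 := (Nat.mod_mod_of_dvd n (by norm_num)).symm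
      show n % 2 = 1 % 2
      omega
    · refine ⟨(3,0,7), by simp, ?_⟩
      have e : n % 3 = n % 24 % 3 := (Nat.mod_mod_of_dvd n (by norm_num)).symm
      show n % 3 = 0 % 3
      omega
    · refine ⟨(4,2,5), by simp, ?_⟩
      have e : n % 4 = n % 24 % 4 := (Nat.mod_mod_of_dvd n (by norm_num)).symm
      show n % 4 = 2 % 4
      omega
    · refine ⟨(8,4,17), by simp, ?_⟩
      have e : n % 8 = n % 24 % 8 := (Nat.mod_mod_of_dvd n (by norm_num)).symm
      show n % 8 = 4 % 8
      omega
    · refine ⟨(12,8,13), by simp, ?_⟩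
      have e : n % 12 = n % 24 % 12 := (Nat.mod_mod_of_dvd n (by norm_num)).symm
      show n % 12 = 8 % 12
      omega
    · refine ⟨(24,16,241), by simp, ?_⟩
      simpa using h
  · intro t hmod
    refine ⟨?_, ?_, ?_⟩
    · exact (Nat.ModEq.of_dvd (by norm_num) hmod).trans (by norm_num [Nat.ModEq])
    · intro x hx
      fin_cases hx
      · exact (((Nat.ModEq.of_dvd (by norm_num : (3:ℕ) ∣ 44739240) hmod).mul_right _).add_right 1).trans
          (by norm_num [Nat.ModEq])
      · exact (((Nat.ModEq.of_dvd (by norm_num : (7:ℕ) ∣ 44739240) hmod).mul_right _).add_right 1).trans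
          (by norm_num [Nat.ModEq])
      · exact (((Nat.ModEq.of_dvd (by norm_num : (5:ℕ) ∣ 44739240) hmod).mul_right _).add_right 1).trans
          (by norm_num [Nat.ModEq])
      · exact (((Nat.ModEq.of_dvd (by norm_num : (17:ℕ) ∣ 44739240) hmod).mul_right _).add_right 1).trans
          (by norm_num [Nat.ModEq])
      · exact (((Nat.ModEq.of_dvd (by norm_num : (13:ℕ) ∣ 44739240) hmod).mul_right _).add_right 1).trans
          (by norm_num [Nat.ModEq])
      · exact (((Nat.ModEq.of_dvd (by norm_num : (241:ℕ) ∣ 44739240) hmod).mul_right _).add_right 1).trans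
          (by norm_num [Nat.ModEq])
    · intro p hp hpt hpB
      have := Nat.dvd_one.1 (by simpa using hpB)
      have := hp.one_lt
      omega


/-- For each class, a residue class for `t` making the key congruence hold. -/
lemma class_res {B : ℕ} (hB1 : 1 ≤ B) (c : GC B) :
    ∃ a, ∀ t, t ≡ a [MOD c.E] → t * B ^ (1 + c.r) + 1 ≡ B ^ c.r [MOD c.E] := by
  have hcop : Nat.Coprime (B ^ (1 + c.r)) c.E :=
    (coprime_of_dvd_pow_sub_one hB1 c.hd c.dvdE).pow_left _
  obtain ⟨a, ha⟩ := exists_res c.hE hcop (B ^ c.r - 1)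
  refine ⟨a, fun t ht => ?_⟩
  have h1 : t * B ^ (1 + c.r) ≡ a * B ^ (1 + c.r) [MOD c.E] := ht.mul_right _
  have h2 := (h1.trans ha).add_right 1
  rwa [Nat.sub_add_cancel (Nat.one_le_pow _ _ hB1)] at h2

lemma case_ge3 (b : ℤ) (hb : 3 ≤ b) :
    {t : ℕ | 0 < t ∧ IsBSierpinski b ((t : ℤ) * b ^ t - 1)}.Infinite := by
  have hbB : ((b.toNat : ℤ)) = b := Int.toNat_of_nonneg (by omega)
  set B := b.toNat with hBdef
  have hB : 3 ≤ B := by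
    have h3 : (3:ℤ) ≤ (B:ℤ) := by rw [hbB]; exact hb
    exact_mod_cast h3
  have hB2 : 2 ≤ B := by omega
  have hB1 : 1 ≤ B := by omega
  -- the twelve covering classes
  set c1 : GC B := mkA B 1 0 hB (by norm_num) (by
    intro g hg hne; have := Nat.le_of_dvd (by norm_num) hg; interval_cases g <;> omega) with hc1
  set c2 : GC B := mkA B 3 4 hB (by norm_num) (by
    intro g hg hne; have := Nat.le_of_dvd (by norm_num) hg; interval_cases g <;> omega) with hc2
  set c3 : GC B := mkB B 1 1 hB (by norm_num) (by
    intro g hg hne; have := Nat.le_of_dvd (by norm_num) hg; interval_cases g <;> omega) with hc3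
  set c4 : GC B := mkB B 2 7 hB (by norm_num) (by
    intro g hg hne; have := Nat.le_of_dvd (by norm_num) hg; interval_cases g <;> omega) with hc4
  set c5 : GC B := mkB B 4 11 hB (by norm_num) (by
    intro g hg hne; have := Nat.le_of_dvd (by norm_num) hg; interval_cases g <;> omega) with hc5
  set c6 : GC B := mkC B 1 2 hB (by norm_num) (by
    intro g hg hne; have := Nat.le_of_dvd (by norm_num) hg; interval_cases g <;> omega) with hc6
  set c7 : GC B := mkC B 2 10 hB (by norm_num) (by
    intro g hg hne; have := Nat.le_of_dvd (by norm_num) hg; interval_cases g <;> omega) with hc7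
  set c8 : GC B := mkC B 3 10 hB (by norm_num) (by
    intro g hg hne; have := Nat.le_of_dvd (by norm_num) hg; interval_cases g <;> omega) with hc8
  set c9 : GC B := mkC B 4 11 hB (by norm_num) (by
    intro g hg hne; have := Nat.le_of_dvd (by norm_num) hg; interval_cases g <;> omega) with hc9
  set c10 : GC B := mkC B 6 16 hB (by norm_num) (by
    intro g hg hne; have := Nat.le_of_dvd (by norm_num) hg; interval_cases g <;> omega) with hc10
  set c11 : GC B := mkC B 8 19 hB (by norm_num) (by
    intro g hg hne; have := Nat.le_of_dvd (by norm_num) hg; interval_cases g <;> omega) with hc11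
  set c12 : GC B := mkC B 12 19 hB (by norm_num) (by
    intro g hg hne; have := Nat.le_of_dvd (by norm_num) hg; interval_cases g <;> omega) with hc12
  set csL : List (GC B) := [c1,c2,c3,c4,c5,c6,c7,c8,c9,c10,c11,c12] with hcsL
  -- residues
  choose aF haF using fun c : GC B => class_res hB1 c
  -- the auxiliary modulus F
  set X : ℕ := ordCompl[3] (B - 1) with hX
  set F : ℕ := ordCompl[2] X with hF
  have hBm1 : B - 1 ≠ 0 := by omega
  have hX0 : X ≠ 0 := (Nat.ordCompl_pos 3 hBm1).ne'
  have hF0 : 0 < F := Nat.ordCompl_pos 2 hX0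
  have hFdvd : F ∣ B - 1 := (Nat.ordCompl_dvd X 2).trans (Nat.ordCompl_dvd (B-1) 3)
  have hFall : ∀ p, p.Prime → p ∣ B - 1 → p ≠ 2 → p ≠ 3 → p ∣ F := fun p hp hpd h2 h3 =>
    prime_dvd_ordCompl hp Nat.prime_two h2 (prime_dvd_ordCompl hp Nat.prime_three h3 hpd)
  set Q : ℕ := 144 * F with hQ
  have hQ0 : 0 < Q := by positivity
  have hQE : ∀ c : GC B, Nat.Coprime Q c.E := by
    intro c
    refine Nat.Coprime.mul ?_ ?_
    · have h6 : Nat.Coprime c.E (6 ^ 4) := c.cop6.pow_right 4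
      exact (Nat.Coprime.coprime_dvd_right (by norm_num) h6).symm
    · have hg2 : Nat.gcd F c.E ∣ c.E := Nat.gcd_dvd_right _ _
      have hg1 : Nat.gcd F c.E ∣ F := Nat.gcd_dvd_left _ _
      exact c.coprime_base_sub_one hg2 (hg1.trans hFdvd)
  -- pairwise coprimality of the class moduli
  have hpwd : List.Pairwise (fun c c' : GC B => c.d ≠ c'.d) csL := by
    rw [hcsL]
    simp only [List.pairwise_cons, List.forall_mem_cons, List.forall_mem_nil,
      and_true]
    simp only [hc1, hc2, hc3, hc4, hc5, hc6, hc7, hc8, hc9, hc10, hc11, hc12,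
      mkA_d, mkB_d, mkC_d]
    norm_num
  have hpwE : List.Pairwise (fun p q : ℕ × ℕ => Nat.Coprime p.1 q.1)
      (csL.map (fun c => (c.E, aF c))) := by
    refine List.Pairwise.map _ ?_ hpwd
    intro c c' h
    exact GC.coprimeE hB2 c c' h
  obtain ⟨TE, hTE⟩ := list_crt _ hpwE
  set lE := csL.map (fun c => (c.E, aF c)) with hlE
  set ME : ℕ := (lE.map Prod.fst).prod with hME
  have hEmem : ∀ c ∈ csL, c.E ∣ ME := by
    intro c hc
    refine List.dvd_prod ?_
    rw [hlE]
    rw [List.map_map]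
    exact List.mem_map_of_mem hc
  have hQME : Nat.Coprime Q ME := by
    refine coprime_list_prod ?_
    intro m hm
    rw [hlE, List.map_map, List.mem_map] at hm
    obtain ⟨c, hc, rfl⟩ := hm
    exact hQE c
  obtain ⟨T, hT1, hT2⟩ := Nat.chineseRemainder hQME 1 TE
  have hMEpos : 0 < ME := by
    rw [hME]
    refine List.prod_pos ?_
    intro a ha
    rw [hlE, List.map_map, List.mem_map] at ha
    obtain ⟨c, hc, rfl⟩ := ha
    show 0 < c.E
    have := c.hE
    omega
  refine assemble b B hbB hB2 144 (by norm_num)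
    [(3,0,c1.E),(9,4,c2.E),(4,1,c3.E),(8,7,c4.E),(16,11,c5.E),(6,2,c6.E),(12,10,c7.E),
     (18,10,c8.E),(24,11,c9.E),(36,16,c10.E),(48,19,c11.E),(72,19,c12.E)]
    ?_ ?_ ?_ T (Q * ME) (Nat.mul_pos hQ0 hMEpos) ?_
  · intro x hx
    simp only [List.mem_cons, List.not_mem_nil, or_false] at hx
    rcases hx with rfl|rfl|rfl|rfl|rfl|rfl|rfl|rfl|rfl|rfl|rfl|rfl <;> norm_num
  · intro x hx
    simp only [List.mem_cons, List.not_mem_nil, or_false] at hx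
    rcases hx with rfl|rfl|rfl|rfl|rfl|rfl|rfl|rfl|rfl|rfl|rfl|rfl
    · exact ⟨c1.hE, c1.dvdE⟩
    · exact ⟨c2.hE, c2.dvdE⟩
    · exact ⟨c3.hE, c3.dvdE⟩
    · exact ⟨c4.hE, c4.dvdE⟩
    · exact ⟨c5.hE, c5.dvdE⟩
    · exact ⟨c6.hE, c6.dvdE⟩
    · exact ⟨c7.hE, c7.dvdE⟩
    · exact ⟨c8.hE, c8.dvdE⟩
    · exact ⟨c9.hE, c9.dvdE⟩
    · exact ⟨c10.hE, c10.dvdE⟩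
    · exact ⟨c11.hE, c11.dvdE⟩
    · exact ⟨c12.hE, c12.dvdE⟩
  · -- covering
    intro n hn
    have key : ∀ ρ, ρ < 144 → (ρ % 3 = 0 ∨ ρ % 9 = 4 ∨ ρ % 4 = 1 ∨ ρ % 8 = 7 ∨
        ρ % 16 = 11 ∨ ρ % 6 = 2 ∨ ρ % 12 = 10 ∨ ρ % 18 = 10 ∨ ρ % 24 = 11 ∨
        ρ % 36 = 16 ∨ ρ % 48 = 19 ∨ ρ % 72 = 19) := by decide
    have h144 : n % 144 < 144 := Nat.mod_lt _ (by norm_num)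
    have e3 : n % 3 = n % 144 % 3 := (Nat.mod_mod_of_dvd n (by norm_num)).symm
    have e9 : n % 9 = n % 144 % 9 := (Nat.mod_mod_of_dvd n (by norm_num)).symm
    have e4 : n % 4 = n % 144 % 4 := (Nat.mod_mod_of_dvd n (by norm_num)).symm
    have e8 : n % 8 = n % 144 % 8 := (Nat.mod_mod_of_dvd n (by norm_num)).symm
    have e16 : n % 16 = n % 144 % 16 := (Nat.mod_mod_of_dvd n (by norm_num)).symm
    have e6 : n % 6 = n % 144 % 6 := (Nat.mod_mod_of_dvd n (by norm_num)).symm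
    have e12 : n % 12 = n % 144 % 12 := (Nat.mod_mod_of_dvd n (by norm_num)).symm
    have e18 : n % 18 = n % 144 % 18 := (Nat.mod_mod_of_dvd n (by norm_num)).symm
    have e24 : n % 24 = n % 144 % 24 := (Nat.mod_mod_of_dvd n (by norm_num)).symm
    have e36 : n % 36 = n % 144 % 36 := (Nat.mod_mod_of_dvd n (by norm_num)).symm
    have e48 : n % 48 = n % 144 % 48 := (Nat.mod_mod_of_dvd n (by norm_num)).symm
    have e72 : n % 72 = n % 144 % 72 := (Nat.mod_mod_of_dvd n (by norm_num)).symm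
    rcases key (n % 144) h144 with h|h|h|h|h|h|h|h|h|h|h|h
    · refine ⟨(3,0,c1.E), by simp, ?_⟩
      show n % 3 = 0 % 3
      omega
    · refine ⟨(9,4,c2.E), by simp, ?_⟩
      show n % 9 = 4 % 9
      omega
    · refine ⟨(4,1,c3.E), by simp, ?_⟩
      show n % 4 = 1 % 4
      omega
    · refine ⟨(8,7,c4.E), by simp, ?_⟩
      show n % 8 = 7 % 8
      omega
    · refine ⟨(16,11,c5.E), by simp, ?_⟩
      show n % 16 = 11 % 16
      omega
    · refine ⟨(6,2,c6.E), by simp, ?_⟩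
      show n % 6 = 2 % 6
      omega
    · refine ⟨(12,10,c7.E), by simp, ?_⟩
      show n % 12 = 10 % 12
      omega
    · refine ⟨(18,10,c8.E), by simp, ?_⟩
      show n % 18 = 10 % 18
      omega
    · refine ⟨(24,11,c9.E), by simp, ?_⟩
      show n % 24 = 11 % 24
      omega
    · refine ⟨(36,16,c10.E), by simp, ?_⟩
      show n % 36 = 16 % 36
      omega
    · refine ⟨(48,19,c11.E), by simp, ?_⟩
      show n % 48 = 19 % 48
      omega
    · refine ⟨(72,19,c12.E), by simp, ?_⟩
      show n % 72 = 19 % 72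
      omega
  · -- the congruence conditions along the progression
    intro t hmod
    have hQdvd : Q ∣ Q * ME := dvd_mul_right _ _
    have htQ : t ≡ 1 [MOD Q] := (hmod.of_dvd hQdvd).trans hT1
    have ht144 : t ≡ 1 [MOD 144] := htQ.of_dvd (dvd_mul_right 144 F)
    have htF : t ≡ 1 [MOD F] := htQ.of_dvd (dvd_mul_left F 144)
    have hclass : ∀ c ∈ csL, t ≡ aF c [MOD c.E] := by
      intro c hc
      have h1 : c.E ∣ ME := hEmem c hc
      have h2 : c.E ∣ Q * ME := h1.mul_left Q
      exact ((hmod.of_dvd h2).trans (hT2.of_dvd h1)).trans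
        (hTE _ (by rw [hlE]; exact List.mem_map_of_mem hc))
    refine ⟨ht144, ?_, ?_⟩
    · intro x hx
      simp only [List.mem_cons, List.not_mem_nil, or_false] at hx
      rcases hx with rfl|rfl|rfl|rfl|rfl|rfl|rfl|rfl|rfl|rfl|rfl|rfl
      · exact haF c1 t (hclass c1 (by simp [hcsL]))
      · exact haF c2 t (hclass c2 (by simp [hcsL]))
      · exact haF c3 t (hclass c3 (by simp [hcsL]))
      · exact haF c4 t (hclass c4 (by simp [hcsL]))
      · exact haF c5 t (hclass c5 (by simp [hcsL]))
      · exact haF c6 t (hclass c6 (by simp [hcsL]))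
      · exact haF c7 t (hclass c7 (by simp [hcsL]))
      · exact haF c8 t (hclass c8 (by simp [hcsL]))
      · exact haF c9 t (hclass c9 (by simp [hcsL]))
      · exact haF c10 t (hclass c10 (by simp [hcsL]))
      · exact haF c11 t (hclass c11 (by simp [hcsL]))
      · exact haF c12 t (hclass c12 (by simp [hcsL]))
    · intro p hp hpt hpB
      by_cases hp2 : p = 2
      · subst hp2
        have h2 : t % 2 = 1 % 2 := ht144.of_dvd (by norm_num)
        obtain ⟨u, rfl⟩ := hpt
        have h0 : 2 * u % 2 = 0 := Nat.mul_mod_right 2 u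
        omega
      by_cases hp3 : p = 3
      · subst hp3
        have h3 : t % 3 = 1 % 3 := ht144.of_dvd (by norm_num)
        obtain ⟨u, rfl⟩ := hpt
        have h0 : 3 * u % 3 = 0 := Nat.mul_mod_right 3 u
        omega
      · have hpF : p ∣ F := hFall p hp hpB hp2 hp3
        have h1 : t % p = 1 % p := htF.of_dvd hpF
        have hp1 : 1 % p = 1 := Nat.mod_eq_of_lt hp.one_lt
        obtain ⟨u, rfl⟩ := hpt
        have h0 : p * u % p = 0 := Nat.mul_mod_right p u
        omega


end WoodallSierp

theorem infinitely_many_woodall_b_sierpinski (b : ℤ) (hb : 2 ≤ b) :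
    {t : ℕ | 0 < t ∧ IsBSierpinski b ((t : ℤ) * b ^ t - 1)}.Infinite := by
  rcases eq_or_lt_of_le hb with h | h
  · subst h
    exact WoodallSierp.case_two
  · exact WoodallSierp.case_ge3 b (by omega)
end

section
/- For any integer b ≥ 2, there exist infinitely many positive integers t such that the b-Woodall number t·b^t − 1 is a b-Riesel number. -/
namespace WR

structure Desc (B : ℕ) where
  N : ℕ
  a : ℕ
  d : ℕ
  hN1 : 1 < N
  hdvd : N ∣ B ^ d - 1
  h144 : d ∣ 144
  had : a < d
  hd2 : 2 ≤ d
  hord : ∀ p : ℕ, p.Prime → p ∣ N → orderOf (B : ZMod p) = d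
  hno2 : ¬ 2 ∣ N
  hno3 : ¬ 3 ∣ N

lemma isComposite_of_divisor (m : ℤ) (N : ℕ) (h1 : 1 < N) (hdvd : (N:ℤ) ∣ m)
    (hlt : (N:ℤ) < m) : IsComposite m := by
  have hm1 : 1 < m := lt_trans (by exact_mod_cast h1) hlt
  refine ⟨hm1, fun hp => ?_⟩
  have hnat : Nat.Prime m.natAbs := Int.prime_iff_natAbs_prime.mp hp
  have hdN : N ∣ m.natAbs := Int.natCast_dvd_natCast.mp (by
    rwa [Int.natAbs_of_nonneg (by linarith : (0:ℤ) ≤ m)])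
  rcases (Nat.Prime.eq_one_or_self_of_dvd hnat N hdN) with h | h
  · omega
  · have hmeq : (m.natAbs : ℤ) = m := Int.natAbs_of_nonneg (by linarith)
    rw [h, hmeq] at hlt
    omega

lemma coprime_of_no_common_prime {a b : ℕ}
    (h : ∀ p : ℕ, p.Prime → p ∣ a → p ∣ b → False) : Nat.Coprime a b := by
  by_contra hg
  have hg1 : Nat.gcd a b ≠ 1 := hg
  have hp := Nat.minFac_prime hg1
  exact h _ hp ((Nat.minFac_dvd _).trans (Nat.gcd_dvd_left a b))
    ((Nat.minFac_dvd _).trans (Nat.gcd_dvd_right a b))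

def covτ (B : ℕ) (e : Desc B) : ℕ := B ^ (e.d - 1 - e.a) + B ^ (e.d - 1)

theorem master (b : ℤ) (hb : 2 ≤ b) (B : ℕ) (hBb : (B:ℤ) = b)
    (cov : List (Desc B))
    (hdistinct : cov.Pairwise (fun x y => x.d ≠ y.d))
    (hcover : ∀ n : ℕ, (∃ e ∈ cov, n % e.d = e.a) ∨ (3 ∣ B + 1 ∧ 2 ∣ n)) :
    {t : ℕ | 0 < t ∧ IsBRiesel b ((t : ℤ) * b ^ t - 1)}.Infinite := by
  have hB2 : 2 ≤ B := by
    have : ((2:ℕ):ℤ) ≤ (B:ℤ) := by rw [hBb]; exact_mod_cast hb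
    exact_mod_cast this
  set L : ℕ := Nat.lcm 144 (B - 1) with hL_def
  have hL0 : 0 < L := Nat.lcm_pos (by norm_num) (by omega)
  have h144L : (144:ℕ) ∣ L := Nat.dvd_lcm_left _ _
  have hB1L : B - 1 ∣ L := Nat.dvd_lcm_right _ _
  have hcopL : ∀ e : Desc B, e ∈ cov → Nat.Coprime L e.N := by
    intro e _
    refine Nat.Coprime.symm (coprime_of_no_common_prime ?_)
    intro p hp hpN hpL
    have hpMul : p ∣ 144 * (B - 1) := hpL.trans (Nat.lcm_dvd_mul _ _)
    rcases hp.dvd_mul.mp hpMul with hp144 | hpB1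
    · have h144eq : (144:ℕ) = 2^4 * 3^2 := by norm_num
      rw [h144eq] at hp144
      rcases hp.dvd_mul.mp hp144 with h2 | h3
      · have hp2 : p = 2 := (Nat.prime_dvd_prime_iff_eq hp Nat.prime_two).mp
          (hp.dvd_of_dvd_pow h2)
        exact e.hno2 (hp2 ▸ hpN)
      · have hp3 : p = 3 := (Nat.prime_dvd_prime_iff_eq hp Nat.prime_three).mp
          (hp.dvd_of_dvd_pow h3)
        exact e.hno3 (hp3 ▸ hpN)
    · have hord := e.hord p hp hpN
      haveI : Fact p.Prime := ⟨hp⟩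
      have hcast : (B : ZMod p) = 1 := by
        have h0 : ((B - 1 : ℕ) : ZMod p) = 0 := (ZMod.natCast_eq_zero_iff _ p).mpr hpB1
        rw [Nat.cast_sub (by omega : 1 ≤ B)] at h0
        push_cast at h0
        linear_combination h0
      rw [hcast, orderOf_one] at hord
      have := e.hd2
      omega
  have hcopNN : ∀ e f : Desc B, e.d ≠ f.d → Nat.Coprime e.N f.N := by
    intro e f hdf
    refine coprime_of_no_common_prime ?_
    intro p hp hpe hpf
    exact hdf ((e.hord p hp hpe).symm.trans (f.hord p hp hpf))
  set crtList : List (ℕ × ℕ) := (L, 1) :: cov.map (fun e => (e.N, covτ B e)) with hcrt_def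
  have hpairwise : crtList.Pairwise (Function.onFun Nat.Coprime Prod.fst) := by
    rw [hcrt_def, List.pairwise_cons]
    constructor
    · intro y hy
      obtain ⟨e, he, rfl⟩ := List.mem_map.mp hy
      exact hcopL e he
    · exact List.Pairwise.map _ (fun e f hdf => hcopNN e f hdf) hdistinct
  obtain ⟨x, hx⟩ := Nat.chineseRemainderOfList Prod.snd Prod.fst crtList hpairwise
  set P : ℕ := (crtList.map Prod.fst).prod with hP_def
  have hLP : L ∣ P := List.dvd_prod (by rw [hcrt_def]; simp)
  have hNP : ∀ e : Desc B, e ∈ cov → e.N ∣ P := by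
    intro e he
    refine List.dvd_prod ?_
    rw [hcrt_def]
    simp only [List.map_cons, List.mem_cons]
    right
    refine List.mem_map.mpr ⟨(e.N, covτ B e), List.mem_map.mpr ⟨e, he, rfl⟩, rfl⟩
  have hP0 : 0 < P := by
    rw [hP_def]
    refine List.prod_pos ?_
    intro i hi
    simp only [hcrt_def, List.map_cons, List.mem_cons] at hi
    rcases hi with rfl | hi
    · exact hL0
    · obtain ⟨y, hy, rfl⟩ := List.mem_map.mp hi
      obtain ⟨e, he, rfl⟩ := List.mem_map.mp hy
      exact lt_trans one_pos e.hN1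
  have h145P : 145 ≤ 145 * P := Nat.le_mul_of_pos_right _ hP0
  refine Set.infinite_of_injective_forall_mem
    (f := fun j : ℕ => x + (j+1) * (145 * P)) ?_ ?_
  · intro j j' hjj
    simp only at hjj
    have h0 : 0 < 145 * P := by omega
    have : (j+1) * (145 * P) = (j'+1) * (145 * P) := by omega
    have := Nat.eq_of_mul_eq_mul_right h0 this
    omega
  intro j
  simp only [Set.mem_setOf_eq]
  set t : ℕ := x + (j+1) * (145 * P) with ht_def
  have hstep : 145 * P ≤ (j+1) * (145*P) := Nat.le_mul_of_pos_left _ (by omega)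
  have ht145 : 145 ≤ t := by omega
  have htmod : ∀ M : ℕ, M ∣ P → ∀ r : ℕ, (M, r) ∈ crtList → t ≡ r [MOD M] := by
    intro M hMP r hmem
    have hdvd : M ∣ (j+1) * (145 * P) := Dvd.dvd.mul_left (Dvd.dvd.mul_left hMP 145) (j+1)
    have h1 : t ≡ x [MOD M] := by
      calc t = x + (j+1) * (145 * P) := ht_def
      _ ≡ x + 0 [MOD M] := Nat.ModEq.add_left x (Nat.modEq_zero_iff_dvd.mpr hdvd)
      _ = x := by omega
    exact h1.trans (hx (M, r) hmem)
  have htL : t ≡ 1 [MOD L] := htmod L hLP 1 (by rw [hcrt_def]; exact List.mem_cons_self)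
  have ht144 : t ≡ 1 [MOD 144] := htL.of_dvd h144L
  have htB1 : t ≡ 1 [MOD B - 1] := htL.of_dvd hB1L
  have htau : ∀ e : Desc B, e ∈ cov → t ≡ covτ B e [MOD e.N] := by
    intro e he
    exact htmod e.N (hNP e he) (covτ B e)
      (by rw [hcrt_def]
          exact List.mem_cons_of_mem _ (List.mem_map.mpr ⟨e, he, rfl⟩))
  have ht0 : 0 < t := by omega
  refine ⟨ht0, ?_, ?_, ?_⟩
  · -- 0 < k
    have h1 : (1:ℤ) ≤ (t:ℤ) := by exact_mod_cast Nat.one_le_iff_ne_zero.mpr (by omega)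
    have h2 : (2:ℤ) ≤ b ^ t := by
      calc (2:ℤ) = 2^1 := (pow_one 2).symm
      _ ≤ 2^t := pow_le_pow_right₀ (by norm_num) (by omega)
      _ ≤ b^t := pow_le_pow_left₀ (by norm_num) hb t
    nlinarith
  · -- gcd
    have hdvdt1 : ((B:ℤ) - 1) ∣ (t:ℤ) - 1 := by
      have hd := (htB1.dvd : ((B-1:ℕ):ℤ) ∣ ((1:ℕ):ℤ) - (t:ℕ))
      have hc : ((B-1:ℕ):ℤ) = (B:ℤ) - 1 := by
        push_cast [Nat.cast_sub (by omega : 1 ≤ B)]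
        ring
      rw [hc] at hd
      have := dvd_neg.mpr hd
      simpa using this
    rw [← hBb] at *
    have hpowdvd : ((B:ℤ) - 1) ∣ (B:ℤ)^t - 1 := by
      have := sub_dvd_pow_sub_pow (B:ℤ) 1 t
      simpa using this
    obtain ⟨u, hu⟩ := dvd_add (hdvdt1.mul_right ((B:ℤ)^t)) hpowdvd
    rw [← Int.isCoprime_iff_gcd_eq_one]
    exact ⟨-1, u, by linear_combination -hu⟩
  · -- composite
    intro n hn
    have hbn2 : (2:ℤ) ≤ b ^ n := by
      calc (2:ℤ) = 2^1 := (pow_one 2).symm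
      _ ≤ 2^n := pow_le_pow_right₀ (by norm_num) (by omega)
      _ ≤ b^n := pow_le_pow_left₀ (by norm_num) hb n
    have h1t : (1:ℤ) ≤ (t:ℤ) := by exact_mod_cast Nat.one_le_iff_ne_zero.mpr (by omega)
    have hB144 : (2:ℤ) ≤ (B:ℤ)^144 := by
      calc (2:ℤ) = 2^1 := (pow_one 2).symm
      _ ≤ 2^144 := pow_le_pow_right₀ (by norm_num) (by norm_num)
      _ ≤ (B:ℤ)^144 := pow_le_pow_left₀ (by norm_num) (by rw [hBb]; linarith) 144
    have hk_big : (B:ℤ)^144 < (t:ℤ) * b ^ t - 1 := by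
      have h2 : b^145 ≤ b^t := pow_le_pow_right₀ (by linarith) ht145
      have h5 : b^145 = b^144 * b := by ring
      have h6 : (B:ℤ)^144 * 2 ≤ (B:ℤ)^144 * b := by
        apply mul_le_mul_of_nonneg_left hb (by positivity)
      have h7 : (1:ℤ) * b^t ≤ (t:ℤ) * b^t := by
        apply mul_le_mul_of_nonneg_right h1t (by positivity)
      rw [hBb] at h6 hB144 ⊢
      linarith
    have hm_big : (B:ℤ)^144 + 1 < ((t:ℤ) * b ^ t - 1) * b ^ n - 1 := by
      have hkpos : (1:ℤ) ≤ (t:ℤ) * b ^ t - 1 := by nlinarith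
      nlinarith
    rcases hcover n with ⟨e, he, hna⟩ | ⟨h3B, hn2⟩
    · refine isComposite_of_divisor _ e.N e.hN1 ?_ ?_
      · rw [← ZMod.intCast_zmod_eq_zero_iff_dvd]
        have hβd : ((B : ZMod e.N))^e.d = 1 := by
          have h0 : ((B^e.d - 1 : ℕ) : ZMod e.N) = 0 :=
            (ZMod.natCast_eq_zero_iff _ _).mpr e.hdvd
          rw [Nat.cast_sub (Nat.one_le_pow _ _ (by omega))] at h0
          push_cast at h0
          linear_combination h0
        obtain ⟨s, hs⟩ : ∃ s, t = e.d * s + 1 := by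
          have h1 : t % e.d = 1 % e.d := htL.of_dvd (e.h144.trans h144L)
          have h2 : (1:ℕ) % e.d = 1 := Nat.mod_eq_of_lt (by have := e.hd2; omega)
          have h3 := Nat.div_add_mod t e.d
          exact ⟨t / e.d, by omega⟩
        obtain ⟨q, hq⟩ : ∃ q, n = e.d * q + e.a :=
          ⟨n / e.d, by have := Nat.div_add_mod n e.d; omega⟩
        have htZ : ((t:ℕ) : ZMod e.N) = (B:ZMod e.N)^(e.d-1-e.a) + (B:ZMod e.N)^(e.d-1) := by
          have hcc := (ZMod.natCast_eq_natCast_iff _ _ _).mpr (htau e he)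
          rw [hcc]
          unfold covτ
          push_cast
          ring
        push_cast [← hBb]
        rw [htZ, hs, hq]
        have hpow1 : (B:ZMod e.N)^(e.d*s+1) = (B:ZMod e.N) := by
          rw [pow_add, pow_mul, hβd, one_pow, one_mul, pow_one]
        have hpow2 : (B:ZMod e.N)^(e.d*q+e.a) = (B:ZMod e.N)^e.a := by
          rw [pow_add, pow_mul, hβd, one_pow, one_mul]
        rw [hpow1, hpow2]
        have key1 : (B:ZMod e.N)^(e.d-1-e.a) * ((B:ZMod e.N) * (B:ZMod e.N)^e.a) = 1 := by
          have hsum : (e.d-1-e.a) + (1 + e.a) = e.d := by have := e.had; have := e.hd2; omega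
          calc (B:ZMod e.N)^(e.d-1-e.a) * ((B:ZMod e.N) * (B:ZMod e.N)^e.a)
              = (B:ZMod e.N)^((e.d-1-e.a) + (1 + e.a)) := by rw [pow_add, pow_add, pow_one]
          _ = 1 := by rw [hsum, hβd]
        have key2 : (B:ZMod e.N) * (B:ZMod e.N)^(e.d-1) = 1 := by
          have hsum : (1 + (e.d - 1)) = e.d := by have := e.hd2; omega
          calc (B:ZMod e.N) * (B:ZMod e.N)^(e.d-1) = (B:ZMod e.N)^(1 + (e.d-1)) := by
                rw [pow_add, pow_one]
          _ = 1 := by rw [hsum, hβd]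
        linear_combination key1 + (B:ZMod e.N)^e.a * key2
      · have hBd4 : 4 ≤ B^e.d := by
          calc (4:ℕ) = 2^2 := by norm_num
          _ ≤ B^2 := Nat.pow_le_pow_left hB2 2
          _ ≤ B^e.d := Nat.pow_le_pow_right (by omega) e.hd2
        have hNle : e.N ≤ B^144 := by
          have h1 : e.N ≤ B^e.d - 1 := Nat.le_of_dvd (by omega) e.hdvd
          have h2 : B^e.d ≤ B^144 := Nat.pow_le_pow_right (by omega)
            (Nat.le_of_dvd (by norm_num) e.h144)
          omega
        have : (e.N : ℤ) ≤ (B:ℤ)^144 := by exact_mod_cast hNle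
        linarith
    · refine isComposite_of_divisor _ 3 (by norm_num) ?_ ?_
      · rw [← ZMod.intCast_zmod_eq_zero_iff_dvd]
        have hB3 : ((B:ℕ) : ZMod 3) = -1 := by
          have h0 : ((B+1 : ℕ) : ZMod 3) = 0 := (ZMod.natCast_eq_zero_iff _ _).mpr h3B
          push_cast at h0
          linear_combination h0
        have ht3 : ((t:ℕ) : ZMod 3) = 1 := by
          have hcc := (ZMod.natCast_eq_natCast_iff t 1 3).mpr (ht144.of_dvd (by norm_num))
          simpa using hcc
        have htodd : Odd t := by
          have h := ht144.of_dvd (by norm_num : (2:ℕ) ∣ 144)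
          rw [Nat.odd_iff]
          simpa [Nat.ModEq] using h
        push_cast [← hBb]
        obtain ⟨c, rfl⟩ := hn2
        have hneven : Even (2*c) := ⟨c, by ring⟩
        rw [hB3, ht3, htodd.neg_one_pow, hneven.neg_one_pow]
        decide
      · push_cast
        linarith

lemma one_lt_ordCompl {p E : ℕ} (hp : p.Prime) (h2 : ¬ p^2 ∣ E) (hgt : p < E) :
    1 < ordCompl[p] E := by
  have hE0 : E ≠ 0 := by omega
  have hv : E.factorization p ≤ 1 := by
    by_contra h
    exact h2 ((Nat.Prime.pow_dvd_iff_le_factorization hp hE0).mpr (by omega))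
  have key : p ^ E.factorization p * ordCompl[p] E = E := Nat.ordProj_mul_ordCompl_eq_self E p
  have hpow : p ^ E.factorization p ≤ p := by
    calc p ^ E.factorization p ≤ p ^ 1 := Nat.pow_le_pow_right hp.one_lt.le hv
    _ = p := pow_one p
  by_contra hN
  push_neg at hN
  interval_cases h : ordCompl[p] E
  · simp [h] at key; omega
  · simp [h] at key; omega

def EA (B m : ℕ) : ℕ := B ^ m * (B ^ m - 1) + 1

lemma cast_EA {R : Type*} [CommRing R] (B m : ℕ) (hB : 1 ≤ B) :
    ((EA B m : ℕ) : R) = ((B:R)^m)^2 - (B:R)^m + 1 := by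
  have h : 1 ≤ B ^ m := Nat.one_le_pow _ _ hB
  unfold EA
  push_cast [h]
  ring

lemma EA_ne_zero (B m : ℕ) : EA B m ≠ 0 := by unfold EA; omega

lemma EA_no2 (B m : ℕ) (hB : 1 ≤ B) : ¬ 2 ∣ EA B m := by
  intro h
  have h0 : ((EA B m : ℕ) : ZMod 2) = 0 := (ZMod.natCast_eq_zero_iff _ 2).mpr h
  rw [cast_EA B m hB] at h0
  exact (by decide : ∀ x : ZMod 2, x^2 - x + 1 ≠ 0) _ h0

lemma EA_no9 (B m : ℕ) (hB : 1 ≤ B) : ¬ 3^2 ∣ EA B m := by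
  intro h
  have h0 : ((EA B m : ℕ) : ZMod 9) = 0 := (ZMod.natCast_eq_zero_iff _ 9).mpr h
  rw [cast_EA B m hB] at h0
  exact (by decide : ∀ x : ZMod 9, x^2 - x + 1 ≠ 0) _ h0

def descA (B m a : ℕ) (hB : 2 ≤ B) (hm : 1 ≤ m) (h144 : 6*m ∣ 144) (ha : a < 6*m)
    (hsm : ∀ q : ℕ, q.Prime → q ∣ 6*m → q = 2 ∨ q = 3)
    (hbig : 1 < ordCompl[3] (EA B m)) : Desc B where
  N := ordCompl[3] (EA B m)
  a := a
  d := 6*m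
  hN1 := hbig
  hdvd := by
    have hNE : ordCompl[3] (EA B m) ∣ EA B m := Nat.ordCompl_dvd _ _
    refine hNE.trans ?_
    have h1 : (1:ℕ) ≤ B ^ (6*m) := Nat.one_le_pow _ _ (by omega)
    rw [← Int.natCast_dvd_natCast]
    have hcast : ((B ^ (6*m) - 1 : ℕ) : ℤ) = ((B:ℤ)^m)^6 - 1 := by
      push_cast [h1]
      rw [mul_comm 6 m, pow_mul]
    rw [hcast, cast_EA B m (by omega)]
    exact ⟨((B:ℤ)^m + 1) * (((B:ℤ)^m)^3 - 1), by ring⟩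
  h144 := h144
  had := ha
  hd2 := by omega
  hord := by
    intro p hp hpN
    haveI : Fact p.Prime := ⟨hp⟩
    have hno3 : ¬ 3 ∣ ordCompl[3] (EA B m) :=
      Nat.not_dvd_ordCompl Nat.prime_three (EA_ne_zero B m)
    have hp3 : p ≠ 3 := fun h => hno3 (h ▸ hpN)
    have hpE : p ∣ EA B m := hpN.trans (Nat.ordCompl_dvd _ _)
    have hp2 : p ≠ 2 := fun h => EA_no2 B m (by omega) (h ▸ hpE)
    haveI : Fact (2 < p) := ⟨lt_of_le_of_ne hp.two_le (Ne.symm hp2)⟩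
    set c : ZMod p := (B : ZMod p)^m with hc_def
    have hc : c^2 - c + 1 = 0 := by
      have h0 : ((EA B m : ℕ) : ZMod p) = 0 := (ZMod.natCast_eq_zero_iff _ p).mpr hpE
      rw [cast_EA B m (by omega)] at h0
      exact h0
    have hc3 : c^3 = -1 := by linear_combination (c+1)*hc
    have h6 : (B : ZMod p)^(6*m) = 1 := by
      rw [mul_comm, pow_mul, ← hc_def, show (6:ℕ) = 3*2 from rfl, pow_mul, hc3]
      ring
    refine orderOf_eq_of_pow_and_pow_div_prime (by omega) h6 ?_
    intro q hq hqd
    rcases hsm q hq hqd with rfl | rfl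
    · have he : 6*m/2 = 3*m := by omega
      rw [he, mul_comm, pow_mul, ← hc_def, hc3]
      exact ZMod.neg_one_ne_one
    · have he : 6*m/3 = 2*m := by omega
      rw [he, mul_comm, pow_mul, ← hc_def]
      intro h1
      have h3 : (3 : ZMod p) = 0 := by linear_combination (-c-1)*(h1 : c^2 = 1) + (c+2)*hc
      have : (p:ℕ) ∣ 3 := by
        have := (ZMod.natCast_eq_zero_iff 3 p).mp (by exact_mod_cast h3)
        exact this
      rcases (Nat.prime_dvd_prime_iff_eq hp Nat.prime_three).mp this with h
      exact hp3 h
  hno2 := fun h => EA_no2 B m (by omega) (h.trans (Nat.ordCompl_dvd _ _))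
  hno3 := Nat.not_dvd_ordCompl Nat.prime_three (EA_ne_zero B m)

end WR

namespace WR

def EB (B m : ℕ) : ℕ := B ^ m + 1

lemma EB_ne_zero (B m : ℕ) : EB B m ≠ 0 := by unfold EB; omega

lemma EB_no4 (B m : ℕ) (hm : 2 ∣ m) : ¬ 2^2 ∣ EB B m := by
  intro h
  have h0 : ((EB B m : ℕ) : ZMod 4) = 0 := (ZMod.natCast_eq_zero_iff _ 4).mpr h
  obtain ⟨m', rfl⟩ := hm
  unfold EB at h0
  push_cast at h0
  rw [mul_comm 2 m', pow_mul] at h0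
  exact (by decide : ∀ x : ZMod 4, x^2 + 1 ≠ 0) _ h0

lemma EB_no3 (B m : ℕ) (hm : 2 ∣ m) : ¬ 3 ∣ EB B m := by
  intro h
  have h0 : ((EB B m : ℕ) : ZMod 3) = 0 := (ZMod.natCast_eq_zero_iff _ 3).mpr h
  obtain ⟨m', rfl⟩ := hm
  unfold EB at h0
  push_cast at h0
  rw [mul_comm 2 m', pow_mul] at h0
  exact (by decide : ∀ x : ZMod 3, x^2 + 1 ≠ 0) _ h0

def descB (B m a : ℕ) (hB : 2 ≤ B) (hm : 2 ≤ m) (hm2 : 2 ∣ m) (h144 : 2*m ∣ 144)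
    (ha : a < 2*m) (hsm : ∀ q : ℕ, q.Prime → q ∣ 2*m → q = 2) : Desc B where
  N := ordCompl[2] (EB B m)
  a := a
  d := 2*m
  hN1 := by
    refine one_lt_ordCompl Nat.prime_two (EB_no4 B m hm2) ?_
    have : 4 ≤ B ^ m := by
      calc (4:ℕ) = 2^2 := rfl
      _ ≤ B^2 := Nat.pow_le_pow_left hB 2
      _ ≤ B^m := Nat.pow_le_pow_right (by omega) hm
    unfold EB; omega
  hdvd := by
    refine (Nat.ordCompl_dvd _ _).trans ?_
    have h1 : (1:ℕ) ≤ B ^ (2*m) := Nat.one_le_pow _ _ (by omega)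
    rw [← Int.natCast_dvd_natCast]
    have hcast : ((B ^ (2*m) - 1 : ℕ) : ℤ) = ((B:ℤ)^m)^2 - 1 := by
      push_cast [h1]
      rw [mul_comm 2 m, pow_mul]
    rw [hcast]
    unfold EB
    push_cast
    exact ⟨(B:ℤ)^m - 1, by ring⟩
  h144 := h144
  had := ha
  hd2 := by omega
  hord := by
    intro p hp hpN
    haveI : Fact p.Prime := ⟨hp⟩
    have hno2 : ¬ 2 ∣ ordCompl[2] (EB B m) :=
      Nat.not_dvd_ordCompl Nat.prime_two (EB_ne_zero B m)
    have hp2 : p ≠ 2 := fun h => hno2 (h ▸ hpN)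
    have hpE : p ∣ EB B m := hpN.trans (Nat.ordCompl_dvd _ _)
    haveI : Fact (2 < p) := ⟨lt_of_le_of_ne hp.two_le (Ne.symm hp2)⟩
    have hc : (B : ZMod p)^m = -1 := by
      have h0 : ((EB B m : ℕ) : ZMod p) = 0 := (ZMod.natCast_eq_zero_iff _ p).mpr hpE
      unfold EB at h0
      push_cast at h0
      linear_combination h0
    have h2 : (B : ZMod p)^(2*m) = 1 := by
      rw [mul_comm, pow_mul, hc]; ring
    refine orderOf_eq_of_pow_and_pow_div_prime (by omega) h2 ?_
    intro q hq hqd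
    rcases hsm q hq hqd with rfl
    have he : 2*m/2 = m := by omega
    rw [he, hc]
    exact ZMod.neg_one_ne_one
  hno2 := Nat.not_dvd_ordCompl Nat.prime_two (EB_ne_zero B m)
  hno3 := fun h => EB_no3 B m hm2 (h.trans (Nat.ordCompl_dvd _ _))

def EC (B m : ℕ) : ℕ := (B ^ m)^2 + B ^ m + 1

lemma EC_ne_zero (B m : ℕ) : EC B m ≠ 0 := by unfold EC; omega

lemma EC_no2 (B m : ℕ) : ¬ 2 ∣ EC B m := by
  intro h
  have h0 : ((EC B m : ℕ) : ZMod 2) = 0 := (ZMod.natCast_eq_zero_iff _ 2).mpr h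
  unfold EC at h0
  push_cast at h0
  exact (by decide : ∀ x : ZMod 2, x^2 + x + 1 ≠ 0) _ h0

lemma EC_no9 (B m : ℕ) : ¬ 3^2 ∣ EC B m := by
  intro h
  have h0 : ((EC B m : ℕ) : ZMod 9) = 0 := (ZMod.natCast_eq_zero_iff _ 9).mpr h
  unfold EC at h0
  push_cast at h0
  exact (by decide : ∀ x : ZMod 9, x^2 + x + 1 ≠ 0) _ h0

def descC (B m a : ℕ) (hB : 2 ≤ B) (hm : 1 ≤ m) (h144 : 3*m ∣ 144)
    (ha : a < 3*m) (hsm : ∀ q : ℕ, q.Prime → q ∣ 3*m → q = 3) : Desc B where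
  N := ordCompl[3] (EC B m)
  a := a
  d := 3*m
  hN1 := by
    refine one_lt_ordCompl Nat.prime_three (EC_no9 B m) ?_
    have : 2 ≤ B ^ m := by
      calc (2:ℕ) = 2^1 := rfl
      _ ≤ B^1 := Nat.pow_le_pow_left hB 1
      _ ≤ B^m := Nat.pow_le_pow_right (by omega) hm
    unfold EC
    nlinarith
  hdvd := by
    refine (Nat.ordCompl_dvd _ _).trans ?_
    have h1 : (1:ℕ) ≤ B ^ (3*m) := Nat.one_le_pow _ _ (by omega)
    rw [← Int.natCast_dvd_natCast]
    have hcast : ((B ^ (3*m) - 1 : ℕ) : ℤ) = ((B:ℤ)^m)^3 - 1 := by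
      push_cast [h1]
      rw [mul_comm 3 m, pow_mul]
    rw [hcast]
    unfold EC
    push_cast
    exact ⟨(B:ℤ)^m - 1, by ring⟩
  h144 := h144
  had := ha
  hd2 := by omega
  hord := by
    intro p hp hpN
    haveI : Fact p.Prime := ⟨hp⟩
    have hno3 : ¬ 3 ∣ ordCompl[3] (EC B m) :=
      Nat.not_dvd_ordCompl Nat.prime_three (EC_ne_zero B m)
    have hp3 : p ≠ 3 := fun h => hno3 (h ▸ hpN)
    have hpE : p ∣ EC B m := hpN.trans (Nat.ordCompl_dvd _ _)
    set c : ZMod p := (B : ZMod p)^m with hc_def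
    have hc : c^2 + c + 1 = 0 := by
      have h0 : ((EC B m : ℕ) : ZMod p) = 0 := (ZMod.natCast_eq_zero_iff _ p).mpr hpE
      unfold EC at h0
      push_cast at h0
      exact h0
    have h3 : (B : ZMod p)^(3*m) = 1 := by
      rw [mul_comm, pow_mul, ← hc_def]
      linear_combination (c-1)*hc
    refine orderOf_eq_of_pow_and_pow_div_prime (by omega) h3 ?_
    intro q hq hqd
    rcases hsm q hq hqd with rfl
    have he : 3*m/3 = m := by omega
    rw [he, ← hc_def]
    intro h1
    have h30 : (3 : ZMod p) = 0 := by
      rw [h1] at hc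
      linear_combination hc
    have hdvd3 : (p:ℕ) ∣ 3 := (ZMod.natCast_eq_zero_iff 3 p).mp (by exact_mod_cast h30)
    exact hp3 ((Nat.prime_dvd_prime_iff_eq hp Nat.prime_three).mp hdvd3)
  hno2 := fun h => EC_no2 B m (h.trans (Nat.ordCompl_dvd _ _))
  hno3 := Nat.not_dvd_ordCompl Nat.prime_three (EC_ne_zero B m)


end WR

namespace WR

lemma prime_dvd_23 {q M : ℕ} (hq : q.Prime) (i j : ℕ) (hM : M = 2^i * 3^j) (hd : q ∣ M) :
    q = 2 ∨ q = 3 := by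
  subst hM
  rcases hq.dvd_mul.mp hd with h | h
  · exact Or.inl ((Nat.prime_dvd_prime_iff_eq hq Nat.prime_two).mp (hq.dvd_of_dvd_pow h))
  · exact Or.inr ((Nat.prime_dvd_prime_iff_eq hq Nat.prime_three).mp (hq.dvd_of_dvd_pow h))

lemma prime_dvd_2 {q M : ℕ} (hq : q.Prime) (i : ℕ) (hM : M = 2^i) (hd : q ∣ M) : q = 2 := by
  subst hM
  exact (Nat.prime_dvd_prime_iff_eq hq Nat.prime_two).mp (hq.dvd_of_dvd_pow hd)

lemma prime_dvd_3 {q M : ℕ} (hq : q.Prime) (i : ℕ) (hM : M = 3^i) (hd : q ∣ M) : q = 3 := by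
  subst hM
  exact (Nat.prime_dvd_prime_iff_eq hq Nat.prime_three).mp (hq.dvd_of_dvd_pow hd)

lemma bigA (B m : ℕ) (hB : 2 ≤ B) (hm : 2 ≤ m) : 1 < ordCompl[3] (EA B m) := by
  refine one_lt_ordCompl Nat.prime_three (EA_no9 B m (by omega)) ?_
  have h4 : 4 ≤ B ^ m := by
    calc (4:ℕ) = 2^2 := by norm_num
    _ ≤ B^2 := Nat.pow_le_pow_left hB 2
    _ ≤ B^m := Nat.pow_le_pow_right (by omega) hm
  have h5 : 3 ≤ B ^ m - 1 := by omega
  have h6 := Nat.mul_le_mul h4 h5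
  unfold EA
  omega

end WR


namespace WR

lemma cover_dec : ∀ r : ℕ, r < 144 → r % 3 = 0 ∨ r % 4 = 1 ∨ r % 6 = 2 ∨ r % 8 = 4 ∨
    r % 9 = 7 ∨ r % 12 = 11 ∨ r % 16 = 3 ∨ r % 18 = 10 ∨ r % 24 = 7 ∨ r % 36 = 22 ∨
    r % 48 = 43 ∨ r % 72 = 40 := by decide

lemma cover_dec2 : ∀ r : ℕ, r < 144 → r % 3 = 0 ∨ r % 4 = 1 ∨ r % 8 = 4 ∨
    r % 9 = 7 ∨ r % 12 = 11 ∨ r % 16 = 3 ∨ r % 18 = 10 ∨ r % 24 = 7 ∨ r % 36 = 22 ∨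
    r % 48 = 43 ∨ r % 72 = 40 ∨ r % 2 = 0 := by decide

end WR


open WR in
theorem infinitely_many_woodall_b_riesel (b : ℤ) (hb : 2 ≤ b) :
    {t : ℕ | 0 < t ∧ IsBRiesel b ((t : ℤ) * b ^ t - 1)}.Infinite := by
  set B := b.toNat with hB_def
  have hBb : (B:ℤ) = b := Int.toNat_of_nonneg (by linarith)
  have hB2 : 2 ≤ B := by
    have : ((2:ℕ):ℤ) ≤ (B:ℤ) := by rw [hBb]; exact_mod_cast hb
    exact_mod_cast this
  let e3 : Desc B := descC B 1 0 hB2 (by omega) (by norm_num) (by norm_num)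
    (fun q hq hd => prime_dvd_3 hq 1 (by norm_num) hd)
  let e4 : Desc B := descB B 2 1 hB2 (by omega) (by norm_num) (by norm_num) (by norm_num)
    (fun q hq hd => prime_dvd_2 hq 2 (by norm_num) hd)
  let e8 : Desc B := descB B 4 4 hB2 (by omega) (by norm_num) (by norm_num) (by norm_num)
    (fun q hq hd => prime_dvd_2 hq 3 (by norm_num) hd)
  let e9 : Desc B := descC B 3 7 hB2 (by omega) (by norm_num) (by norm_num)
    (fun q hq hd => prime_dvd_3 hq 2 (by norm_num) hd)
  let e12 : Desc B := descA B 2 11 hB2 (by omega) (by norm_num) (by norm_num)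
    (fun q hq hd => prime_dvd_23 hq 2 1 (by norm_num) hd) (bigA B 2 hB2 (by omega))
  let e16 : Desc B := descB B 8 3 hB2 (by omega) (by norm_num) (by norm_num) (by norm_num)
    (fun q hq hd => prime_dvd_2 hq 4 (by norm_num) hd)
  let e18 : Desc B := descA B 3 10 hB2 (by omega) (by norm_num) (by norm_num)
    (fun q hq hd => prime_dvd_23 hq 1 2 (by norm_num) hd) (bigA B 3 hB2 (by omega))
  let e24 : Desc B := descA B 4 7 hB2 (by omega) (by norm_num) (by norm_num)
    (fun q hq hd => prime_dvd_23 hq 3 1 (by norm_num) hd) (bigA B 4 hB2 (by omega))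
  let e36 : Desc B := descA B 6 22 hB2 (by omega) (by norm_num) (by norm_num)
    (fun q hq hd => prime_dvd_23 hq 2 2 (by norm_num) hd) (bigA B 6 hB2 (by omega))
  let e48 : Desc B := descA B 8 43 hB2 (by omega) (by norm_num) (by norm_num)
    (fun q hq hd => prime_dvd_23 hq 4 1 (by norm_num) hd) (bigA B 8 hB2 (by omega))
  let e72 : Desc B := descA B 12 40 hB2 (by omega) (by norm_num) (by norm_num)
    (fun q hq hd => prime_dvd_23 hq 3 2 (by norm_num) hd) (bigA B 12 hB2 (by omega))
  by_cases h6 : 1 < ordCompl[3] (EA B 1)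
  · let e6 : Desc B := descA B 1 2 hB2 (by omega) (by norm_num) (by norm_num)
      (fun q hq hd => prime_dvd_23 hq 1 1 (by norm_num) hd) h6
    refine master b hb B hBb [e3, e4, e6, e8, e9, e12, e16, e18, e24, e36, e48, e72] ?_ ?_
    · refine List.pairwise_map.mp ?_
      show ([3, 4, 6, 8, 9, 12, 16, 18, 24, 36, 48, 72] : List ℕ).Pairwise (· ≠ ·)
      decide
    · intro n
      have hr : n % 144 < 144 := Nat.mod_lt _ (by norm_num)
      rcases cover_dec _ hr with h|h|h|h|h|h|h|h|h|h|h|h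
      · rw [Nat.mod_mod_of_dvd n (by norm_num : (3:ℕ) ∣ 144)] at h
        exact Or.inl ⟨e3, by simp, h⟩
      · rw [Nat.mod_mod_of_dvd n (by norm_num : (4:ℕ) ∣ 144)] at h
        exact Or.inl ⟨e4, by simp, h⟩
      · rw [Nat.mod_mod_of_dvd n (by norm_num : (6:ℕ) ∣ 144)] at h
        exact Or.inl ⟨e6, by simp, h⟩
      · rw [Nat.mod_mod_of_dvd n (by norm_num : (8:ℕ) ∣ 144)] at h
        exact Or.inl ⟨e8, by simp, h⟩
      · rw [Nat.mod_mod_of_dvd n (by norm_num : (9:ℕ) ∣ 144)] at h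
        exact Or.inl ⟨e9, by simp, h⟩
      · rw [Nat.mod_mod_of_dvd n (by norm_num : (12:ℕ) ∣ 144)] at h
        exact Or.inl ⟨e12, by simp, h⟩
      · rw [Nat.mod_mod_of_dvd n (by norm_num : (16:ℕ) ∣ 144)] at h
        exact Or.inl ⟨e16, by simp, h⟩
      · rw [Nat.mod_mod_of_dvd n (by norm_num : (18:ℕ) ∣ 144)] at h
        exact Or.inl ⟨e18, by simp, h⟩
      · rw [Nat.mod_mod_of_dvd n (by norm_num : (24:ℕ) ∣ 144)] at h
        exact Or.inl ⟨e24, by simp, h⟩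
      · rw [Nat.mod_mod_of_dvd n (by norm_num : (36:ℕ) ∣ 144)] at h
        exact Or.inl ⟨e36, by simp, h⟩
      · rw [Nat.mod_mod_of_dvd n (by norm_num : (48:ℕ) ∣ 144)] at h
        exact Or.inl ⟨e48, by simp, h⟩
      · rw [Nat.mod_mod_of_dvd n (by norm_num : (72:ℕ) ∣ 144)] at h
        exact Or.inl ⟨e72, by simp, h⟩
  · -- here 3 ∣ B + 1
    have hpos : 0 < ordCompl[3] (EA B 1) := Nat.ordCompl_pos 3 (EA_ne_zero B 1)
    have h1 : ordCompl[3] (EA B 1) = 1 := by omega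
    have hkey : 3 ^ (EA B 1).factorization 3 = EA B 1 := by
      have hh := Nat.ordProj_mul_ordCompl_eq_self (EA B 1) 3
      rw [h1, mul_one] at hh
      exact hh
    have hv : (EA B 1).factorization 3 ≤ 1 := by
      by_contra hcon
      exact EA_no9 B 1 (by omega)
        ((Nat.Prime.pow_dvd_iff_le_factorization Nat.prime_three (EA_ne_zero B 1)).mpr (by omega))
    have hE3 : EA B 1 ≤ 3 := by
      calc EA B 1 = 3 ^ (EA B 1).factorization 3 := hkey.symm
      _ ≤ 3 ^ 1 := Nat.pow_le_pow_right (by norm_num) hv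
      _ = 3 := by norm_num
    have hEge : 3 ≤ EA B 1 := by
      have h1B : 1 ≤ B - 1 := by omega
      have := Nat.mul_le_mul (show 2 ≤ B ^ 1 by rw [pow_one]; omega) h1B
      unfold EA
      simp only [pow_one] at *
      omega
    have hEeq : EA B 1 = 3 := by omega
    have h3E : (3:ℕ) ∣ EA B 1 := by omega
    have h3B : 3 ∣ B + 1 := by
      have h0 : ((EA B 1 : ℕ) : ZMod 3) = 0 := (ZMod.natCast_eq_zero_iff _ 3).mpr h3E
      rw [cast_EA B 1 (by omega)] at h0
      rw [pow_one] at h0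
      have hBneg : (B : ZMod 3) = -1 :=
        (by decide : ∀ x : ZMod 3, x^2 - x + 1 = 0 → x = -1) _ h0
      have : ((B + 1 : ℕ) : ZMod 3) = 0 := by push_cast [hBneg]; ring
      exact (ZMod.natCast_eq_zero_iff _ 3).mp this
    refine master b hb B hBb [e3, e4, e8, e9, e12, e16, e18, e24, e36, e48, e72] ?_ ?_
    · refine List.pairwise_map.mp ?_
      show ([3, 4, 8, 9, 12, 16, 18, 24, 36, 48, 72] : List ℕ).Pairwise (· ≠ ·)
      decide
    · intro n
      have hr : n % 144 < 144 := Nat.mod_lt _ (by norm_num)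
      rcases cover_dec2 _ hr with h|h|h|h|h|h|h|h|h|h|h|h
      · rw [Nat.mod_mod_of_dvd n (by norm_num : (3:ℕ) ∣ 144)] at h
        exact Or.inl ⟨e3, by simp, h⟩
      · rw [Nat.mod_mod_of_dvd n (by norm_num : (4:ℕ) ∣ 144)] at h
        exact Or.inl ⟨e4, by simp, h⟩
      · rw [Nat.mod_mod_of_dvd n (by norm_num : (8:ℕ) ∣ 144)] at h
        exact Or.inl ⟨e8, by simp, h⟩
      · rw [Nat.mod_mod_of_dvd n (by norm_num : (9:ℕ) ∣ 144)] at h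
        exact Or.inl ⟨e9, by simp, h⟩
      · rw [Nat.mod_mod_of_dvd n (by norm_num : (12:ℕ) ∣ 144)] at h
        exact Or.inl ⟨e12, by simp, h⟩
      · rw [Nat.mod_mod_of_dvd n (by norm_num : (16:ℕ) ∣ 144)] at h
        exact Or.inl ⟨e16, by simp, h⟩
      · rw [Nat.mod_mod_of_dvd n (by norm_num : (18:ℕ) ∣ 144)] at h
        exact Or.inl ⟨e18, by simp, h⟩
      · rw [Nat.mod_mod_of_dvd n (by norm_num : (24:ℕ) ∣ 144)] at h
        exact Or.inl ⟨e24, by simp, h⟩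
      · rw [Nat.mod_mod_of_dvd n (by norm_num : (36:ℕ) ∣ 144)] at h
        exact Or.inl ⟨e36, by simp, h⟩
      · rw [Nat.mod_mod_of_dvd n (by norm_num : (48:ℕ) ∣ 144)] at h
        exact Or.inl ⟨e48, by simp, h⟩
      · rw [Nat.mod_mod_of_dvd n (by norm_num : (72:ℕ) ∣ 144)] at h
        exact Or.inl ⟨e72, by simp, h⟩
      · rw [Nat.mod_mod_of_dvd n (by norm_num : (2:ℕ) ∣ 144)] at h
        exact Or.inr ⟨h3B, Nat.dvd_of_mod_eq_zero h⟩
end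

section
/- Let b ≥ 2 be an integer, let {r_i (mod m_i) : 1 ≤ i ≤ ν} be a covering system of the integers, and let p_1, …, p_ν be pairwise distinct primes such that p_i divides b^{m_i} − 1 for each 1 ≤ i ≤ ν. If k is a positive integer such that, for each 1 ≤ i ≤ ν, k > p_i and p_i divides k·b^{r_i} + 1, then k·b^n + 1 is composite for all positive integers n. -/
theorem composite_plus_one_of_covering
    (b : ℤ) (hb : 2 ≤ b) (ν : ℕ) (r : Fin ν → ℕ) (m : Fin ν → ℕ)
    (hm : ∀ i, 1 ≤ m i)
    (hcov : ∀ n : ℤ, ∃ i, n ≡ (r i : ℤ) [ZMOD (m i : ℤ)])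
    (p : Fin ν → ℕ) (hp : ∀ i, (p i).Prime)
    (hinj : Function.Injective p)
    (hdvd : ∀ i, (p i : ℤ) ∣ b ^ (m i) - 1)
    (k : ℤ) (hk : 0 < k)
    (hkp : ∀ i, (p i : ℤ) < k ∧ (p i : ℤ) ∣ k * b ^ (r i) + 1) :
    ∀ n : ℕ, 0 < n → IsComposite (k * b ^ n + 1) := by
  intro n hn
  obtain ⟨i, hi⟩ := hcov (n : ℤ)
  obtain ⟨hklt, hpd⟩ := hkp i
  have hb1 : (b ^ (m i)) ≡ 1 [ZMOD ((p i : ℤ))] := by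
    have h1 : (p i : ℤ) ∣ 1 - b ^ (m i) := by
      rw [← neg_sub]; exact dvd_neg.mpr (hdvd i)
    exact Int.modEq_iff_dvd.mpr h1
  have hbd : ∀ d : ℕ, m i ∣ d → (b ^ d) ≡ 1 [ZMOD ((p i : ℤ))] := by
    rintro d ⟨t, rfl⟩
    calc b ^ (m i * t) = (b ^ (m i)) ^ t := by rw [pow_mul]
      _ ≡ 1 ^ t [ZMOD ((p i : ℤ))] := hb1.pow t
      _ = 1 := one_pow t
  have hmd : (m i : ℤ) ∣ (r i : ℤ) - n := hi.dvd
  have hdvdN : (p i : ℤ) ∣ k * b ^ n + 1 := by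
    rcases le_total n (r i) with h | h
    · obtain ⟨d, hd, hmdvd⟩ : ∃ d, r i = n + d ∧ m i ∣ d := by
        refine ⟨r i - n, by omega, ?_⟩
        have : (m i : ℤ) ∣ ((r i - n : ℕ) : ℤ) := by rwa [Nat.cast_sub h]
        exact_mod_cast this
      have heq : k * b ^ (r i) + 1 ≡ k * b ^ n + 1 [ZMOD ((p i : ℤ))] := by
        calc k * b ^ (r i) + 1 = k * b ^ n * b ^ d + 1 := by
              rw [hd, pow_add]; ring
          _ ≡ k * b ^ n * 1 + 1 [ZMOD ((p i : ℤ))] :=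
              ((Int.ModEq.refl (k * b ^ n)).mul (hbd d hmdvd)).add_right 1
          _ = k * b ^ n + 1 := by ring
      exact Int.modEq_zero_iff_dvd.mp (heq.symm.trans (Int.modEq_zero_iff_dvd.mpr hpd))
    · obtain ⟨d, hd, hmdvd⟩ : ∃ d, n = r i + d ∧ m i ∣ d := by
        refine ⟨n - r i, by omega, ?_⟩
        have : (m i : ℤ) ∣ ((n - r i : ℕ) : ℤ) := by
          rw [Nat.cast_sub h]
          exact (dvd_neg.mp (by rw [neg_sub]; exact hmd))
        exact_mod_cast this
      have heq : k * b ^ n + 1 ≡ k * b ^ (r i) + 1 [ZMOD ((p i : ℤ))] := by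
        calc k * b ^ n + 1 = k * b ^ (r i) * b ^ d + 1 := by
              rw [hd, pow_add]; ring
          _ ≡ k * b ^ (r i) * 1 + 1 [ZMOD ((p i : ℤ))] :=
              ((Int.ModEq.refl _).mul (hbd d hmdvd)).add_right 1
          _ = k * b ^ (r i) + 1 := by ring
      exact Int.modEq_zero_iff_dvd.mp (heq.trans (Int.modEq_zero_iff_dvd.mpr hpd))
  have hbn : 2 ≤ b ^ n := le_trans hb (le_self_pow₀ (by linarith) hn.ne')
  have hk1 : 1 ≤ k := hk
  have hNgt : 1 < k * b ^ n + 1 := by nlinarith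
  refine ⟨hNgt, fun hN => ?_⟩
  have hplt : (p i : ℤ) < k * b ^ n + 1 := by nlinarith
  have hNnat : Nat.Prime (k * b ^ n + 1).natAbs := Int.prime_iff_natAbs_prime.mp hN
  have hpdN : p i ∣ (k * b ^ n + 1).natAbs := by
    have := Int.natAbs_dvd_natAbs.mpr hdvdN
    simpa using this
  have hpe : p i = (k * b ^ n + 1).natAbs := (Nat.prime_dvd_prime_iff_eq (hp i) hNnat).mp hpdN
  have hNeq : (k * b ^ n + 1) = (((k * b ^ n + 1).natAbs : ℕ) : ℤ) :=
    (Int.natAbs_of_nonneg (by linarith)).symm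
  have h2 : (p i : ℤ) = (((k * b ^ n + 1).natAbs : ℕ) : ℤ) := by rw [hpe]
  linarith [hNeq, h2, hplt]
end

section
/- Let b ≥ 2 be an integer, let {r_i (mod m_i) : 1 ≤ i ≤ ν} be a covering system of the integers, and let p_1, …, p_ν be pairwise distinct primes such that p_i divides b^{m_i} − 1 for each 1 ≤ i ≤ ν. If k is a positive integer such that, for each 1 ≤ i ≤ ν, k > p_i and p_i divides k·b^{r_i} − 1, then k·b^n − 1 is composite for all positive integers n. -/
private lemma pow_cong_aux (b : ℤ) (q M : ℤ) (hq : q ∣ b ^ M.toNat - 1)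
    (a c : ℕ) (hac : c ≤ a) (hM : M ∣ (a : ℤ) - c) (hMpos : 0 < M) :
    q ∣ b ^ a - b ^ c := by
  obtain ⟨t, ht⟩ := hM
  have htnn : 0 ≤ t := by
    by_contra h
    push_neg at h
    nlinarith [Int.ofNat_le.mpr hac]
  have hM' : (M.toNat : ℤ) = M := Int.toNat_of_nonneg hMpos.le
  have ht' : (t.toNat : ℤ) = t := Int.toNat_of_nonneg htnn
  have hnat : a - c = M.toNat * t.toNat := by
    have h1 : ((a - c : ℕ) : ℤ) = ((M.toNat * t.toNat : ℕ) : ℤ) := by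
      push_cast [hac, hM', ht']
      linarith [ht]
    exact_mod_cast h1
  have h1 : b ^ M.toNat - 1 ∣ b ^ (a - c) - 1 := by
    rw [hnat, pow_mul]
    simpa using sub_dvd_pow_sub_pow (b ^ M.toNat) 1 t.toNat
  have h2 : q ∣ b ^ (a - c) - 1 := hq.trans h1
  have hsplit : b ^ a = b ^ c * b ^ (a - c) := by
    rw [← pow_add, Nat.add_sub_cancel' hac]
  have : b ^ a - b ^ c = b ^ c * (b ^ (a - c) - 1) := by
    rw [mul_sub, mul_one, ← hsplit]
  rw [this]
  exact Dvd.dvd.mul_left h2 _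

theorem composite_minus_one_of_covering
    (b : ℤ) (hb : 2 ≤ b) (ν : ℕ) (r : Fin ν → ℕ) (m : Fin ν → ℕ)
    (hm : ∀ i, 1 ≤ m i)
    (hcov : ∀ n : ℤ, ∃ i, n ≡ (r i : ℤ) [ZMOD (m i : ℤ)])
    (p : Fin ν → ℕ) (hp : ∀ i, (p i).Prime)
    (hinj : Function.Injective p)
    (hdvd : ∀ i, (p i : ℤ) ∣ b ^ (m i) - 1)
    (k : ℤ) (hk : 0 < k)
    (hkp : ∀ i, (p i : ℤ) < k ∧ (p i : ℤ) ∣ k * b ^ (r i) - 1) :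
    ∀ n : ℕ, 0 < n → IsComposite (k * b ^ n - 1) := by
  intro n hn
  obtain ⟨i, hi⟩ := hcov n
  have hMdvd : ((m i : ℤ)) ∣ (n : ℤ) - (r i : ℤ) := dvd_sub_comm.mp hi.dvd
  have hMpos : (0:ℤ) < (m i : ℤ) := by exact_mod_cast hm i
  have hq : (p i : ℤ) ∣ b ^ ((m i : ℤ)).toNat - 1 := by
    simpa using hdvd i
  have hkey : (p i : ℤ) ∣ b ^ n - b ^ (r i) := by
    rcases le_total (r i) n with h | h
    · exact pow_cong_aux b _ _ hq n (r i) h hMdvd hMpos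
    · exact dvd_sub_comm.mp
        (pow_cong_aux b _ _ hq (r i) n h (dvd_sub_comm.mp hMdvd) hMpos)
  have hpk := hkp i
  have hdvdN : (p i : ℤ) ∣ k * b ^ n - 1 := by
    have : k * b ^ n - 1 = k * (b ^ n - b ^ (r i)) + (k * b ^ (r i) - 1) := by ring
    rw [this]
    exact dvd_add (hkey.mul_left k) hpk.2
  have hp2 : (2:ℤ) ≤ (p i : ℤ) := by exact_mod_cast (hp i).two_le
  have hk3 : (3:ℤ) ≤ k := by linarith [hpk.1]
  have hbn : (2:ℤ) ≤ b ^ n := by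
    calc (2:ℤ) ≤ b := hb
    _ = b ^ 1 := (pow_one b).symm
    _ ≤ b ^ n := pow_le_pow_right₀ (by linarith) hn
  have hN1 : 1 < k * b ^ n - 1 := by nlinarith
  refine ⟨hN1, fun hNp => ?_⟩
  have hpN : (p i : ℤ) < k * b ^ n - 1 := by nlinarith [hpk.1]
  have hNpos : 0 < k * b ^ n - 1 := by linarith
  have hNnat : ((k * b ^ n - 1).natAbs : ℤ) = k * b ^ n - 1 := Int.natAbs_of_nonneg hNpos.le
  have hNprime : (k * b ^ n - 1).natAbs.Prime := Int.prime_iff_natAbs_prime.mp hNp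
  have hpdvdnat : p i ∣ (k * b ^ n - 1).natAbs := by
    have : (p i : ℤ) ∣ ((k * b ^ n - 1).natAbs : ℤ) := by rw [hNnat]; exact hdvdN
    exact_mod_cast this
  have heq : p i = (k * b ^ n - 1).natAbs :=
    (Nat.prime_dvd_prime_iff_eq (hp i) hNprime).mp hpdvdnat
  have : (p i : ℤ) = k * b ^ n - 1 := by rw [heq, hNnat]
  linarith
end

section
/- Let b ≥ 2 be an integer. Suppose there exist a covering system {r_i (mod m_i) : 1 ≤ i ≤ ν} of the integers and pairwise distinct primes p_1, …, p_ν such that p_i divides b^{m_i} − 1 for each 1 ≤ i ≤ ν. Then there exist infinitely many positive integers k such that k·b^n + 1 is composite for all positive integers n. -/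
theorem infinitely_many_k_of_covering
    (b : ℤ) (hb : 2 ≤ b) (ν : ℕ) (r : Fin ν → ℕ) (m : Fin ν → ℕ)
    (hm : ∀ i, 1 ≤ m i)
    (hcov : ∀ n : ℤ, ∃ i, n ≡ (r i : ℤ) [ZMOD (m i : ℤ)])
    (p : Fin ν → ℕ) (hp : ∀ i, (p i).Prime)
    (hinj : Function.Injective p)
    (hdvd : ∀ i, (p i : ℤ) ∣ b ^ (m i) - 1) :
    {k : ℤ | 0 < k ∧ ∀ n : ℕ, 0 < n → IsComposite (k * b ^ n + 1)}.Infinite := by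
  classical
  -- basic facts mod p i
  have hbpow : ∀ i, (b : ZMod (p i)) ^ (m i) = 1 := by
    intro i
    have := (ZMod.intCast_zmod_eq_zero_iff_dvd (b ^ (m i) - 1) (p i)).mpr (hdvd i)
    push_cast at this
    linear_combination this
  have hbne : ∀ i, (b : ZMod (p i)) ≠ 0 := by
    intro i hb0
    haveI := Fact.mk (hp i)
    have : (0 : ZMod (p i)) ^ (m i) = 1 := by rw [← hb0]; exact hbpow i
    rw [zero_pow (Nat.one_le_iff_ne_zero.mp (hm i))] at this
    exact zero_ne_one this
  -- target residues
  let t : ∀ i, ZMod (p i) := fun i => -((b : ZMod (p i)) ^ (r i))⁻¹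
  -- CRT
  have hcop : Pairwise (Function.onFun Nat.Coprime p) := fun i j hij =>
    (Nat.coprime_primes (hp i) (hp j)).mpr (fun h => hij (hinj h))
  set P : ℕ := ∏ i, p i with hP
  have hPpos : 0 < P := Finset.prod_pos (fun i _ => (hp i).pos)
  obtain ⟨x, hx⟩ := (ZMod.prodEquivPi p hcop).surjective t
  set k₀ : ℤ := (x.val : ℤ) with hk₀
  have hk₀nonneg : 0 ≤ k₀ := Int.natCast_nonneg _
  have hk₀cast : ∀ i, ((k₀ : ℤ) : ZMod (p i)) = t i := by
    intro i
    haveI : NeZero P := ⟨hPpos.ne'⟩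
    have h1 : ((k₀ : ℤ) : ZMod P) = x := by
      rw [hk₀]; push_cast; simp [ZMod.natCast_val, ZMod.cast_id]
    have h2 : (ZMod.prodEquivPi p hcop) ((k₀ : ℤ) : ZMod P) = ((k₀ : ℤ) : ∀ i, ZMod (p i)) :=
      map_intCast (ZMod.prodEquivPi p hcop) k₀
    rw [h1, hx] at h2
    have h3 := (congrFun h2 i).symm
    simpa using h3
  -- the family of k's
  have key : ∀ k : ℤ, (∀ i, ((k : ℤ) : ZMod (p i)) = t i) → (P : ℤ) ≤ k →
      ∀ n : ℕ, 0 < n → IsComposite (k * b ^ n + 1) := by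
    intro k hk hkP n hn
    obtain ⟨i, hi⟩ := hcov (n : ℤ)
    haveI := Fact.mk (hp i)
    -- p i ≤ P
    have hpile : (p i : ℤ) ≤ P := by
      exact_mod_cast Nat.le_of_dvd hPpos (Finset.dvd_prod_of_mem p (Finset.mem_univ i))
    -- n ≡ r i [MOD m i] as naturals
    have hmod : n ≡ r i [MOD m i] := Int.natCast_modEq_iff.mp hi
    -- units
    set u : (ZMod (p i))ˣ := Units.mk0 _ (hbne i) with hu
    have hupow : u ^ (m i) = 1 := by
      ext; push_cast [hu]; exact hbpow i
    have hord : orderOf u ∣ m i := orderOf_dvd_of_pow_eq_one hupow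
    have hmod' : n ≡ r i [MOD orderOf u] := hmod.of_dvd hord
    have hun : u ^ n = u ^ (r i) := pow_eq_pow_iff_modEq.mpr hmod'
    have hbn : (b : ZMod (p i)) ^ n = (b : ZMod (p i)) ^ (r i) := by
      have := congrArg (Units.val) hun
      simpa [hu] using this
    -- divisibility
    have hzero : ((k * b ^ n + 1 : ℤ) : ZMod (p i)) = 0 := by
      push_cast
      rw [hbn, hk i]
      simp only [t, neg_mul]
      rw [inv_mul_cancel₀ (pow_ne_zero _ (hbne i))]
      ring
    have hdvdN : (p i : ℤ) ∣ k * b ^ n + 1 :=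
      (ZMod.intCast_zmod_eq_zero_iff_dvd _ _).mp hzero
    -- size
    have hppos : (0 : ℤ) < p i := by exact_mod_cast (hp i).pos
    have hkpos : (1 : ℤ) ≤ k := le_trans (by exact_mod_cast hPpos) hkP
    have hbnlarge : (2 : ℤ) ≤ b ^ n := le_trans hb (le_self_pow₀ (by linarith) hn.ne')
    have hbig : (p i : ℤ) < k * b ^ n + 1 := by nlinarith
    have hone : (1 : ℤ) < k * b ^ n + 1 := by nlinarith
    refine ⟨hone, fun hprime => ?_⟩
    have hpprime : Prime ((p i : ℕ) : ℤ) := Nat.prime_iff_prime_int.mp (hp i)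
    have hassoc := hpprime.associated_of_dvd hprime hdvdN
    rcases Int.associated_iff.mp hassoc with h | h <;> omega
  -- build infinitely many k
  apply Set.infinite_of_injective_forall_mem
    (f := fun j : ℕ => k₀ + (j + 1) * (P : ℤ))
  case hi =>
    intro a b' hab
    simp only [] at hab
    have hPne : (P : ℤ) ≠ 0 := by exact_mod_cast hPpos.ne'
    have h2 : ((a : ℤ) + 1) * P = ((b' : ℤ) + 1) * P := by linarith
    have h3 := mul_right_cancel₀ hPne h2
    exact_mod_cast add_right_cancel h3
  case hf =>
    intro j
    have hPk : (P : ℤ) ≤ k₀ + (j + 1) * P := by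
      have : (1 : ℤ) * P ≤ (j + 1) * P := by
        apply mul_le_mul_of_nonneg_right _ (by positivity)
        push_cast; linarith [Int.natCast_nonneg j]
      linarith
    have hcast : ∀ i, ((k₀ + (j + 1) * P : ℤ) : ZMod (p i)) = t i := by
      intro i
      have hP0 : ((P : ℤ) : ZMod (p i)) = 0 := by
        have : (p i : ℤ) ∣ (P : ℤ) := by
          exact_mod_cast Finset.dvd_prod_of_mem p (Finset.mem_univ i)
        exact (ZMod.intCast_zmod_eq_zero_iff_dvd _ _).mpr this
      push_cast
      push_cast at hP0
      rw [hP0, mul_zero, add_zero]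
      have := hk₀cast i
      push_cast at this
      exact this
    exact ⟨by positivity, key _ hcast hPk⟩
end

section
/- Let m ≥ 2 be an integer, let q be an odd prime with q ≤ m + 1, and let a_0, a_1, …, a_{q−1} be integers satisfying a_j ≡ j (mod q) and a_j ≡ 2^m − 1 (mod 2^j) for 0 ≤ j ≤ q − 1. Then the collection of congruences {2^{j−1} − 1 (mod 2^j) : 1 ≤ j ≤ q − 1} ∪ {a_j (mod q·2^j) : 0 ≤ j ≤ q − 1} is a covering system of the integers; that is, every integer satisfies at least one of these congruences. -/
theorem covering_from_powers_of_two
    (m : ℕ) (hm : 2 ≤ m) (q : ℕ) (hq : q.Prime) (hqodd : Odd q) (hqm : q ≤ m + 1)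
    (a : ℕ → ℤ)
    (ha1 : ∀ j, j ≤ q - 1 → a j ≡ (j : ℤ) [ZMOD (q : ℤ)])
    (ha2 : ∀ j, j ≤ q - 1 → a j ≡ 2 ^ m - 1 [ZMOD (2 : ℤ) ^ j]) :
    ∀ n : ℤ,
      (∃ j, 1 ≤ j ∧ j ≤ q - 1 ∧ n ≡ 2 ^ (j - 1) - 1 [ZMOD (2 : ℤ) ^ j]) ∨
      (∃ j, j ≤ q - 1 ∧ n ≡ a j [ZMOD (q : ℤ) * 2 ^ j]) := by
  intro n
  have hq3 : 3 ≤ q := by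
    have h2 := hq.two_le
    have ho := Nat.odd_iff.mp hqodd
    omega
  by_cases hdvd : (2 : ℤ) ^ (q - 1) ∣ n + 1
  · -- second family
    right
    have hqpos : (0 : ℤ) < (q : ℤ) := by exact_mod_cast hq.pos
    set j : ℕ := (n % (q : ℤ)).toNat with hj
    have hmod_nonneg : 0 ≤ n % (q : ℤ) := Int.emod_nonneg n hqpos.ne'
    have hmod_lt : n % (q : ℤ) < (q : ℤ) := Int.emod_lt_of_pos n hqpos
    have hjcast : (j : ℤ) = n % (q : ℤ) := Int.toNat_of_nonneg hmod_nonneg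
    have hjlt : j < q := by
      have h' : (j : ℤ) < (q : ℤ) := hjcast ▸ hmod_lt
      exact_mod_cast h'
    refine ⟨j, ?_, ?_⟩
    · omega
    · have hjq : j ≤ q - 1 := by omega
      have hjm : j ≤ m := by omega
      -- mod q
      have h1 : n ≡ a j [ZMOD (q : ℤ)] := by
        have : n ≡ (j : ℤ) [ZMOD (q : ℤ)] := by
          rw [Int.ModEq, hjcast, Int.emod_emod_of_dvd _ dvd_rfl]
        exact this.trans (ha1 j hjq).symm
      -- mod 2^j
      have h2 : n ≡ a j [ZMOD (2 : ℤ) ^ j] := by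
        have hd1 : (2 : ℤ) ^ j ∣ n + 1 :=
          dvd_trans (pow_dvd_pow 2 (by omega)) hdvd
        have hn : n ≡ -1 [ZMOD (2 : ℤ) ^ j] := by
          rw [Int.modEq_iff_dvd]
          rw [show (-1 : ℤ) - n = -(n + 1) by ring]
          exact dvd_neg.mpr hd1
        have ha' : a j ≡ -1 [ZMOD (2 : ℤ) ^ j] := by
          refine (ha2 j hjq).trans ?_
          rw [Int.modEq_iff_dvd]
          have he : (-1 : ℤ) - (2 ^ m - 1) = -(2 ^ m) := by ring
          rw [he]
          exact dvd_neg.mpr (pow_dvd_pow 2 hjm)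
        exact hn.trans ha'.symm
      have hcop : ((q : ℤ)).natAbs.Coprime ((2 : ℤ) ^ j).natAbs := by
        have hq2 : q ≠ 2 := by
          have := Nat.odd_iff.mp hqodd; omega
        have hcq2 : Nat.Coprime q 2 := (Nat.coprime_primes hq Nat.prime_two).mpr hq2
        simpa [Int.natAbs_pow] using hcq2.pow_right j
      exact (Int.modEq_and_modEq_iff_modEq_mul hcop).mp ⟨h1, h2⟩
  · -- first family
    left
    have hne : n + 1 ≠ 0 := by
      rintro h
      exact hdvd (h ▸ dvd_zero _)
    set N : ℕ := (n + 1).natAbs with hN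
    have hNne : N ≠ 0 := by simpa [hN, Int.natAbs_eq_zero] using hne
    set k : ℕ := N.factorization 2 with hk
    have hdk : (2 : ℤ) ^ k ∣ n + 1 := by
      have h1 : (2 : ℕ) ^ k ∣ N := Nat.ordProj_dvd N 2
      have h2 : (2 : ℤ) ^ k ∣ (N : ℤ) := by exact_mod_cast Int.natCast_dvd_natCast.mpr h1
      rw [hN] at h2
      exact Int.dvd_natAbs.mp h2
    have hndk : ¬ (2 : ℤ) ^ (k + 1) ∣ n + 1 := by
      intro h
      have : (2 : ℕ) ^ (k + 1) ∣ N := by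
        have := Int.natAbs_dvd_natAbs.mpr h
        simpa [Int.natAbs_pow] using this
      exact Nat.pow_succ_factorization_not_dvd hNne Nat.prime_two this
    have hkq : k < q - 1 := by
      by_contra h
      push_neg at h
      exact hdvd (dvd_trans (pow_dvd_pow 2 h) hdk)
    refine ⟨k + 1, by omega, by omega, ?_⟩
    obtain ⟨u, hu⟩ := hdk
    have huodd : ¬ (2 : ℤ) ∣ u := by
      intro ⟨v, hv⟩
      apply hndk
      refine ⟨v, ?_⟩
      rw [hu, hv]; ring
    rw [Int.modEq_iff_dvd]
    have : (2 : ℤ) ^ (k + 1 - 1) - 1 - n = 2 ^ k - (n + 1) := by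
      simp; ring
    rw [this, hu]
    have h2u1 : (2 : ℤ) ∣ u - 1 := by
      rcases Int.even_or_odd u with he | ho
      · exact absurd he.two_dvd huodd
      · obtain ⟨c, hc⟩ := ho
        exact ⟨c, by omega⟩
    obtain ⟨c, hc⟩ := h2u1
    refine ⟨-c, ?_⟩
    have hu' : u = 2 * c + 1 := by omega
    rw [hu', pow_succ]
    ring
end

section
/- Let q ≥ 5 be a prime. Consider the following collection of congruences: (i) for each 1 ≤ k ≤ q, the class 3^{k−1} (mod 3^k); (ii) for each 1 ≤ j ≤ q and 1 ≤ k ≤ q, the class A (mod 2^j·3^k) where A is the unique residue modulo 2^j·3^k with A ≡ 2^{j−1} (mod 2^j) and A ≡ 2·3^{k−1} (mod 3^k); (iii) for each 1 ≤ j ≤ q and 1 ≤ k ≤ q, the class A (mod 2^j·3^k·q) where A is the unique residue modulo 2^j·3^k·q with A ≡ 0 (mod 2^j), A ≡ 2·3^{k−1} (mod 3^k), and A ≡ j (mod q); (iv) for each 1 ≤ k ≤ q, the class A (mod 3^k·q) where A is the unique residue modulo 3^k·q with A ≡ 0 (mod 3^k) and A ≡ k (mod q). Then this collection is a covering system of the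 integers; that is, every integer satisfies at least one of these congruences. -/
private lemma exists_residue' (n : ℤ) (q : ℕ) (hq : 0 < q) :
    ∃ k : ℕ, 1 ≤ k ∧ k ≤ q ∧ n ≡ (k : ℤ) [ZMOD (q : ℤ)] := by
  have hq' : (0:ℤ) < (q:ℤ) := by exact_mod_cast hq
  have hr0 : 0 ≤ n % (q:ℤ) := Int.emod_nonneg n (by positivity)
  have hrq : n % (q:ℤ) < (q:ℤ) := Int.emod_lt_of_pos n hq'
  by_cases h : n % (q:ℤ) = 0
  · refine ⟨q, hq, le_refl q, ?_⟩
    have : (q:ℤ) ∣ (q:ℤ) - n := by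
      have : (q:ℤ) ∣ n := Int.dvd_of_emod_eq_zero h
      exact dvd_sub dvd_rfl this
    exact (Int.modEq_iff_dvd.mpr this)
  · refine ⟨(n % (q:ℤ)).toNat, by omega, by omega, ?_⟩
    have hcast : ((n % (q:ℤ)).toNat : ℤ) = n % (q:ℤ) := Int.toNat_of_nonneg hr0
    rw [Int.modEq_iff_dvd, hcast]
    have : ((n % (q:ℤ)) - n) % (q:ℤ) = 0 := by
      simp [Int.sub_emod, Int.emod_emod_of_dvd]
    exact Int.dvd_of_emod_eq_zero this

private lemma exists_val' (n : ℤ) (p : ℤ) (q : ℕ) (h : ¬ p ^ q ∣ n) :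
    ∃ k, 1 ≤ k ∧ k ≤ q ∧ ∃ m : ℤ, n = p ^ (k-1) * m ∧ ¬ p ∣ m := by
  classical
  have hex : ∃ t, ¬ p ^ t ∣ n := ⟨q, h⟩
  set k := Nat.find hex with hk
  have hspec : ¬ p ^ k ∣ n := Nat.find_spec hex
  have hkq : k ≤ q := Nat.find_min' hex h
  have hk1 : 1 ≤ k := by
    by_contra hc
    push_neg at hc
    interval_cases k
    · exact hspec (by simpa using one_dvd n)
  have hdvd : p ^ (k-1) ∣ n := by
    have := Nat.find_min hex (m := k-1) (by omega)
    simpa using this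
  obtain ⟨m, hm⟩ := hdvd
  refine ⟨k, hk1, hkq, m, hm, ?_⟩
  intro ⟨c, hc⟩
  apply hspec
  have hpk : p ^ k = p ^ (k-1) * p := by
    rw [← pow_succ, Nat.sub_add_cancel hk1]
  exact ⟨c, by rw [hpk, hm, hc]; ring⟩

private lemma modeq_of_unit (n : ℤ) (p : ℤ) (k : ℕ) (hk : 1 ≤ k) (m c : ℤ)
    (hm : n = p ^ (k-1) * m) (hc : p ∣ m - c) :
    n ≡ c * p ^ (k-1) [ZMOD p ^ k] := by
  rw [Int.modEq_iff_dvd]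
  have : c * p ^ (k-1) - n = p ^ (k-1) * (c - m) := by rw [hm]; ring
  rw [this]
  have hk' : k = (k-1) + 1 := by omega
  rw [hk', pow_succ]
  exact mul_dvd_mul dvd_rfl (by
    obtain ⟨d, hd⟩ := hc
    exact ⟨-d, by linarith⟩)

theorem covering_without_modulus_two (q : ℕ) (hq : q.Prime) (hq5 : 5 ≤ q) :
    ∀ n : ℤ,
      (∃ k, 1 ≤ k ∧ k ≤ q ∧ n ≡ 3 ^ (k - 1) [ZMOD (3 : ℤ) ^ k]) ∨
      (∃ j k, 1 ≤ j ∧ j ≤ q ∧ 1 ≤ k ∧ k ≤ q ∧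
        n ≡ 2 ^ (j - 1) [ZMOD (2 : ℤ) ^ j] ∧ n ≡ 2 * 3 ^ (k - 1) [ZMOD (3 : ℤ) ^ k]) ∨
      (∃ j k, 1 ≤ j ∧ j ≤ q ∧ 1 ≤ k ∧ k ≤ q ∧
        n ≡ 0 [ZMOD (2 : ℤ) ^ j] ∧ n ≡ 2 * 3 ^ (k - 1) [ZMOD (3 : ℤ) ^ k] ∧
        n ≡ (j : ℤ) [ZMOD (q : ℤ)]) ∨
      (∃ k, 1 ≤ k ∧ k ≤ q ∧ n ≡ 0 [ZMOD (3 : ℤ) ^ k] ∧ n ≡ (k : ℤ) [ZMOD (q : ℤ)]) := by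
  intro n
  by_cases h3 : (3:ℤ) ^ q ∣ n
  · -- case (iv)
    obtain ⟨k, hk1, hkq, hmod⟩ := exists_residue' n q hq.pos
    right; right; right
    refine ⟨k, hk1, hkq, ?_, hmod⟩
    have : (3:ℤ) ^ k ∣ n := dvd_trans (pow_dvd_pow 3 hkq) h3
    simpa [Int.modEq_zero_iff_dvd] using this
  · obtain ⟨k, hk1, hkq, m, hm, hm3⟩ := exists_val' n 3 q h3
    have hm3' : m % 3 = 1 ∨ m % 3 = 2 := by omega
    rcases hm3' with h1 | h2
    · -- case (i)
      left
      refine ⟨k, hk1, hkq, ?_⟩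
      have := modeq_of_unit n 3 k hk1 m 1 hm (by omega)
      simpa using this
    · -- n ≡ 2·3^{k-1} mod 3^k
      have hmod3 : n ≡ 2 * 3 ^ (k-1) [ZMOD (3:ℤ) ^ k] :=
        modeq_of_unit n 3 k hk1 m 2 hm (by omega)
      by_cases h2q : (2:ℤ) ^ q ∣ n
      · -- case (iii)
        obtain ⟨j, hj1, hjq, hmodq⟩ := exists_residue' n q hq.pos
        right; right; left
        refine ⟨j, k, hj1, hjq, hk1, hkq, ?_, hmod3, hmodq⟩
        have : (2:ℤ) ^ j ∣ n := dvd_trans (pow_dvd_pow 2 hjq) h2q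
        simpa [Int.modEq_zero_iff_dvd] using this
      · -- case (ii)
        obtain ⟨j, hj1, hjq, u, hu, hu2⟩ := exists_val' n 2 q h2q
        right; left
        refine ⟨j, k, hj1, hjq, hk1, hkq, ?_, hmod3⟩
        have := modeq_of_unit n 2 j hj1 u 1 hu (by omega)
        simpa using this
end
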